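/- arXiv:1006.0580 — 9 statements merged into one kernel-verified Lean document; each statement's English description precedes it below -/
import Mathlib

section
/- Let T, L > 0, S_M > 0, let v : [0,T] × [0,L] → ℝ be continuous with v(t,x) > 0 everywhere, let χ : [0,T] → ℝ be continuous with χ(t) ≥ 0 for all t, and let A ∈ C¹([0,T] × [0,L]) satisfy ∂ₜA(t,x) + v(t,x) ∂ₓA(t,x) = −χ(t) on (0,T) × (0,L). If A(0,x) ≤ S_M for all x ∈ [0,L] and A(t,0) ≤ S_M for all t ∈ [0,T], then A(t,x) ≤ S_M for all (t,x) ∈ [0,T] × [0,L]. -/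
open Set Topology Filter

lemma deriv_nonneg_of_isMaxOn' {f : ℝ → ℝ} {f' a b c : ℝ} (hac : a < c) (hcb : c ≤ b)
    (hmax : IsMaxOn f (Icc a b) c) (hd : HasDerivWithinAt f f' (Icc a b) c) : 0 ≤ f' := by
  have hy : a - c ∈ posTangentConeAt (Icc a b) c :=
    sub_mem_posTangentConeAt_of_segment_subset <|
      (convex_Icc a b).segment_subset ⟨hac.le, hcb⟩ ⟨le_refl a, hac.le.trans hcb⟩
  have := (hmax.localize.hasFDerivWithinAt_nonpos hd.hasFDerivWithinAt hy)
  simp [ContinuousLinearMap.smulRight_apply] at this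
  nlinarith

/-- Maximum principle for the transport equation
`∂ₜA + v ∂ₓA = −χ(t)` with `v > 0` continuous and `χ ≥ 0` continuous: if `A ∈ C¹` on the
rectangle satisfies the equation on `(0,T) × (0,L)` and `A ≤ S_M` on `{t = 0}` and on
`{x = 0}`, then `A ≤ S_M` on all of `[0,T] × [0,L]`.  Here `At`, `Ax` are the partial
derivatives of `A` (one-sided at the boundary), continuous on the closed rectangle. -/
theorem statement2
    (T L S_M : ℝ) (hT : 0 < T) (hL : 0 < L) (hSM : 0 < S_M)
    (v : ℝ → ℝ → ℝ) (χ : ℝ → ℝ) (A At Ax : ℝ → ℝ → ℝ)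
    (hvcont : ContinuousOn (fun p : ℝ × ℝ => v p.1 p.2) (Icc 0 T ×ˢ Icc 0 L))
    (hvpos : ∀ t ∈ Icc (0:ℝ) T, ∀ x ∈ Icc (0:ℝ) L, 0 < v t x)
    (hχcont : ContinuousOn χ (Icc 0 T))
    (hχnn : ∀ t ∈ Icc (0:ℝ) T, 0 ≤ χ t)
    (hAcont : ContinuousOn (fun p : ℝ × ℝ => A p.1 p.2) (Icc 0 T ×ˢ Icc 0 L))
    (hAtcont : ContinuousOn (fun p : ℝ × ℝ => At p.1 p.2) (Icc 0 T ×ˢ Icc 0 L))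
    (hAxcont : ContinuousOn (fun p : ℝ × ℝ => Ax p.1 p.2) (Icc 0 T ×ˢ Icc 0 L))
    (hAt : ∀ t ∈ Icc (0:ℝ) T, ∀ x ∈ Icc (0:ℝ) L,
        HasDerivWithinAt (fun s => A s x) (At t x) (Icc 0 T) t)
    (hAx : ∀ t ∈ Icc (0:ℝ) T, ∀ x ∈ Icc (0:ℝ) L,
        HasDerivWithinAt (fun y => A t y) (Ax t x) (Icc 0 L) x)
    (heq : ∀ t ∈ Ioo (0:ℝ) T, ∀ x ∈ Ioo (0:ℝ) L,
        At t x + v t x * Ax t x = - χ t)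
    (hinit : ∀ x ∈ Icc (0:ℝ) L, A 0 x ≤ S_M)
    (hbdry : ∀ t ∈ Icc (0:ℝ) T, A t 0 ≤ S_M) :
    ∀ t ∈ Icc (0:ℝ) T, ∀ x ∈ Icc (0:ℝ) L, A t x ≤ S_M := by
  set K : Set (ℝ × ℝ) := Icc 0 T ×ˢ Icc 0 L with hK
  -- extend the equation by continuity to the closed rectangle
  have heq' : ∀ p ∈ K, At p.1 p.2 + v p.1 p.2 * Ax p.1 p.2 = - χ p.1 := by
    set g : ℝ × ℝ → ℝ := fun p => At p.1 p.2 + v p.1 p.2 * Ax p.1 p.2 + χ p.1 with hg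
    have hgcont : ContinuousOn g K :=
      (hAtcont.add (hvcont.mul hAxcont)).add (hχcont.comp continuous_fst.continuousOn
        (fun p hp => hp.1))
    have hcl : closure (Ioo (0:ℝ) T ×ˢ Ioo (0:ℝ) L) = K := by
      rw [closure_prod_eq, closure_Ioo hT.ne, closure_Ioo hL.ne]
    intro p hp
    have hsub : Ioo (0:ℝ) T ×ˢ Ioo (0:ℝ) L ⊆ K :=
      prod_mono Ioo_subset_Icc_self Ioo_subset_Icc_self
    have hpcl : p ∈ closure (Ioo (0:ℝ) T ×ˢ Ioo (0:ℝ) L) := hcl ▸ hp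
    have hne : (𝓝[Ioo (0:ℝ) T ×ˢ Ioo (0:ℝ) L] p).NeBot :=
      mem_closure_iff_nhdsWithin_neBot.mp hpcl
    have h1 : Filter.Tendsto g (𝓝[Ioo (0:ℝ) T ×ˢ Ioo (0:ℝ) L] p) (𝓝 (g p)) :=
      ((hgcont p hp).mono hsub).tendsto
    have h2 : Filter.Tendsto g (𝓝[Ioo (0:ℝ) T ×ˢ Ioo (0:ℝ) L] p) (𝓝 0) := by
      have : ∀ q ∈ Ioo (0:ℝ) T ×ˢ Ioo (0:ℝ) L, g q = 0 := by
        intro q hq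
        have := heq q.1 hq.1 q.2 hq.2
        simp only [hg]; linarith
      refine Filter.Tendsto.congr' ?_ tendsto_const_nhds
      filter_upwards [self_mem_nhdsWithin] with q hq using (this q hq).symm
    have := tendsto_nhds_unique h1 h2
    simp only [hg] at this
    linarith
  -- main argument
  intro t ht x hx
  have key : ∀ ε : ℝ, 0 < ε → A t x ≤ S_M + ε * x := by
    intro ε hε
    have hKc : IsCompact K := (isCompact_Icc).prod isCompact_Icc
    have hKne : K.Nonempty := ⟨(0, 0), ⟨left_mem_Icc.2 hT.le, left_mem_Icc.2 hL.le⟩⟩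
    set f : ℝ × ℝ → ℝ := fun p => A p.1 p.2 - ε * p.2 with hf
    have hfcont : ContinuousOn f K :=
      hAcont.sub ((continuous_snd.continuousOn).const_smul ε)
    obtain ⟨p₀, hp₀K, hmax⟩ := hKc.exists_isMaxOn hKne hfcont
    obtain ⟨⟨ht0, htT⟩, hx0, hxL⟩ := hp₀K
    suffices h : f p₀ ≤ S_M by
      have := hmax (⟨ht, hx⟩ : (t, x) ∈ K)
      simp only [hf, mem_setOf_eq] at this ⊢
      have h' : A p₀.1 p₀.2 - ε * p₀.2 ≤ S_M := h
      linarith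
    by_contra h
    push_neg at h
    -- the max point is away from t = 0 and x = 0
    have ht0' : 0 < p₀.1 := by
      rcases lt_or_eq_of_le ht0 with h' | h'
      · exact h'
      · exfalso
        have h1 : A p₀.1 p₀.2 ≤ S_M := by rw [← h']; exact hinit p₀.2 ⟨hx0, hxL⟩
        simp only [hf] at h
        nlinarith
    have hx0' : 0 < p₀.2 := by
      rcases lt_or_eq_of_le hx0 with h' | h'
      · exact h'
      · exfalso
        have h1 : A p₀.1 p₀.2 ≤ S_M := by rw [← h']; exact hbdry p₀.1 ⟨ht0, htT⟩
        simp only [hf] at h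
        nlinarith
    -- time derivative nonneg at max
    have h1 : 0 ≤ At p₀.1 p₀.2 := by
      refine deriv_nonneg_of_isMaxOn' (f := fun s => A s p₀.2 - ε * p₀.2) ht0' htT ?_ ?_
      · intro s hs
        exact hmax (⟨hs, hx0, hxL⟩ : (s, p₀.2) ∈ K)
      · exact (hAt p₀.1 ⟨ht0, htT⟩ p₀.2 ⟨hx0, hxL⟩).sub_const _
    -- space derivative ≥ ε at max
    have h2 : 0 ≤ Ax p₀.1 p₀.2 - ε := by
      refine deriv_nonneg_of_isMaxOn' (f := fun y => A p₀.1 y - ε * y) hx0' hxL ?_ ?_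
      · intro y hy
        exact hmax (⟨⟨ht0, htT⟩, hy⟩ : (p₀.1, y) ∈ K)
      · exact (hAx p₀.1 ⟨ht0, htT⟩ p₀.2 ⟨hx0, hxL⟩).sub
          (by simpa using (hasDerivWithinAt_id p₀.2 (Icc (0:ℝ) L)).const_mul ε)
    have h3 := heq' p₀ ⟨⟨ht0, htT⟩, hx0, hxL⟩
    have h4 := hvpos p₀.1 ⟨ht0, htT⟩ p₀.2 ⟨hx0, hxL⟩
    have h5 := hχnn p₀.1 ⟨ht0, htT⟩
    nlinarith
  -- let ε → 0
  refine le_of_forall_pos_le_add fun ε hε => ?_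
  have h6 := key (ε / (L + 1)) (by positivity)
  have h7 : ε / (L + 1) * x ≤ ε := by
    rw [div_mul_eq_mul_div, div_le_iff₀ (by linarith)]
    nlinarith [hx.1, hx.2]
  linarith
end

section
/- Let T, L > 0, S_M > 0, let A : [0,T] × [0,L] → ℝ be continuous with 0 < A(t,x) ≤ S_M for all (t,x), let χ : [0,T] → ℝ with χ(t) > 0, and let v : [0,T] × [0,L] → ℝ satisfy, for each t, that x ↦ v(t,x) is differentiable with ∂ₓv(t,x) = χ(t)/A(t,x), together with the boundary values v(t,0) = v_in(t) and v(t,L) = v_L(t). Then for every t ∈ [0,T]: 0 < χ(t) ≤ (v_L(t) − v_in(t)) · S_M / L. -/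
open Set

/-- If `0 < A ≤ S_M` is continuous, `χ(t) > 0`, and the velocity `v`
satisfies `∂ₓv(t,x) = χ(t)/A(t,x)` with boundary values `v(t,0) = v_in(t)`,
`v(t,L) = v_L(t)`, then `0 < χ(t) ≤ (v_L(t) − v_in(t)) · S_M / L` for every `t ∈ [0,T]`. -/
theorem statement3
    (T L S_M : ℝ) (hT : 0 < T) (hL : 0 < L) (hSM : 0 < S_M)
    (A v : ℝ → ℝ → ℝ) (χ v_in v_L : ℝ → ℝ)
    (hAcont : ContinuousOn (fun p : ℝ × ℝ => A p.1 p.2) (Icc 0 T ×ˢ Icc 0 L))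
    (hA : ∀ t ∈ Icc (0:ℝ) T, ∀ x ∈ Icc (0:ℝ) L, 0 < A t x ∧ A t x ≤ S_M)
    (hχpos : ∀ t ∈ Icc (0:ℝ) T, 0 < χ t)
    (hv : ∀ t ∈ Icc (0:ℝ) T, ∀ x ∈ Icc (0:ℝ) L,
        HasDerivWithinAt (fun y => v t y) (χ t / A t x) (Icc 0 L) x)
    (hbc : ∀ t ∈ Icc (0:ℝ) T, v t 0 = v_in t ∧ v t L = v_L t) :
    ∀ t ∈ Icc (0:ℝ) T, 0 < χ t ∧ χ t ≤ (v_L t - v_in t) * S_M / L := by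
  intro t ht
  refine ⟨hχpos t ht, ?_⟩
  have hvt := hv t ht
  have hAt := hA t ht
  have hχt := hχpos t ht
  have hint : interior (Icc (0:ℝ) L) = Ioo 0 L := interior_Icc
  -- continuity of f := v t on Icc 0 L
  have hfc : ContinuousOn (fun y => v t y) (Icc 0 L) := fun x hx =>
    ((hvt x hx).continuousWithinAt)
  -- at interior points, HasDerivAt
  have hder : ∀ x ∈ interior (Icc (0:ℝ) L), HasDerivAt (fun y => v t y) (χ t / A t x) x := by
    intro x hx
    rw [hint] at hx
    exact (hvt x (Ioo_subset_Icc_self hx)).hasDerivAt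
      (Icc_mem_nhds hx.1 hx.2)
  have hdiff : DifferentiableOn ℝ (fun y => v t y) (interior (Icc (0:ℝ) L)) := fun x hx =>
    (hder x hx).differentiableAt.differentiableWithinAt
  have hge : ∀ x ∈ interior (Icc (0:ℝ) L), χ t / S_M ≤ deriv (fun y => v t y) x := by
    intro x hx
    rw [(hder x hx).deriv]
    have hAx := hAt x (by rw [hint] at hx; exact Ioo_subset_Icc_self hx)
    exact div_le_div_of_nonneg_left hχt.le hAx.1 hAx.2
  have key := (convex_Icc (0:ℝ) L).mul_sub_le_image_sub_of_le_deriv hfc hdiff hge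
    0 (left_mem_Icc.2 hL.le) L (right_mem_Icc.2 hL.le) hL.le
  obtain ⟨hb0, hbL⟩ := hbc t ht
  rw [hb0, hbL, sub_zero] at key
  -- key : χ t / S_M * L ≤ v_L t - v_in t
  rw [div_mul_eq_mul_div, div_le_iff₀ hSM] at key
  rw [le_div_iff₀ hL]
  linarith
end

section
/- Let T, L > 0, let v ∈ C¹([0,T] × [0,L]) and let A : [0,T] × [0,L] → ℝ be twice continuously differentiable. Assume that ∂ₜA + ∂ₓ(vA) = 0 on (0,T) × (0,L) and that there exists χ : [0,T] → ℝ with A(t,x) ∂ₓv(t,x) = χ(t) for all (t,x). Then B := ∂ₓA satisfies the same conservation law: ∂ₜB + ∂ₓ(vB) = 0 on (0,T) × (0,L). -/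
open Set

theorem schwarz_aux (T L : ℝ) (A At Ax Atx Axt : ℝ → ℝ → ℝ)
    (t x : ℝ) (ht : t ∈ Ioo (0:ℝ) T) (hx : x ∈ Ioo (0:ℝ) L)
    (hAt : ∀ t ∈ Ioo (0:ℝ) T, ∀ x ∈ Ioo (0:ℝ) L, HasDerivAt (fun s => A s x) (At t x) t)
    (hAx : ∀ t ∈ Ioo (0:ℝ) T, ∀ x ∈ Ioo (0:ℝ) L, HasDerivAt (fun y => A t y) (Ax t x) x)
    (hAtx : ∀ t ∈ Ioo (0:ℝ) T, ∀ x ∈ Ioo (0:ℝ) L, HasDerivAt (fun y => At t y) (Atx t x) x)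
    (hAxt : ∀ t ∈ Ioo (0:ℝ) T, ∀ x ∈ Ioo (0:ℝ) L, HasDerivAt (fun s => Ax s x) (Axt t x) t)
    (hAtxc : ContinuousAt (fun p : ℝ × ℝ => Atx p.1 p.2) (t, x))
    (hAxtc : ContinuousAt (fun p : ℝ × ℝ => Axt p.1 p.2) (t, x)) :
    Atx t x = Axt t x := by
  have key : ∀ ε > (0:ℝ), |Atx t x - Axt t x| ≤ ε := by
    intro ε hε
    obtain ⟨δ₁, hδ₁, H₁⟩ := Metric.continuousAt_iff.mp hAtxc (ε/2) (by linarith)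
    obtain ⟨δ₂, hδ₂, H₂⟩ := Metric.continuousAt_iff.mp hAxtc (ε/2) (by linarith)
    set δ : ℝ := min δ₁ δ₂ with hδdef
    have hδ : 0 < δ := lt_min hδ₁ hδ₂
    set h : ℝ := min (min (δ/2) ((T - t)/2)) ((L - x)/2) with hhdef
    have hh : 0 < h := by
      refine lt_min (lt_min (by linarith) ?_) ?_
      · have := ht.2; linarith
      · have := hx.2; linarith
    have hhδ : h < δ := lt_of_le_of_lt (le_trans (min_le_left _ _) (min_le_left _ _)) (by linarith)
    have hhT : t + h < T := by
      have : h ≤ (T - t)/2 := le_trans (min_le_left _ _) (min_le_right _ _)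
      linarith [ht.2]
    have hhL : x + h < L := by
      have : h ≤ (L - x)/2 := min_le_right _ _
      linarith [hx.2]
    -- every point of [t,t+h] is in Ioo 0 T, every point of [x,x+h] in Ioo 0 L
    have hmemT : ∀ u ∈ Icc t (t + h), u ∈ Ioo (0:ℝ) T := fun u hu =>
      ⟨lt_of_lt_of_le ht.1 hu.1, lt_of_le_of_lt hu.2 hhT⟩
    have hmemL : ∀ z ∈ Icc x (x + h), z ∈ Ioo (0:ℝ) L := fun z hz =>
      ⟨lt_of_lt_of_le hx.1 hz.1, lt_of_le_of_lt hz.2 hhL⟩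
    have hxL : x + h ∈ Ioo (0:ℝ) L := hmemL _ ⟨by linarith, le_refl _⟩
    have hxL0 : x ∈ Ioo (0:ℝ) L := hx
    have htT : t + h ∈ Ioo (0:ℝ) T := hmemT _ ⟨by linarith, le_refl _⟩
    have hlt1 : t < t + h := by linarith
    have hlt2 : x < x + h := by linarith
    -- First MVT: φ u = A u (x+h) - A u x on [t, t+h]
    obtain ⟨ξ, hξ, hξeq⟩ := exists_hasDerivAt_eq_slope
      (fun u => A u (x + h) - A u x) (fun u => At u (x + h) - At u x) hlt1
      (fun u hu => (((hAt u (hmemT u hu) (x + h) hxL).sub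
        (hAt u (hmemT u hu) x hx)).continuousAt).continuousWithinAt)
      (fun u hu => (hAt u (hmemT u (Ioo_subset_Icc_self hu)) (x + h) hxL).sub
        (hAt u (hmemT u (Ioo_subset_Icc_self hu)) x hx))
    have hξT : ξ ∈ Ioo (0:ℝ) T := hmemT ξ (Ioo_subset_Icc_self hξ)
    -- Second MVT: z ↦ At ξ z on [x, x+h]
    obtain ⟨η, hη, hηeq⟩ := exists_hasDerivAt_eq_slope
      (fun z => At ξ z) (fun z => Atx ξ z) hlt2
      (fun z hz => ((hAtx ξ hξT z (hmemL z hz)).continuousAt).continuousWithinAt)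
      (fun z hz => hAtx ξ hξT z (hmemL z (Ioo_subset_Icc_self hz)))
    -- Third MVT: ψ z = A (t+h) z - A t z on [x, x+h]
    obtain ⟨η', hη', hη'eq⟩ := exists_hasDerivAt_eq_slope
      (fun z => A (t + h) z - A t z) (fun z => Ax (t + h) z - Ax t z) hlt2
      (fun z hz => (((hAx (t + h) htT z (hmemL z hz)).sub
        (hAx t ht z (hmemL z hz))).continuousAt).continuousWithinAt)
      (fun z hz => (hAx (t + h) htT z (hmemL z (Ioo_subset_Icc_self hz))).sub
        (hAx t ht z (hmemL z (Ioo_subset_Icc_self hz))))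
    have hη'L : η' ∈ Ioo (0:ℝ) L := hmemL η' (Ioo_subset_Icc_self hη')
    -- Fourth MVT: u ↦ Ax u η' on [t, t+h]
    obtain ⟨ξ', hξ', hξ'eq⟩ := exists_hasDerivAt_eq_slope
      (fun u => Ax u η') (fun u => Axt u η') hlt1
      (fun u hu => ((hAxt u (hmemT u hu) η' hη'L).continuousAt).continuousWithinAt)
      (fun u hu => hAxt u (hmemT u (Ioo_subset_Icc_self hu)) η' hη'L)
    have hξ'T : ξ' ∈ Ioo (0:ℝ) T := hmemT ξ' (Ioo_subset_Icc_self hξ')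
    -- The two mixed values agree
    have hsub1 : t + h - t = h := by ring
    have hsub2 : x + h - x = h := by ring
    have heq : Atx ξ η = Axt ξ' η' := by
      rw [hηeq, hξeq, hξ'eq, hη'eq, hsub1, hsub2]
      ring
    -- distance estimates
    have hd : ∀ a b : ℝ, t < a → a < t + h → x < b → b < x + h →
        dist ((a, b) : ℝ × ℝ) ((t, x) : ℝ × ℝ) < δ := by
      intro a b h1 h2 h3 h4
      rw [Prod.dist_eq]
      apply max_lt <;> rw [Real.dist_eq, abs_of_pos (by linarith)] <;> linarith
    have e1 : dist (Atx ξ η) (Atx t x) < ε/2 :=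
      H₁ (lt_of_lt_of_le (hd ξ η hξ.1 hξ.2 hη.1 hη.2) (min_le_left _ _))
    have e2 : dist (Axt ξ' η') (Axt t x) < ε/2 :=
      H₂ (lt_of_lt_of_le (hd ξ' η' hξ'.1 hξ'.2 hη'.1 hη'.2) (min_le_right _ _))
    rw [Real.dist_eq] at e1 e2
    have : Atx t x - Axt t x = (Atx t x - Atx ξ η) + (Axt ξ' η' - Axt t x) := by
      rw [heq]; ring
    rw [this]
    calc |(Atx t x - Atx ξ η) + (Axt ξ' η' - Axt t x)|
        ≤ |Atx t x - Atx ξ η| + |Axt ξ' η' - Axt t x| := abs_add_le _ _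
      _ ≤ ε/2 + ε/2 := by
          have a1 : |Atx t x - Atx ξ η| ≤ ε/2 := by
            rw [abs_sub_comm]; exact le_of_lt e1
          have a2 : |Axt ξ' η' - Axt t x| ≤ ε/2 := le_of_lt e2
          linarith
      _ = ε := by ring
  have : |Atx t x - Axt t x| = 0 := by
    by_contra hne
    have hpos : 0 < |Atx t x - Axt t x| := lt_of_le_of_ne (abs_nonneg _) (Ne.symm hne)
    have := key (|Atx t x - Axt t x| / 2) (by linarith)
    linarith
  have := abs_eq_zero.mp this
  linarith


/-- Let `v ∈ C¹([0,T] × [0,L])` (partial derivatives `vt`, `vx`) and let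
`A` be twice continuously differentiable (first partials `At`, `Ax`, second partials
`Att`, `Atx`, `Axt`, `Axx`, all continuous on the rectangle).  If the mass conservation
equation `∂ₜA + ∂ₓ(vA) = 0` holds on `(0,T) × (0,L)` and `A ∂ₓv = χ(t)` for all `(t,x)`,
then `B := ∂ₓA = Ax` satisfies the same conservation law `∂ₜB + ∂ₓ(vB) = 0` on
`(0,T) × (0,L)`. -/
theorem statement4
    (T L : ℝ) (hT : 0 < T) (hL : 0 < L)
    (v vt vx A At Ax Att Atx Axt Axx : ℝ → ℝ → ℝ) (χ : ℝ → ℝ)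
    -- `v ∈ C¹([0,T] × [0,L])`
    (hvcont : ContinuousOn (fun p : ℝ × ℝ => v p.1 p.2) (Icc 0 T ×ˢ Icc 0 L))
    (hvt : ∀ t ∈ Icc (0:ℝ) T, ∀ x ∈ Icc (0:ℝ) L,
        HasDerivWithinAt (fun s => v s x) (vt t x) (Icc 0 T) t)
    (hvx : ∀ t ∈ Icc (0:ℝ) T, ∀ x ∈ Icc (0:ℝ) L,
        HasDerivWithinAt (fun y => v t y) (vx t x) (Icc 0 L) x)
    (hvtcont : ContinuousOn (fun p : ℝ × ℝ => vt p.1 p.2) (Icc 0 T ×ˢ Icc 0 L))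
    (hvxcont : ContinuousOn (fun p : ℝ × ℝ => vx p.1 p.2) (Icc 0 T ×ˢ Icc 0 L))
    -- `A` is twice continuously differentiable on `[0,T] × [0,L]`
    (hAcont : ContinuousOn (fun p : ℝ × ℝ => A p.1 p.2) (Icc 0 T ×ˢ Icc 0 L))
    (hAt : ∀ t ∈ Icc (0:ℝ) T, ∀ x ∈ Icc (0:ℝ) L,
        HasDerivWithinAt (fun s => A s x) (At t x) (Icc 0 T) t)
    (hAx : ∀ t ∈ Icc (0:ℝ) T, ∀ x ∈ Icc (0:ℝ) L,
        HasDerivWithinAt (fun y => A t y) (Ax t x) (Icc 0 L) x)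
    (hAtcont : ContinuousOn (fun p : ℝ × ℝ => At p.1 p.2) (Icc 0 T ×ˢ Icc 0 L))
    (hAxcont : ContinuousOn (fun p : ℝ × ℝ => Ax p.1 p.2) (Icc 0 T ×ˢ Icc 0 L))
    (hAtt : ∀ t ∈ Icc (0:ℝ) T, ∀ x ∈ Icc (0:ℝ) L,
        HasDerivWithinAt (fun s => At s x) (Att t x) (Icc 0 T) t)
    (hAtx : ∀ t ∈ Icc (0:ℝ) T, ∀ x ∈ Icc (0:ℝ) L,
        HasDerivWithinAt (fun y => At t y) (Atx t x) (Icc 0 L) x)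
    (hAxt : ∀ t ∈ Icc (0:ℝ) T, ∀ x ∈ Icc (0:ℝ) L,
        HasDerivWithinAt (fun s => Ax s x) (Axt t x) (Icc 0 T) t)
    (hAxx : ∀ t ∈ Icc (0:ℝ) T, ∀ x ∈ Icc (0:ℝ) L,
        HasDerivWithinAt (fun y => Ax t y) (Axx t x) (Icc 0 L) x)
    (hAttcont : ContinuousOn (fun p : ℝ × ℝ => Att p.1 p.2) (Icc 0 T ×ˢ Icc 0 L))
    (hAtxcont : ContinuousOn (fun p : ℝ × ℝ => Atx p.1 p.2) (Icc 0 T ×ˢ Icc 0 L))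
    (hAxtcont : ContinuousOn (fun p : ℝ × ℝ => Axt p.1 p.2) (Icc 0 T ×ˢ Icc 0 L))
    (hAxxcont : ContinuousOn (fun p : ℝ × ℝ => Axx p.1 p.2) (Icc 0 T ×ˢ Icc 0 L))
    -- mass conservation `∂ₜA + ∂ₓ(vA) = 0` on `(0,T) × (0,L)`
    (hmass : ∀ t ∈ Ioo (0:ℝ) T, ∀ x ∈ Ioo (0:ℝ) L,
        At t x + (vx t x * A t x + v t x * Ax t x) = 0)
    -- `A ∂ₓv = χ(t)` for all `(t,x)`
    (hχ : ∀ t ∈ Icc (0:ℝ) T, ∀ x ∈ Icc (0:ℝ) L, A t x * vx t x = χ t) :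
    -- `B = ∂ₓA = Ax` satisfies `∂ₜB + ∂ₓ(vB) = 0` on `(0,T) × (0,L)`
    ∀ t ∈ Ioo (0:ℝ) T, ∀ x ∈ Ioo (0:ℝ) L,
      ∃ q : ℝ, HasDerivAt (fun y => v t y * Ax t y) q x ∧ Axt t x + q = 0 := by
  intro t ht x hx
  have hTnb : Icc (0:ℝ) T ∈ nhds t := Icc_mem_nhds ht.1 ht.2
  have hLnb : Icc (0:ℝ) L ∈ nhds x := Icc_mem_nhds hx.1 hx.2
  have htI : t ∈ Icc (0:ℝ) T := Ioo_subset_Icc_self ht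
  have hxI : x ∈ Icc (0:ℝ) L := Ioo_subset_Icc_self hx
  have hvx' : HasDerivAt (fun y => v t y) (vx t x) x := (hvx t htI x hxI).hasDerivAt hLnb
  have hAx' : HasDerivAt (fun y => Ax t y) (Axx t x) x := (hAxx t htI x hxI).hasDerivAt hLnb
  set q : ℝ := vx t x * Ax t x + v t x * Axx t x with hq
  have hqd : HasDerivAt (fun y => v t y * Ax t y) q x := hvx'.mul hAx'
  refine ⟨q, hqd, ?_⟩
  -- Schwarz: Atx t x = Axt t x
  have hsch : Atx t x = Axt t x := by
    refine schwarz_aux T L A At Ax Atx Axt t x ht hx ?_ ?_ ?_ ?_ ?_ ?_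
    · intro t' ht' x' hx'
      exact (hAt t' (Ioo_subset_Icc_self ht') x' (Ioo_subset_Icc_self hx')).hasDerivAt
        (Icc_mem_nhds ht'.1 ht'.2)
    · intro t' ht' x' hx'
      exact (hAx t' (Ioo_subset_Icc_self ht') x' (Ioo_subset_Icc_self hx')).hasDerivAt
        (Icc_mem_nhds hx'.1 hx'.2)
    · intro t' ht' x' hx'
      exact (hAtx t' (Ioo_subset_Icc_self ht') x' (Ioo_subset_Icc_self hx')).hasDerivAt
        (Icc_mem_nhds hx'.1 hx'.2)
    · intro t' ht' x' hx'
      exact (hAxt t' (Ioo_subset_Icc_self ht') x' (Ioo_subset_Icc_self hx')).hasDerivAt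
        (Icc_mem_nhds ht'.1 ht'.2)
    · exact hAtxcont.continuousAt (prod_mem_nhds hTnb hLnb)
    · exact hAxtcont.continuousAt (prod_mem_nhds hTnb hLnb)
  -- On a neighbourhood of x, At t · = -χ t - v t · * Ax t ·
  have hev : (fun y => At t y) =ᶠ[nhds x] (fun y => -χ t - v t y * Ax t y) := by
    filter_upwards [Ioo_mem_nhds hx.1 hx.2] with y hy
    have h1 := hmass t ht y hy
    have h2 := hχ t htI y (Ioo_subset_Icc_self hy)
    have h3 := mul_comm (A t y) (vx t y)
    linarith
  have hRHS : HasDerivAt (fun y => -χ t - v t y * Ax t y) (-q) x := by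
    have := (hasDerivAt_const x (-(χ t))).sub hqd
    rw [zero_sub] at this
    exact this
  have hAtd : HasDerivAt (fun y => At t y) (-q) x := hRHS.congr_of_eventuallyEq hev
  have hAtx' : HasDerivAt (fun y => At t y) (Atx t x) x := (hAtx t htI x hxI).hasDerivAt hLnb
  have huniq : Atx t x = -q := hAtx'.unique hAtd
  rw [← hsch, huniq]
  ring
end

section
/- Let T, L > 0, let v ∈ C¹([0,T] × [0,L]) and let A : [0,T] × [0,L] → ℝ be twice continuously differentiable with A(t,x) > 0 everywhere. Assume ∂ₜA + ∂ₓ(vA) = 0 on (0,T) × (0,L) and that there exists χ : [0,T] → ℝ with A(t,x) ∂ₓv(t,x) = χ(t) for all (t,x). Then w := ∂ₓ(log A) satisfies the pure transport equation ∂ₜw + v ∂ₓw = 0 on (0,T) × (0,L). -/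
open Set


section AuxPartials
open Filter Metric Asymptotics Topology

lemma hasFDerivAt_of_partials_aux (f ft : ℝ → ℝ → ℝ) (fxv : ℝ) (p : ℝ × ℝ) (δ₀ : ℝ)
    (hδ₀ : 0 < δ₀)
    (hft : ∀ q : ℝ × ℝ, dist q p < δ₀ → HasDerivAt (fun a => f a q.2) (ft q.1 q.2) q.1)
    (hfx : HasDerivAt (fun b => f p.1 b) fxv p.2)
    (hftc : ContinuousAt (fun q : ℝ × ℝ => ft q.1 q.2) p) :
    HasFDerivAt (fun q : ℝ × ℝ => f q.1 q.2)
      ((ft p.1 p.2) • ContinuousLinearMap.fst ℝ ℝ ℝ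
        + fxv • ContinuousLinearMap.snd ℝ ℝ ℝ) p := by
  rw [hasFDerivAt_iff_isLittleO_nhds_zero, Asymptotics.isLittleO_iff]
  intro c hc
  have hc2 : 0 < c / 2 := by linarith
  rw [Metric.continuousAt_iff] at hftc
  obtain ⟨δ₁, hδ₁, hδ₁'⟩ := hftc (c / 2) hc2
  have hfx' := (hasDerivAt_iff_isLittleO.1 hfx).def hc2
  rw [Metric.eventually_nhds_iff] at hfx'
  obtain ⟨δ₂, hδ₂, hδ₂'⟩ := hfx'
  rw [Metric.eventually_nhds_iff]
  refine ⟨min δ₀ (min δ₁ δ₂), by positivity, ?_⟩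
  intro h hh
  rw [dist_zero_right] at hh
  have hh0 : ‖h‖ < δ₀ := lt_of_lt_of_le hh (min_le_left _ _)
  have hh1 : ‖h‖ < δ₁ := lt_of_lt_of_le hh ((min_le_right _ _).trans (min_le_left _ _))
  have hh2 : ‖h‖ < δ₂ := lt_of_lt_of_le hh ((min_le_right _ _).trans (min_le_right _ _))
  have hn1 : ‖h.1‖ ≤ ‖h‖ := norm_fst_le h
  have hn2 : ‖h.2‖ ≤ ‖h‖ := norm_snd_le h
  set t := p.1
  set x := p.2
  -- second term
  have h2bound : ‖f t (x + h.2) - f t x - fxv * h.2‖ ≤ c / 2 * ‖h‖ := by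
    have : dist (x + h.2) x < δ₂ := by
      rw [Real.dist_eq]; simpa using lt_of_le_of_lt hn2 hh2
    have := hδ₂' this
    simp only [smul_eq_mul] at this
    calc ‖f t (x + h.2) - f t x - fxv * h.2‖
        = ‖f t (x + h.2) - f t x - (x + h.2 - x) * fxv‖ := by ring_nf
      _ ≤ c / 2 * ‖x + h.2 - x‖ := this
      _ ≤ c / 2 * ‖h‖ := by
          apply mul_le_mul_of_nonneg_left _ (le_of_lt hc2)
          simpa using hn2
  -- first term via MVT
  have h1bound : ‖f (t + h.1) (x + h.2) - f t (x + h.2) - ft t x * h.1‖ ≤ c / 2 * ‖h‖ := by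
    set s : Set ℝ := Icc (min t (t + h.1)) (max t (t + h.1)) with hs
    have hmem : ∀ a ∈ s, dist (a, x + h.2) p < δ₀ ∧ dist (a, x + h.2) p < δ₁ := by
      intro a ha
      have ha1 : |a - t| ≤ |h.1| := by
        rw [abs_le]
        rcases le_total 0 h.1 with hp1 | hp1
        · constructor
          · have := ha.1
            have : min t (t + h.1) = t := min_eq_left (by linarith)
            nlinarith [ha.1, abs_nonneg h.1, le_abs_self h.1]
          · have : max t (t + h.1) = t + h.1 := max_eq_right (by linarith)
            nlinarith [ha.2, le_abs_self h.1]
        · constructor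
          · have : min t (t + h.1) = t + h.1 := min_eq_right (by linarith)
            nlinarith [ha.1, neg_abs_le h.1]
          · have : max t (t + h.1) = t := max_eq_left (by linarith)
            nlinarith [ha.2, abs_nonneg h.1]
      have hd : dist (a, x + h.2) p = max (dist a t) (dist (x + h.2) x) := Prod.dist_eq
      have h1 : dist a t ≤ ‖h‖ := by
        rw [Real.dist_eq]
        exact le_trans ha1 (by simpa [Real.norm_eq_abs] using hn1)
      have h2 : dist (x + h.2) x ≤ ‖h‖ := by
        rw [Real.dist_eq]; simpa [Real.norm_eq_abs] using hn2
      constructor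
      · rw [hd]; exact lt_of_le_of_lt (max_le h1 h2) hh0
      · rw [hd]; exact lt_of_le_of_lt (max_le h1 h2) hh1
    have key : ‖(f (t + h.1) (x + h.2) - ft t x * (t + h.1)) - (f t (x + h.2) - ft t x * t)‖
        ≤ c / 2 * ‖(t + h.1) - t‖ := by
      have hderiv : ∀ a ∈ s, HasDerivWithinAt (fun a => f a (x + h.2) - ft t x * a)
          ((fun a => ft a (x + h.2) - ft t x) a) s a := by
        intro a ha
        have hd := (hmem a ha).1
        have h1 := hft (a, x + h.2) hd
        have hconst : HasDerivAt (fun a : ℝ => ft t x * a) (ft t x) a := by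
          simpa using (hasDerivAt_id a).const_mul (ft t x)
        exact (h1.sub hconst).hasDerivWithinAt
      have hbound : ∀ a ∈ s, ‖(fun a => ft a (x + h.2) - ft t x) a‖ ≤ c / 2 := by
        intro a ha
        have hd := (hmem a ha).2
        have := hδ₁' hd
        rw [Real.dist_eq] at this
        simpa [Real.norm_eq_abs] using le_of_lt this
      exact Convex.norm_image_sub_le_of_norm_hasDerivWithin_le hderiv hbound (convex_Icc _ _)
        ⟨min_le_left _ _, le_max_left _ _⟩ ⟨min_le_right _ _, le_max_right _ _⟩
    have : ‖f (t + h.1) (x + h.2) - f t (x + h.2) - ft t x * h.1‖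
        = ‖(f (t + h.1) (x + h.2) - ft t x * (t + h.1)) - (f t (x + h.2) - ft t x * t)‖ := by
      ring_nf
    rw [this]
    refine le_trans key ?_
    apply mul_le_mul_of_nonneg_left _ (le_of_lt hc2)
    simpa using hn1
  have hsplit : f (p + h).1 (p + h).2 - f p.1 p.2
      - ((ft p.1 p.2) • ContinuousLinearMap.fst ℝ ℝ ℝ
        + fxv • ContinuousLinearMap.snd ℝ ℝ ℝ) h
      = (f (t + h.1) (x + h.2) - f t (x + h.2) - ft t x * h.1)
        + (f t (x + h.2) - f t x - fxv * h.2) := by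
    simp [Prod.fst_add, Prod.snd_add, ContinuousLinearMap.add_apply,
      ContinuousLinearMap.smul_apply, ContinuousLinearMap.coe_fst',
      ContinuousLinearMap.coe_snd', smul_eq_mul]
    ring
  rw [hsplit]
  calc ‖_ + _‖ ≤ _ + _ := norm_add_le _ _
    _ ≤ c / 2 * ‖h‖ + c / 2 * ‖h‖ := add_le_add h1bound h2bound
    _ = c * ‖h‖ := by ring

lemma hasFDerivAt_of_partials_rect {T L : ℝ} (g gt gx : ℝ → ℝ → ℝ)
    (hgt : ∀ t ∈ Icc (0:ℝ) T, ∀ x ∈ Icc (0:ℝ) L,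
        HasDerivWithinAt (fun s => g s x) (gt t x) (Icc 0 T) t)
    (hgx : ∀ t ∈ Icc (0:ℝ) T, ∀ x ∈ Icc (0:ℝ) L,
        HasDerivWithinAt (fun y => g t y) (gx t x) (Icc 0 L) x)
    (hgtc : ContinuousOn (fun p : ℝ × ℝ => gt p.1 p.2) (Icc 0 T ×ˢ Icc 0 L))
    {q : ℝ × ℝ} (hq1 : q.1 ∈ Ioo (0:ℝ) T) (hq2 : q.2 ∈ Ioo (0:ℝ) L) :
    HasFDerivAt (fun r : ℝ × ℝ => g r.1 r.2)
      ((gt q.1 q.2) • ContinuousLinearMap.fst ℝ ℝ ℝ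
        + (gx q.1 q.2) • ContinuousLinearMap.snd ℝ ℝ ℝ) q := by
  set δ₀ : ℝ := min (min q.1 (T - q.1)) (min q.2 (L - q.2)) with hδ₀def
  have hδ₀ : 0 < δ₀ := by
    refine lt_min (lt_min hq1.1 ?_) (lt_min hq2.1 ?_) <;> [linarith [hq1.2]; linarith [hq2.2]]
  have hball : ∀ r : ℝ × ℝ, dist r q < δ₀ → r.1 ∈ Ioo (0:ℝ) T ∧ r.2 ∈ Ioo (0:ℝ) L := by
    intro r hr
    rw [Prod.dist_eq] at hr
    have h1 : dist r.1 q.1 < δ₀ := lt_of_le_of_lt (le_max_left _ _) hr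
    have h2 : dist r.2 q.2 < δ₀ := lt_of_le_of_lt (le_max_right _ _) hr
    rw [Real.dist_eq, abs_lt] at h1 h2
    have e1 : δ₀ ≤ q.1 := (min_le_left _ _).trans (min_le_left _ _)
    have e2 : δ₀ ≤ T - q.1 := (min_le_left _ _).trans (min_le_right _ _)
    have e3 : δ₀ ≤ q.2 := (min_le_right _ _).trans (min_le_left _ _)
    have e4 : δ₀ ≤ L - q.2 := (min_le_right _ _).trans (min_le_right _ _)
    exact ⟨⟨by linarith [h1.1], by linarith [h1.2]⟩, ⟨by linarith [h2.1], by linarith [h2.2]⟩⟩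
  apply hasFDerivAt_of_partials_aux g gt (gx q.1 q.2) q δ₀ hδ₀
  · intro r hr
    obtain ⟨hr1, hr2⟩ := hball r hr
    exact (hgt r.1 (Ioo_subset_Icc_self hr1) r.2 (Ioo_subset_Icc_self hr2)).hasDerivAt
      (Icc_mem_nhds hr1.1 hr1.2)
  · exact (hgx q.1 (Ioo_subset_Icc_self hq1) q.2 (Ioo_subset_Icc_self hq2)).hasDerivAt
      (Icc_mem_nhds hq2.1 hq2.2)
  · exact hgtc.continuousAt (prod_mem_nhds (Icc_mem_nhds hq1.1 hq1.2) (Icc_mem_nhds hq2.1 hq2.2))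

end AuxPartials

open Filter Metric Asymptotics Topology in
/-- Let `v ∈ C¹([0,T] × [0,L])` (partial derivatives `vt`, `vx`) and let
`A > 0` be twice continuously differentiable (first partials `At`, `Ax`, second partials
`Att`, `Atx`, `Axt`, `Axx`, all continuous on the rectangle).  If `∂ₜA + ∂ₓ(vA) = 0` on
`(0,T) × (0,L)` and `A ∂ₓv = χ(t)` for all `(t,x)`, then `w := ∂ₓ(log A) = Ax / A`
satisfies the pure transport equation `∂ₜw + v ∂ₓw = 0` on `(0,T) × (0,L)`. -/
theorem statement5
    (T L : ℝ) (hT : 0 < T) (hL : 0 < L)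
    (v vt vx A At Ax Att Atx Axt Axx : ℝ → ℝ → ℝ) (χ : ℝ → ℝ)
    -- `v ∈ C¹([0,T] × [0,L])`
    (hvcont : ContinuousOn (fun p : ℝ × ℝ => v p.1 p.2) (Icc 0 T ×ˢ Icc 0 L))
    (hvt : ∀ t ∈ Icc (0:ℝ) T, ∀ x ∈ Icc (0:ℝ) L,
        HasDerivWithinAt (fun s => v s x) (vt t x) (Icc 0 T) t)
    (hvx : ∀ t ∈ Icc (0:ℝ) T, ∀ x ∈ Icc (0:ℝ) L,
        HasDerivWithinAt (fun y => v t y) (vx t x) (Icc 0 L) x)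
    (hvtcont : ContinuousOn (fun p : ℝ × ℝ => vt p.1 p.2) (Icc 0 T ×ˢ Icc 0 L))
    (hvxcont : ContinuousOn (fun p : ℝ × ℝ => vx p.1 p.2) (Icc 0 T ×ˢ Icc 0 L))
    -- `A` is strictly positive and twice continuously differentiable
    (hApos : ∀ t ∈ Icc (0:ℝ) T, ∀ x ∈ Icc (0:ℝ) L, 0 < A t x)
    (hAcont : ContinuousOn (fun p : ℝ × ℝ => A p.1 p.2) (Icc 0 T ×ˢ Icc 0 L))
    (hAt : ∀ t ∈ Icc (0:ℝ) T, ∀ x ∈ Icc (0:ℝ) L,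
        HasDerivWithinAt (fun s => A s x) (At t x) (Icc 0 T) t)
    (hAx : ∀ t ∈ Icc (0:ℝ) T, ∀ x ∈ Icc (0:ℝ) L,
        HasDerivWithinAt (fun y => A t y) (Ax t x) (Icc 0 L) x)
    (hAtcont : ContinuousOn (fun p : ℝ × ℝ => At p.1 p.2) (Icc 0 T ×ˢ Icc 0 L))
    (hAxcont : ContinuousOn (fun p : ℝ × ℝ => Ax p.1 p.2) (Icc 0 T ×ˢ Icc 0 L))
    (hAtt : ∀ t ∈ Icc (0:ℝ) T, ∀ x ∈ Icc (0:ℝ) L,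
        HasDerivWithinAt (fun s => At s x) (Att t x) (Icc 0 T) t)
    (hAtx : ∀ t ∈ Icc (0:ℝ) T, ∀ x ∈ Icc (0:ℝ) L,
        HasDerivWithinAt (fun y => At t y) (Atx t x) (Icc 0 L) x)
    (hAxt : ∀ t ∈ Icc (0:ℝ) T, ∀ x ∈ Icc (0:ℝ) L,
        HasDerivWithinAt (fun s => Ax s x) (Axt t x) (Icc 0 T) t)
    (hAxx : ∀ t ∈ Icc (0:ℝ) T, ∀ x ∈ Icc (0:ℝ) L,
        HasDerivWithinAt (fun y => Ax t y) (Axx t x) (Icc 0 L) x)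
    (hAttcont : ContinuousOn (fun p : ℝ × ℝ => Att p.1 p.2) (Icc 0 T ×ˢ Icc 0 L))
    (hAtxcont : ContinuousOn (fun p : ℝ × ℝ => Atx p.1 p.2) (Icc 0 T ×ˢ Icc 0 L))
    (hAxtcont : ContinuousOn (fun p : ℝ × ℝ => Axt p.1 p.2) (Icc 0 T ×ˢ Icc 0 L))
    (hAxxcont : ContinuousOn (fun p : ℝ × ℝ => Axx p.1 p.2) (Icc 0 T ×ˢ Icc 0 L))
    -- mass conservation `∂ₜA + ∂ₓ(vA) = 0` on `(0,T) × (0,L)`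
    (hmass : ∀ t ∈ Ioo (0:ℝ) T, ∀ x ∈ Ioo (0:ℝ) L,
        At t x + (vx t x * A t x + v t x * Ax t x) = 0)
    -- `A ∂ₓv = χ(t)` for all `(t,x)`
    (hχ : ∀ t ∈ Icc (0:ℝ) T, ∀ x ∈ Icc (0:ℝ) L, A t x * vx t x = χ t) :
    -- `w = ∂ₓ(log A) = Ax / A` satisfies `∂ₜw + v ∂ₓw = 0` on `(0,T) × (0,L)`
    ∀ t ∈ Ioo (0:ℝ) T, ∀ x ∈ Ioo (0:ℝ) L,
      ∃ wt wx : ℝ,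
        HasDerivAt (fun s => Ax s x / A s x) wt t ∧
        HasDerivAt (fun y => Ax t y / A t y) wx x ∧
        wt + v t x * wx = 0 := by
  intro t ht x hx
  have htI : t ∈ Icc (0:ℝ) T := Ioo_subset_Icc_self ht
  have hxI : x ∈ Icc (0:ℝ) L := Ioo_subset_Icc_self hx
  have hTn : Icc (0:ℝ) T ∈ 𝓝 t := Icc_mem_nhds ht.1 ht.2
  have hLn : Icc (0:ℝ) L ∈ 𝓝 x := Icc_mem_nhds hx.1 hx.2
  set p : ℝ × ℝ := (t, x) with hp
  -- Clairaut: Axt t x = Atx t x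
  have hsymm : Axt t x = Atx t x := by
    set e1 : ℝ × ℝ := (1, 0)
    set e2 : ℝ × ℝ := (0, 1)
    let f' : ℝ × ℝ → (ℝ × ℝ →L[ℝ] ℝ) := fun r =>
      (At r.1 r.2) • ContinuousLinearMap.fst ℝ ℝ ℝ
        + (Ax r.1 r.2) • ContinuousLinearMap.snd ℝ ℝ ℝ
    have hU : (Ioo 0 T ×ˢ Ioo 0 L : Set (ℝ × ℝ)) ∈ 𝓝 p :=
      (isOpen_Ioo.prod isOpen_Ioo).mem_nhds ⟨ht, hx⟩
    have hev : ∀ᶠ y in 𝓝 p, HasFDerivAt (fun r : ℝ × ℝ => A r.1 r.2) (f' y) y := by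
      filter_upwards [hU] with y hy
      exact hasFDerivAt_of_partials_rect A At Ax hAt hAx hAtcont hy.1 hy.2
    have hAt' := hasFDerivAt_of_partials_rect At Att Atx hAtt hAtx hAttcont (q := p) ht hx
    have hAx' := hasFDerivAt_of_partials_rect Ax Axt Axx hAxt hAxx hAxtcont (q := p) ht hx
    have hf'' : HasFDerivAt f'
        (((Att p.1 p.2) • ContinuousLinearMap.fst ℝ ℝ ℝ
            + (Atx p.1 p.2) • ContinuousLinearMap.snd ℝ ℝ ℝ).smulRight
              (ContinuousLinearMap.fst ℝ ℝ ℝ)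
          + ((Axt p.1 p.2) • ContinuousLinearMap.fst ℝ ℝ ℝ
            + (Axx p.1 p.2) • ContinuousLinearMap.snd ℝ ℝ ℝ).smulRight
              (ContinuousLinearMap.snd ℝ ℝ ℝ)) p :=
      (hAt'.smul_const _).add (hAx'.smul_const (ContinuousLinearMap.snd ℝ ℝ ℝ))
    have hkey := second_derivative_symmetric_of_eventually hev hf'' e1 e2
    simpa [e1, e2, ContinuousLinearMap.smulRight_apply,
      ContinuousLinearMap.add_apply, ContinuousLinearMap.smul_apply] using hkey
  -- value of Atx from differentiating the mass equation in x
  have hAtxval : Atx t x = -(vx t x * Ax t x + v t x * Axx t x) := by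
    have hAtx_at : HasDerivAt (fun y => At t y) (Atx t x) x :=
      (hAtx t htI x hxI).hasDerivAt hLn
    have h1 : HasDerivAt (fun y => v t y) (vx t x) x := (hvx t htI x hxI).hasDerivAt hLn
    have h2 : HasDerivAt (fun y => Ax t y) (Axx t x) x := (hAxx t htI x hxI).hasDerivAt hLn
    have hrhs : HasDerivAt (fun y => -(χ t) - v t y * Ax t y)
        (-(vx t x * Ax t x + v t x * Axx t x)) x := by
      simpa using (h1.mul h2).const_sub (-(χ t))
    have heq : (fun y => At t y) =ᶠ[𝓝 x] (fun y => -(χ t) - v t y * Ax t y) := by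
      filter_upwards [Ioo_mem_nhds hx.1 hx.2] with y hy
      have hm := hmass t ht y hy
      have hc := hχ t htI y (Ioo_subset_Icc_self hy)
      nlinarith [hm, hc]
    exact hAtx_at.unique (hrhs.congr_of_eventuallyEq heq)
  have hA0 : A t x ≠ 0 := (hApos t htI x hxI).ne'
  have hAxt_at : HasDerivAt (fun s => Ax s x) (Axt t x) t := (hAxt t htI x hxI).hasDerivAt hTn
  have hAt_at : HasDerivAt (fun s => A s x) (At t x) t := (hAt t htI x hxI).hasDerivAt hTn
  have hAxx_at : HasDerivAt (fun y => Ax t y) (Axx t x) x := (hAxx t htI x hxI).hasDerivAt hLn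
  have hAx_at : HasDerivAt (fun y => A t y) (Ax t x) x := (hAx t htI x hxI).hasDerivAt hLn
  refine ⟨_, _, hAxt_at.div hAt_at hA0, hAxx_at.div hAx_at hA0, ?_⟩
  have hm := hmass t ht x hx
  rw [hsymm, hAtxval]
  have hAtval : At t x = -(vx t x * A t x + v t x * Ax t x) := by linarith
  rw [hAtval]
  field_simp
  ring
end

section
/- Let t₀, L > 0, let v : [0,t₀] × [0,L] → ℝ be continuous with v(t,x) > 0 everywhere, and let w ∈ C¹([0,t₀] × [0,L]) satisfy ∂ₜw + v ∂ₓw = 0 on (0,t₀) × (0,L). Let m, M ∈ ℝ and suppose m ≤ w(0,x) ≤ M for all x ∈ [0,L] and m ≤ w(t,0) ≤ M for all t ∈ [0,t₀]. Then m ≤ w(t,x) ≤ M for all (t,x) ∈ [0,t₀] × [0,L]. -/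
open Set Filter Topology

lemma deriv_nonneg_of_max_left {f : ℝ → ℝ} {f' a b c : ℝ} (hc : c ∈ Icc a b) (hac : a < c)
    (hd : HasDerivWithinAt f f' (Icc a b) c) (hmax : ∀ s ∈ Icc a b, f s ≤ f c) : 0 ≤ f' := by
  have hslope := hasDerivWithinAt_iff_tendsto_slope.mp hd
  have hsub : Ioo a c ⊆ Icc a b \ {c} := fun s hs =>
    ⟨⟨hs.1.le, hs.2.le.trans hc.2⟩, ne_of_lt hs.2⟩
  have hne : (𝓝[Ioo a c] c).NeBot := by
    rw [← mem_closure_iff_nhdsWithin_neBot, closure_Ioo hac.ne]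
    exact ⟨hac.le, le_rfl⟩
  have htend : Tendsto (slope f c) (𝓝[Ioo a c] c) (𝓝 f') :=
    hslope.mono_left (nhdsWithin_mono _ hsub)
  refine ge_of_tendsto htend ?_
  filter_upwards [self_mem_nhdsWithin] with s hs
  have h1 : f s - f c ≤ 0 := sub_nonpos.mpr (hmax s ⟨hs.1.le, hs.2.le.trans hc.2⟩)
  have h2 : s - c < 0 := sub_neg.mpr hs.2
  rw [slope_def_field]
  exact div_nonneg_of_nonpos h1 h2.le

lemma eq_zero_of_closure {f : ℝ × ℝ → ℝ} {s S : Set (ℝ × ℝ)} (hsub : s ⊆ S)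
    (hcont : ContinuousOn f S) (hzero : ∀ p ∈ s, f p = 0) {p : ℝ × ℝ}
    (hp : p ∈ S) (hcl : p ∈ closure s) : f p = 0 := by
  haveI : (𝓝[s] p).NeBot := mem_closure_iff_nhdsWithin_neBot.mp hcl
  have h1 : Tendsto f (𝓝[s] p) (𝓝 (f p)) :=
    (hcont p hp).mono_left (nhdsWithin_mono _ hsub)
  have h2 : Tendsto f (𝓝[s] p) (𝓝 0) :=
    tendsto_const_nhds.congr' (by filter_upwards [self_mem_nhdsWithin] with q hq; exact (hzero q hq).symm)
  exact tendsto_nhds_unique h1 h2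

lemma transport_upper
    (t₀ L : ℝ) (ht₀ : 0 < t₀) (hL : 0 < L)
    (v w wt wx : ℝ → ℝ → ℝ) (M : ℝ)
    (hvcont : ContinuousOn (fun p : ℝ × ℝ => v p.1 p.2) (Icc 0 t₀ ×ˢ Icc 0 L))
    (hvpos : ∀ t ∈ Icc (0:ℝ) t₀, ∀ x ∈ Icc (0:ℝ) L, 0 < v t x)
    (hwcont : ContinuousOn (fun p : ℝ × ℝ => w p.1 p.2) (Icc 0 t₀ ×ˢ Icc 0 L))
    (hwtcont : ContinuousOn (fun p : ℝ × ℝ => wt p.1 p.2) (Icc 0 t₀ ×ˢ Icc 0 L))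
    (hwxcont : ContinuousOn (fun p : ℝ × ℝ => wx p.1 p.2) (Icc 0 t₀ ×ˢ Icc 0 L))
    (hwt : ∀ t ∈ Icc (0:ℝ) t₀, ∀ x ∈ Icc (0:ℝ) L,
        HasDerivWithinAt (fun s => w s x) (wt t x) (Icc 0 t₀) t)
    (hwx : ∀ t ∈ Icc (0:ℝ) t₀, ∀ x ∈ Icc (0:ℝ) L,
        HasDerivWithinAt (fun y => w t y) (wx t x) (Icc 0 L) x)
    (heq : ∀ t ∈ Ioo (0:ℝ) t₀, ∀ x ∈ Ioo (0:ℝ) L, wt t x + v t x * wx t x = 0)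
    (hinit : ∀ x ∈ Icc (0:ℝ) L, w 0 x ≤ M)
    (hbdry : ∀ t ∈ Icc (0:ℝ) t₀, w t 0 ≤ M) :
    ∀ t ∈ Icc (0:ℝ) t₀, ∀ x ∈ Icc (0:ℝ) L, w t x ≤ M := by
  -- extend equation to closed rectangle
  have heq' : ∀ t ∈ Icc (0:ℝ) t₀, ∀ x ∈ Icc (0:ℝ) L, wt t x + v t x * wx t x = 0 := by
    intro t ht x hx
    have hcont : ContinuousOn (fun p : ℝ × ℝ => wt p.1 p.2 + v p.1 p.2 * wx p.1 p.2)
        (Icc 0 t₀ ×ˢ Icc 0 L) := hwtcont.add (hvcont.mul hwxcont)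
    have hcl : ((t, x) : ℝ × ℝ) ∈ closure (Ioo 0 t₀ ×ˢ Ioo 0 L) := by
      rw [closure_prod_eq, closure_Ioo ht₀.ne, closure_Ioo hL.ne]
      exact ⟨ht, hx⟩
    exact eq_zero_of_closure
      (prod_mono Ioo_subset_Icc_self Ioo_subset_Icc_self) hcont
      (fun p hp => heq p.1 hp.1 p.2 hp.2) (Set.mk_mem_prod ht hx) hcl
  intro t ht x hx
  -- suffices to bound with ε slack
  have key : ∀ ε : ℝ, 0 < ε → w t x ≤ M + ε * (t₀ + L) := by
    intro ε hε
    set u : ℝ × ℝ → ℝ := fun p => w p.1 p.2 - ε * (p.1 + p.2) with hu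
    have hK : IsCompact (Icc (0:ℝ) t₀ ×ˢ Icc (0:ℝ) L) := isCompact_Icc.prod isCompact_Icc
    have hKne : (Icc (0:ℝ) t₀ ×ˢ Icc (0:ℝ) L).Nonempty :=
      ⟨(0, 0), ⟨le_refl 0, ht₀.le⟩, ⟨le_refl 0, hL.le⟩⟩
    have hucont : ContinuousOn u (Icc 0 t₀ ×ˢ Icc 0 L) :=
      hwcont.sub (Continuous.continuousOn (by continuity))
    obtain ⟨p, hpK, hpmax⟩ := hK.exists_isMaxOn hKne hucont
    have hp1 : p.1 ∈ Icc (0:ℝ) t₀ := hpK.1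
    have hp2 : p.2 ∈ Icc (0:ℝ) L := hpK.2
    have hub : u p ≤ M := by
      rcases eq_or_lt_of_le hp1.1 with h1 | h1
      · -- p.1 = 0
        have : u p = w 0 p.2 - ε * (0 + p.2) := by rw [hu]; simp [← h1]
        rw [this]
        have := hinit p.2 hp2
        nlinarith [hp2.1]
      rcases eq_or_lt_of_le hp2.1 with h2 | h2
      · have : u p = w p.1 0 - ε * (p.1 + 0) := by rw [hu]; simp [← h2]
        rw [this]
        have := hbdry p.1 hp1
        nlinarith [hp1.1]
      -- interior-ish max: contradiction
      exfalso
      have hdt : 0 ≤ wt p.1 p.2 - ε := by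
        refine deriv_nonneg_of_max_left hp1 h1
          (((hwt p.1 hp1 p.2 hp2).sub
            (((hasDerivWithinAt_id p.1 (Icc 0 t₀)).add_const p.2).const_mul ε)).congr_deriv
            (by ring)) ?_
        intro s hs
        have := hpmax (Set.mk_mem_prod hs hp2)
        simpa [u] using this
      have hdx : 0 ≤ wx p.1 p.2 - ε := by
        refine deriv_nonneg_of_max_left hp2 h2
          (((hwx p.1 hp1 p.2 hp2).sub
            (((hasDerivWithinAt_id p.2 (Icc 0 L)).const_add p.1).const_mul ε)).congr_deriv
            (by ring)) ?_
        intro s hs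
        have := hpmax (Set.mk_mem_prod hp1 hs)
        simpa [u] using this
      have hv := hvpos p.1 hp1 p.2 hp2
      have := heq' p.1 hp1 p.2 hp2
      nlinarith
    have hle : u (t, x) ≤ u p := hpmax (Set.mk_mem_prod ht hx)
    have : w t x - ε * (t + x) ≤ M := le_trans hle hub
    nlinarith [ht.1, ht.2, hx.1, hx.2]
  by_contra hcon
  push_neg at hcon
  have hsum : 0 < t₀ + L := by linarith
  have := key ((w t x - M) / (2 * (t₀ + L))) (div_pos (by linarith) (by linarith))
  have h2 : (w t x - M) / (2 * (t₀ + L)) * (t₀ + L) = (w t x - M) / 2 := by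
    field_simp
  rw [h2] at this
  linarith

/-- Maximum principle for the transport equation `∂ₜw + v ∂ₓw = 0` with
continuous strictly positive speed `v`: if `w ∈ C¹([0,t₀] × [0,L])` (partial derivatives
`wt`, `wx`, continuous on the closed rectangle) satisfies the equation on
`(0,t₀) × (0,L)` and `m ≤ w ≤ M` on `{t = 0}` and on `{x = 0}`, then `m ≤ w ≤ M` on all
of `[0,t₀] × [0,L]`. -/
theorem statement6
    (t₀ L : ℝ) (ht₀ : 0 < t₀) (hL : 0 < L)
    (v w wt wx : ℝ → ℝ → ℝ) (m M : ℝ)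
    (hvcont : ContinuousOn (fun p : ℝ × ℝ => v p.1 p.2) (Icc 0 t₀ ×ˢ Icc 0 L))
    (hvpos : ∀ t ∈ Icc (0:ℝ) t₀, ∀ x ∈ Icc (0:ℝ) L, 0 < v t x)
    (hwcont : ContinuousOn (fun p : ℝ × ℝ => w p.1 p.2) (Icc 0 t₀ ×ˢ Icc 0 L))
    (hwtcont : ContinuousOn (fun p : ℝ × ℝ => wt p.1 p.2) (Icc 0 t₀ ×ˢ Icc 0 L))
    (hwxcont : ContinuousOn (fun p : ℝ × ℝ => wx p.1 p.2) (Icc 0 t₀ ×ˢ Icc 0 L))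
    (hwt : ∀ t ∈ Icc (0:ℝ) t₀, ∀ x ∈ Icc (0:ℝ) L,
        HasDerivWithinAt (fun s => w s x) (wt t x) (Icc 0 t₀) t)
    (hwx : ∀ t ∈ Icc (0:ℝ) t₀, ∀ x ∈ Icc (0:ℝ) L,
        HasDerivWithinAt (fun y => w t y) (wx t x) (Icc 0 L) x)
    (heq : ∀ t ∈ Ioo (0:ℝ) t₀, ∀ x ∈ Ioo (0:ℝ) L, wt t x + v t x * wx t x = 0)
    (hinit : ∀ x ∈ Icc (0:ℝ) L, m ≤ w 0 x ∧ w 0 x ≤ M)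
    (hbdry : ∀ t ∈ Icc (0:ℝ) t₀, m ≤ w t 0 ∧ w t 0 ≤ M) :
    ∀ t ∈ Icc (0:ℝ) t₀, ∀ x ∈ Icc (0:ℝ) L, m ≤ w t x ∧ w t x ≤ M := by
  have hupper := transport_upper t₀ L ht₀ hL v w wt wx M hvcont hvpos hwcont hwtcont hwxcont
    hwt hwx heq (fun x hx => (hinit x hx).2) (fun t ht => (hbdry t ht).2)
  have hlower := transport_upper t₀ L ht₀ hL v (fun t x => -w t x) (fun t x => -wt t x)
    (fun t x => -wx t x) (-m) hvcont hvpos hwcont.neg hwtcont.neg hwxcont.neg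
    (fun t ht x hx => (hwt t ht x hx).neg)
    (fun t ht x hx => (hwx t ht x hx).neg)
    (fun t ht x hx => by have := heq t ht x hx; ring_nf; ring_nf at this; linarith)
    (fun x hx => neg_le_neg (hinit x hx).1) (fun t ht => neg_le_neg (hbdry t ht).1)
  intro t ht x hx
  exact ⟨by have := hlower t ht x hx; linarith, hupper t ht x hx⟩
end

section
/- Let L, T > 0, constants 0 < v_m ≤ V_M, 0 < S_m ≤ S_M, R > 0, q₀ ≥ 0, and let 0 < δ ≤ t₀ ≤ T satisfy δ·q₀ < S_m/12 and t₀ ≤ S_m L^{3/2}/(4 R V_M). Let Q : [0,t₀] → ℝ be continuous with −q₀·max(1 − t/δ, 0) ≤ Q(t) ≤ q₀·max(1 − t/δ, 0) + V_M R/L^{3/2} for all t. Let v⁰ : [0,t₀] × [0,L] → ℝ be continuous with v⁰(t,x) > 0 everywhere, and let u ∈ C¹([0,t₀] × [0,L]) satisfy ∂ₜu + v⁰ ∂ₓu + Q(t) = 0 on (0,t₀) × (0,L), with u(0,x) = S₁(x) for x ∈ [0,L] and u(t,0) = S₀(t) for t ∈ [0,t₀], where S_m ≤ S₀(t) ≤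 S_M and S_m ≤ S₁(x) ≤ S_M. Then S_m/4 ≤ u(t,x) ≤ S_M + 2S_m/3 for all (t,x) ∈ [0,t₀] × [0,L]. -/
open Set Topology Filter intervalIntegral

lemma aux_max {f : ℝ → ℝ} {d a b c : ℝ} (hac : a < c) (hc : c ∈ Icc a b)
    (hd : HasDerivWithinAt f d (Icc a b) c) (hmax : ∀ s ∈ Icc a b, f s ≤ f c) : 0 ≤ d := by
  have hsub : Ico a c ⊆ Icc a b := fun s hs => ⟨hs.1, hs.2.le.trans hc.2⟩
  have hd' : HasDerivWithinAt f d (Ico a c) c := hd.mono hsub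
  rw [hasDerivWithinAt_iff_tendsto_slope] at hd'
  have hdiff : Ico a c \ {c} = Ico a c := by
    apply diff_singleton_eq_self; simp
  rw [hdiff] at hd'
  have hne : (𝓝[Ico a c] c).NeBot := by
    rw [← mem_closure_iff_nhdsWithin_neBot, closure_Ico hac.ne]
    exact ⟨hac.le, le_refl c⟩
  refine ge_of_tendsto hd' ?_
  filter_upwards [self_mem_nhdsWithin] with s hs
  rw [slope_def_field]
  apply div_nonneg_of_nonpos
  · have := hmax s (hsub hs); linarith
  · linarith [hs.2]

lemma aux_min {f : ℝ → ℝ} {d a b c : ℝ} (hac : a < c) (hc : c ∈ Icc a b)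
    (hd : HasDerivWithinAt f d (Icc a b) c) (hmin : ∀ s ∈ Icc a b, f c ≤ f s) : d ≤ 0 := by
  have := aux_max hac hc hd.neg (fun s hs => neg_le_neg (hmin s hs))
  linarith

set_option maxHeartbeats 1000000 in
/-- Barrier bounds for the linearized regularized Matovich–Pearson
step: the solution `u` of `∂ₜu + v⁰ ∂ₓu + Q(t) = 0` with data `u(0,·) = S₁ ∈ [S_m,S_M]`,
`u(·,0) = S₀ ∈ [S_m,S_M]`, positive continuous speed `v⁰`, and forcing `Q` satisfying
`−q₀ max(1−t/δ,0) ≤ Q(t) ≤ q₀ max(1−t/δ,0) + V_M R/L^{3/2}`, under the smallness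
conditions `δ q₀ < S_m/12` and `t₀ ≤ S_m L^{3/2}/(4 R V_M)`, satisfies
`S_m/4 ≤ u ≤ S_M + 2S_m/3` on `[0,t₀] × [0,L]`. -/
theorem statement10
    (L T v_m V_M S_m S_M R q₀ δ t₀ : ℝ)
    (hL : 0 < L) (hT : 0 < T)
    (hvm : 0 < v_m) (hvmV : v_m ≤ V_M)
    (hSm : 0 < S_m) (hSmM : S_m ≤ S_M)
    (hR : 0 < R) (hq₀ : 0 ≤ q₀)
    (hδ : 0 < δ) (hδt₀ : δ ≤ t₀) (ht₀T : t₀ ≤ T)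
    (hδq : δ * q₀ < S_m / 12)
    (ht₀ : t₀ ≤ S_m * L ^ ((3:ℝ)/2) / (4 * R * V_M))
    (Q S₀ S₁ : ℝ → ℝ) (v0 u ut ux : ℝ → ℝ → ℝ)
    (hQcont : ContinuousOn Q (Icc 0 t₀))
    (hQlb : ∀ t ∈ Icc (0:ℝ) t₀, -q₀ * max (1 - t / δ) 0 ≤ Q t)
    (hQub : ∀ t ∈ Icc (0:ℝ) t₀,
        Q t ≤ q₀ * max (1 - t / δ) 0 + V_M * R / L ^ ((3:ℝ)/2))
    (hv0cont : ContinuousOn (fun p : ℝ × ℝ => v0 p.1 p.2) (Icc 0 t₀ ×ˢ Icc 0 L))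
    (hv0pos : ∀ t ∈ Icc (0:ℝ) t₀, ∀ x ∈ Icc (0:ℝ) L, 0 < v0 t x)
    -- `u ∈ C¹([0,t₀] × [0,L])`
    (hucont : ContinuousOn (fun p : ℝ × ℝ => u p.1 p.2) (Icc 0 t₀ ×ˢ Icc 0 L))
    (hutcont : ContinuousOn (fun p : ℝ × ℝ => ut p.1 p.2) (Icc 0 t₀ ×ˢ Icc 0 L))
    (huxcont : ContinuousOn (fun p : ℝ × ℝ => ux p.1 p.2) (Icc 0 t₀ ×ˢ Icc 0 L))
    (hut : ∀ t ∈ Icc (0:ℝ) t₀, ∀ x ∈ Icc (0:ℝ) L,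
        HasDerivWithinAt (fun s => u s x) (ut t x) (Icc 0 t₀) t)
    (hux : ∀ t ∈ Icc (0:ℝ) t₀, ∀ x ∈ Icc (0:ℝ) L,
        HasDerivWithinAt (fun y => u t y) (ux t x) (Icc 0 L) x)
    (heq : ∀ t ∈ Ioo (0:ℝ) t₀, ∀ x ∈ Ioo (0:ℝ) L,
        ut t x + v0 t x * ux t x + Q t = 0)
    (hinit : ∀ x ∈ Icc (0:ℝ) L, u 0 x = S₁ x)
    (hbdry : ∀ t ∈ Icc (0:ℝ) t₀, u t 0 = S₀ t)
    (hS₀ : ∀ t ∈ Icc (0:ℝ) t₀, S_m ≤ S₀ t ∧ S₀ t ≤ S_M)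
    (hS₁ : ∀ x ∈ Icc (0:ℝ) L, S_m ≤ S₁ x ∧ S₁ x ≤ S_M) :
    ∀ t ∈ Icc (0:ℝ) t₀, ∀ x ∈ Icc (0:ℝ) L,
      S_m / 4 ≤ u t x ∧ u t x ≤ S_M + 2 * S_m / 3 := by
  have hVM : 0 < V_M := lt_of_lt_of_le hvm hvmV
  have ht₀pos : 0 < t₀ := lt_of_lt_of_le hδ hδt₀
  have hLp : 0 < L ^ ((3:ℝ)/2) := Real.rpow_pos_of_pos hL _
  set C : ℝ := V_M * R / L ^ ((3:ℝ)/2) with hCdef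
  have hCpos : 0 < C := by positivity
  have hCt : t₀ * C ≤ S_m / 4 := by
    have h1 : t₀ * C ≤ (S_m * L ^ ((3:ℝ)/2) / (4 * R * V_M)) * C :=
      mul_le_mul_of_nonneg_right ht₀ hCpos.le
    have h2 : (S_m * L ^ ((3:ℝ)/2) / (4 * R * V_M)) * C = S_m / 4 := by
      rw [hCdef]; field_simp
    linarith
  -- the regularized forcing barrier
  set g : ℝ → ℝ := fun s => q₀ * max (1 - s / δ) 0 with hgdef
  have hgcont : Continuous g :=
    continuous_const.mul ((continuous_const.sub (continuous_id.div_const δ)).max continuous_const)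
  have hgint : ∀ a b : ℝ, IntervalIntegrable g MeasureTheory.volume a b :=
    fun a b => hgcont.intervalIntegrable a b
  have hgnn : ∀ s, 0 ≤ g s := fun s => mul_nonneg hq₀ (le_max_right _ _)
  have hgle : ∀ s, 0 ≤ s → g s ≤ q₀ := by
    intro s hs
    have h1 : max (1 - s / δ) 0 ≤ 1 :=
      max_le (by have : 0 ≤ s / δ := div_nonneg hs hδ.le; linarith) zero_le_one
    calc g s = q₀ * max (1 - s / δ) 0 := rfl
      _ ≤ q₀ * 1 := mul_le_mul_of_nonneg_left h1 hq₀
      _ = q₀ := mul_one _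
  have hsmall : ∀ a : ℝ, 0 ≤ a → (∫ s in (0:ℝ)..a, g s) ≤ a * q₀ := by
    intro a ha
    calc (∫ s in (0:ℝ)..a, g s) ≤ ∫ s in (0:ℝ)..a, q₀ := by
          apply intervalIntegral.integral_mono_on ha (hgint 0 a) intervalIntegrable_const
          intro s hs; exact hgle s hs.1
      _ = a * q₀ := by simp [smul_eq_mul]
  have hgbound : ∀ t ∈ Icc (0:ℝ) t₀, (∫ s in (0:ℝ)..t, g s) ≤ δ * q₀ := by
    intro t ht
    rcases le_total t δ with h | h
    · calc (∫ s in (0:ℝ)..t, g s) ≤ t * q₀ := hsmall t ht.1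
        _ ≤ δ * q₀ := mul_le_mul_of_nonneg_right h hq₀
    · have h1 : (∫ s in (0:ℝ)..δ, g s) + (∫ s in δ..t, g s) = ∫ s in (0:ℝ)..t, g s :=
        intervalIntegral.integral_add_adjacent_intervals (hgint 0 δ) (hgint δ t)
      have h2 : (∫ s in δ..t, g s) = 0 := by
        have heq0 : EqOn g (fun _ => (0:ℝ)) (uIcc δ t) := by
          intro s hs
          rw [uIcc_of_le h] at hs
          have hs1 : (1:ℝ) ≤ s / δ := (one_le_div hδ).2 hs.1
          have : max (1 - s / δ) 0 = 0 := max_eq_right (by linarith)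
          simp [hgdef, this]
        rw [intervalIntegral.integral_congr heq0]; simp
      have h3 : (∫ s in (0:ℝ)..δ, g s) ≤ δ * q₀ := hsmall δ hδ.le
      linarith
  -- integrability of Q
  have hQint : ∀ t ∈ Icc (0:ℝ) t₀, IntervalIntegrable Q MeasureTheory.volume 0 t := by
    intro t ht
    apply ContinuousOn.intervalIntegrable
    rw [uIcc_of_le ht.1]
    exact hQcont.mono (Icc_subset_Icc_right ht.2)
  -- the primitive of Q
  set Φ : ℝ → ℝ := fun t => ∫ s in (0:ℝ)..t, Q s with hΦdef
  have hΦ0 : Φ 0 = 0 := by simp [hΦdef]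
  have hΦub : ∀ t ∈ Icc (0:ℝ) t₀, Φ t ≤ δ * q₀ + S_m / 4 := by
    intro t ht
    have step1 : Φ t ≤ ∫ s in (0:ℝ)..t, (g s + C) := by
      apply intervalIntegral.integral_mono_on ht.1 (hQint t ht)
        ((hgint 0 t).add intervalIntegrable_const)
      intro s hs
      exact hQub s ⟨hs.1, hs.2.trans ht.2⟩
    have step2 : (∫ s in (0:ℝ)..t, (g s + C)) = (∫ s in (0:ℝ)..t, g s) + t * C := by
      rw [intervalIntegral.integral_add (hgint 0 t) intervalIntegrable_const]
      simp only [intervalIntegral.integral_const, smul_eq_mul, sub_zero]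
    have step3 : t * C ≤ S_m / 4 :=
      le_trans (mul_le_mul_of_nonneg_right ht.2 hCpos.le) hCt
    have := hgbound t ht
    linarith
  have hΦlb : ∀ t ∈ Icc (0:ℝ) t₀, -(δ * q₀) ≤ Φ t := by
    intro t ht
    have step1 : (∫ s in (0:ℝ)..t, (-g s)) ≤ Φ t := by
      apply intervalIntegral.integral_mono_on ht.1 (hgint 0 t).neg (hQint t ht)
      intro s hs
      have := hQlb s ⟨hs.1, hs.2.trans ht.2⟩
      simpa [hgdef, neg_mul] using this
    have step2 : (∫ s in (0:ℝ)..t, (-g s)) = -(∫ s in (0:ℝ)..t, g s) := by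
      exact intervalIntegral.integral_neg
    have := hgbound t ht
    linarith
  -- derivative of Φ
  have hΦd : ∀ t ∈ Icc (0:ℝ) t₀, HasDerivWithinAt Φ (Q t) (Icc 0 t₀) t := by
    intro t ht
    haveI : Fact (t ∈ Icc (0:ℝ) t₀) := ⟨ht⟩
    exact intervalIntegral.integral_hasDerivWithinAt_right (hQint t ht)
      (hQcont.stronglyMeasurableAtFilter_nhdsWithin measurableSet_Icc t)
      (hQcont.continuousWithinAt ht)
  have hΦcont : ContinuousOn Φ (Icc 0 t₀) := fun t ht => (hΦd t ht).continuousWithinAt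
  -- extend the PDE to the closed rectangle
  set K : Set (ℝ × ℝ) := Icc 0 t₀ ×ˢ Icc 0 L with hKdef
  have hKcompact : IsCompact K := (isCompact_Icc).prod isCompact_Icc
  have hKne : K.Nonempty := ⟨(0, 0), ⟨⟨le_refl 0, ht₀pos.le⟩, ⟨le_refl 0, hL.le⟩⟩⟩
  set F : ℝ × ℝ → ℝ := fun p => ut p.1 p.2 + v0 p.1 p.2 * ux p.1 p.2 + Q p.1 with hFdef
  have hQfst : ContinuousOn (fun p : ℝ × ℝ => Q p.1) K := by
    apply hQcont.comp continuous_fst.continuousOn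
    intro p hp; exact hp.1
  have hFcont : ContinuousOn F K := (hutcont.add (hv0cont.mul huxcont)).add hQfst
  have heq' : ∀ p ∈ K, F p = 0 := by
    intro p hp
    have hcl : p ∈ closure (Ioo (0:ℝ) t₀ ×ˢ Ioo (0:ℝ) L) := by
      rw [closure_prod_eq, closure_Ioo ht₀pos.ne, closure_Ioo hL.ne]
      exact hp
    haveI hne : (𝓝[Ioo (0:ℝ) t₀ ×ˢ Ioo (0:ℝ) L] p).NeBot :=
      mem_closure_iff_nhdsWithin_neBot.1 hcl
    have hsub : Ioo (0:ℝ) t₀ ×ˢ Ioo (0:ℝ) L ⊆ K :=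
      prod_mono Ioo_subset_Icc_self Ioo_subset_Icc_self
    have h1 : Tendsto F (𝓝[Ioo (0:ℝ) t₀ ×ˢ Ioo (0:ℝ) L] p) (𝓝 (F p)) :=
      (hFcont p hp).mono hsub
    have h2 : Tendsto F (𝓝[Ioo (0:ℝ) t₀ ×ˢ Ioo (0:ℝ) L] p) (𝓝 0) := by
      refine Tendsto.congr' ?_ tendsto_const_nhds
      filter_upwards [self_mem_nhdsWithin] with q hq
      exact (heq q.1 hq.1 q.2 hq.2).symm
    exact tendsto_nhds_unique h1 h2
  -- the transported function w
  set w : ℝ → ℝ → ℝ := fun t x => u t x + Φ t with hwdef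
  have hwcont : ContinuousOn (fun p : ℝ × ℝ => w p.1 p.2) K := by
    apply hucont.add
    apply hΦcont.comp continuous_fst.continuousOn
    intro p hp; exact hp.1
  set Mb : ℝ := S_M + δ * q₀ + S_m / 4 with hMbdef
  set mb : ℝ := S_m - δ * q₀ with hmbdef
  have hδq0 : 0 ≤ δ * q₀ := mul_nonneg hδ.le hq₀
  -- upper barrier
  have hub : ∀ t ∈ Icc (0:ℝ) t₀, ∀ x ∈ Icc (0:ℝ) L, w t x ≤ Mb := by
    intro t ht x hx
    have key : ∀ ε : ℝ, 0 < ε → w t x - ε * t ≤ Mb := by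
      intro ε hε
      set G : ℝ × ℝ → ℝ := fun p => w p.1 p.2 - ε * p.1 with hGdef
      have hGcont : ContinuousOn G K :=
        hwcont.sub (continuous_fst.continuousOn.const_smul ε)
      obtain ⟨p, hpK, hpmax⟩ := hKcompact.exists_isMaxOn hKne hGcont
      have hGb : G p ≤ Mb := by
        rcases eq_or_lt_of_le hpK.1.1 with h0 | h0
        · -- p.1 = 0
          have : G p = S₁ p.2 := by
            simp only [hGdef, hwdef, ← h0, hΦ0]
            rw [hinit p.2 hpK.2]; ring
          rw [this]
          have := hS₁ p.2 hpK.2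
          simp only [hMbdef]; linarith
        · rcases eq_or_lt_of_le hpK.2.1 with h0' | h0'
          · -- p.2 = 0
            have : G p = S₀ p.1 + Φ p.1 - ε * p.1 := by
              simp only [hGdef, hwdef, ← h0']
              rw [hbdry p.1 hpK.1]
            rw [this]
            have h1 := hS₀ p.1 hpK.1
            have h2 := hΦub p.1 hpK.1
            have h3 : 0 ≤ ε * p.1 := mul_nonneg hε.le hpK.1.1
            simp only [hMbdef]; linarith
          · -- interior in both variables: contradiction
            exfalso
            have hlin : HasDerivWithinAt (fun s : ℝ => ε * s) ε (Icc 0 t₀) p.1 := by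
              simpa using (hasDerivWithinAt_id p.1 (Icc (0:ℝ) t₀)).const_mul ε
            have hdt : HasDerivWithinAt (fun s => u s p.2 + Φ s - ε * s)
                (ut p.1 p.2 + Q p.1 - ε) (Icc 0 t₀) p.1 :=
              ((hut p.1 hpK.1 p.2 hpK.2).add (hΦd p.1 hpK.1)).sub hlin
            have hmaxt : ∀ s ∈ Icc (0:ℝ) t₀, u s p.2 + Φ s - ε * s ≤ u p.1 p.2 + Φ p.1 - ε * p.1 := by
              intro s hs
              have := hpmax (show ((s, p.2) : ℝ × ℝ) ∈ K from ⟨hs, hpK.2⟩)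
              simp only [hGdef, hwdef, mem_setOf_eq] at this
              linarith
            have h1 : 0 ≤ ut p.1 p.2 + Q p.1 - ε := aux_max h0 hpK.1 hdt hmaxt
            have hdx : HasDerivWithinAt (fun y => u p.1 y) (ux p.1 p.2) (Icc 0 L) p.2 :=
              hux p.1 hpK.1 p.2 hpK.2
            have hmaxx : ∀ y ∈ Icc (0:ℝ) L, u p.1 y ≤ u p.1 p.2 := by
              intro y hy
              have := hpmax (show ((p.1, y) : ℝ × ℝ) ∈ K from ⟨hpK.1, hy⟩)
              simp only [hGdef, hwdef, mem_setOf_eq] at this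
              linarith
            have h2 : 0 ≤ ux p.1 p.2 := aux_max h0' hpK.2 hdx hmaxx
            have h3 := heq' p hpK
            have h4 := hv0pos p.1 hpK.1 p.2 hpK.2
            have h5 : 0 ≤ v0 p.1 p.2 * ux p.1 p.2 := mul_nonneg h4.le h2
            simp only [hFdef] at h3
            linarith
      have := hpmax (show (t, x) ∈ K from ⟨ht, hx⟩)
      simp only [hGdef] at this hGb ⊢
      exact le_trans this hGb
    by_contra hcon
    push_neg at hcon
    have ht₀' : 0 < t₀ + 1 := by linarith
    set ε := (w t x - Mb) / (t₀ + 1) with hεdef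
    have hε : 0 < ε := div_pos (by linarith) ht₀'
    have := key ε hε
    have hεt : ε * t ≤ ε * t₀ := mul_le_mul_of_nonneg_left ht.2 hε.le
    have : w t x - ε * t₀ ≤ Mb := by linarith
    have hεt₀ : ε * t₀ < w t x - Mb := by
      rw [hεdef, div_mul_eq_mul_div, div_lt_iff₀ ht₀']
      have hwm : 0 < w t x - Mb := by linarith
      nlinarith
    linarith
  -- lower barrier
  have hlb : ∀ t ∈ Icc (0:ℝ) t₀, ∀ x ∈ Icc (0:ℝ) L, mb ≤ w t x := by
    intro t ht x hx
    have key : ∀ ε : ℝ, 0 < ε → mb ≤ w t x + ε * t := by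
      intro ε hε
      set G : ℝ × ℝ → ℝ := fun p => w p.1 p.2 + ε * p.1 with hGdef
      have hGcont : ContinuousOn G K :=
        hwcont.add (continuous_fst.continuousOn.const_smul ε)
      obtain ⟨p, hpK, hpmin⟩ := hKcompact.exists_isMinOn hKne hGcont
      have hGb : mb ≤ G p := by
        rcases eq_or_lt_of_le hpK.1.1 with h0 | h0
        · have : G p = S₁ p.2 := by
            simp only [hGdef, hwdef, ← h0, hΦ0]
            rw [hinit p.2 hpK.2]; ring
          rw [this]
          have := hS₁ p.2 hpK.2
          simp only [hmbdef]; linarith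
        · rcases eq_or_lt_of_le hpK.2.1 with h0' | h0'
          · have : G p = S₀ p.1 + Φ p.1 + ε * p.1 := by
              simp only [hGdef, hwdef, ← h0']
              rw [hbdry p.1 hpK.1]
            rw [this]
            have h1 := hS₀ p.1 hpK.1
            have h2 := hΦlb p.1 hpK.1
            have h3 : 0 ≤ ε * p.1 := mul_nonneg hε.le hpK.1.1
            simp only [hmbdef]; linarith
          · exfalso
            have hlin : HasDerivWithinAt (fun s : ℝ => ε * s) ε (Icc 0 t₀) p.1 := by
              simpa using (hasDerivWithinAt_id p.1 (Icc (0:ℝ) t₀)).const_mul ε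
            have hdt : HasDerivWithinAt (fun s => u s p.2 + Φ s + ε * s)
                (ut p.1 p.2 + Q p.1 + ε) (Icc 0 t₀) p.1 :=
              ((hut p.1 hpK.1 p.2 hpK.2).add (hΦd p.1 hpK.1)).add hlin
            have hmint : ∀ s ∈ Icc (0:ℝ) t₀, u p.1 p.2 + Φ p.1 + ε * p.1 ≤ u s p.2 + Φ s + ε * s := by
              intro s hs
              have := hpmin (show ((s, p.2) : ℝ × ℝ) ∈ K from ⟨hs, hpK.2⟩)
              simp only [hGdef, hwdef, mem_setOf_eq] at this
              linarith
            have h1 : ut p.1 p.2 + Q p.1 + ε ≤ 0 := aux_min h0 hpK.1 hdt hmint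
            have hdx : HasDerivWithinAt (fun y => u p.1 y) (ux p.1 p.2) (Icc 0 L) p.2 :=
              hux p.1 hpK.1 p.2 hpK.2
            have hminx : ∀ y ∈ Icc (0:ℝ) L, u p.1 p.2 ≤ u p.1 y := by
              intro y hy
              have := hpmin (show ((p.1, y) : ℝ × ℝ) ∈ K from ⟨hpK.1, hy⟩)
              simp only [hGdef, hwdef, mem_setOf_eq] at this
              linarith
            have h2 : ux p.1 p.2 ≤ 0 := aux_min h0' hpK.2 hdx hminx
            have h3 := heq' p hpK
            have h4 := hv0pos p.1 hpK.1 p.2 hpK.2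
            have h5 : v0 p.1 p.2 * ux p.1 p.2 ≤ 0 := mul_nonpos_of_nonneg_of_nonpos h4.le h2
            simp only [hFdef] at h3
            linarith
      have := hpmin (show (t, x) ∈ K from ⟨ht, hx⟩)
      simp only [hGdef] at this hGb ⊢
      exact le_trans hGb this
    by_contra hcon
    push_neg at hcon
    have ht₀' : 0 < t₀ + 1 := by linarith
    set ε := (mb - w t x) / (t₀ + 1) with hεdef
    have hε : 0 < ε := div_pos (by linarith) ht₀'
    have := key ε hε
    have hεt : ε * t ≤ ε * t₀ := mul_le_mul_of_nonneg_left ht.2 hε.le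
    have hεt₀ : ε * t₀ < mb - w t x := by
      rw [hεdef, div_mul_eq_mul_div, div_lt_iff₀ ht₀']
      have hwm : 0 < mb - w t x := by linarith
      nlinarith
    linarith
  -- conclusion
  intro t ht x hx
  have h1 := hub t ht x hx
  have h2 := hlb t ht x hx
  have h3 := hΦub t ht
  have h4 := hΦlb t ht
  simp only [hwdef, hMbdef, hmbdef] at h1 h2
  constructor
  · linarith
  · linarith
end

section
/- Let t₀, L > 0, let v⁰ ∈ C¹([0,t₀] × [0,L]), let Q : [0,t₀] → ℝ be continuous, and let u : [0,t₀] × [0,L] → ℝ be twice continuously differentiable with ∂ₜu + v⁰ ∂ₓu + Q(t) = 0 on [0,t₀] × [0,L]. Set S := ∂ₓu. Then for every (t,x) ∈ [0,t₀] × [0,L]: (1/2)∫₀ˣ (u² + S²)(t,ξ) dξ + (1/2)∫₀ᵗ v⁰(τ,x)(u² + S²)(τ,x) dτ + (1/2)∫₀ᵗ∫₀ˣ ∂ₓv⁰(τ,ξ)(S² − u²)(τ,ξ) dξ dτ + ∫₀ᵗ∫₀ˣ Q(τ) u(τ,ξ) dξ dτ = (1/2)∫₀ˣ (u² + S²)(0,ξ)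 dξ + (1/2)∫₀ᵗ v⁰(τ,0)(u² + S²)(τ,0) dτ. -/
open Set intervalIntegral

open MeasureTheory

private lemma ftc_Icc {f f' : ℝ → ℝ} {a b : ℝ} (hab : a ≤ b)
    (hd : ∀ y ∈ Icc a b, HasDerivWithinAt f (f' y) (Icc a b) y)
    (hc : ContinuousOn f' (Icc a b)) :
    ∫ y in a..b, f' y = f b - f a := by
  refine integral_eq_sub_of_hasDeriv_right_of_le hab
    (fun y hy => (hd y hy).continuousWithinAt) (fun y hy => ?_) ?_
  · exact (hd y (Ioo_subset_Icc_self hy)).mono_of_mem_nhdsWithin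
      (Icc_mem_nhdsGT_of_mem ⟨hy.1.le, hy.2⟩)
  · exact (by rw [uIcc_of_le hab]; exact hc : ContinuousOn f' (uIcc a b)).intervalIntegrable

private lemma contOn_ii {g : ℝ → ℝ} {a b : ℝ} (hab : a ≤ b)
    (h : ContinuousOn g (Icc a b)) : IntervalIntegrable g volume a b :=
  (by rw [uIcc_of_le hab]; exact h : ContinuousOn g (uIcc a b)).intervalIntegrable

private lemma slice1 {f : ℝ × ℝ → ℝ} {A B : Set ℝ} (hf : ContinuousOn f (A ×ˢ B))
    {x : ℝ} (hx : x ∈ B) : ContinuousOn (fun τ => f (τ, x)) A :=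
  hf.comp ((continuous_id.prodMk continuous_const).continuousOn) (fun τ hτ => ⟨hτ, hx⟩)

private lemma slice2 {f : ℝ × ℝ → ℝ} {A B : Set ℝ} (hf : ContinuousOn f (A ×ˢ B))
    {t : ℝ} (ht : t ∈ A) : ContinuousOn (fun ξ => f (t, ξ)) B :=
  hf.comp ((continuous_const.prodMk continuous_id).continuousOn) (fun ξ hξ => ⟨ht, hξ⟩)

private lemma restrict_prod_eq (s t : Set ℝ) :
    (volume.restrict s).prod (volume.restrict t)
      = (volume : Measure (ℝ × ℝ)).restrict (s ×ˢ t) := by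
  rw [Measure.prod_restrict, ← Measure.volume_eq_prod]

private lemma double_eq_set {F : ℝ → ℝ → ℝ} {a b c d : ℝ} (hab : a ≤ b) (hcd : c ≤ d)
    (hF : IntegrableOn (Function.uncurry F) (Ioc a b ×ˢ Ioc c d)) :
    ∫ τ in a..b, ∫ ξ in c..d, F τ ξ = ∫ p in Ioc a b ×ˢ Ioc c d, F p.1 p.2 := by
  simp only [intervalIntegral.integral_of_le hab, intervalIntegral.integral_of_le hcd]
  rw [← restrict_prod_eq]
  exact MeasureTheory.integral_integral
    (by rwa [restrict_prod_eq] : Integrable (Function.uncurry F) _)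

private lemma fubini_rect {F : ℝ → ℝ → ℝ} {a b c d : ℝ} (hab : a ≤ b) (hcd : c ≤ d)
    (hF : ContinuousOn (fun p : ℝ × ℝ => F p.1 p.2) (Icc a b ×ˢ Icc c d)) :
    ∫ τ in a..b, ∫ ξ in c..d, F τ ξ = ∫ ξ in c..d, ∫ τ in a..b, F τ ξ := by
  have hint : IntegrableOn (Function.uncurry F) (Ioc a b ×ˢ Ioc c d) :=
    (hF.integrableOn_compact (isCompact_Icc.prod isCompact_Icc)).mono_set
      (prod_mono Ioc_subset_Icc_self Ioc_subset_Icc_self)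
  simp only [intervalIntegral.integral_of_le hab, intervalIntegral.integral_of_le hcd]
  exact MeasureTheory.integral_integral_swap
    (by rwa [restrict_prod_eq] : Integrable (Function.uncurry F) _)

private lemma rect_not_pos {h : ℝ × ℝ → ℝ} {t₀ L : ℝ} (ht₀ : 0 < t₀) (hL : 0 < L)
    (hc : ContinuousOn h (Icc 0 t₀ ×ˢ Icc 0 L))
    (hz : ∀ t₁ t₂ x₁ x₂ : ℝ, 0 ≤ t₁ → t₁ ≤ t₂ → t₂ ≤ t₀ → 0 ≤ x₁ → x₁ ≤ x₂ → x₂ ≤ L →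
      (∫ p in Ioc t₁ t₂ ×ˢ Ioc x₁ x₂, h p) = 0)
    {p : ℝ × ℝ} (hp : p ∈ Icc (0:ℝ) t₀ ×ˢ Icc (0:ℝ) L) : ¬ 0 < h p := by
  intro hpos
  obtain ⟨δ, hδ, hball⟩ := (Metric.continuousWithinAt_iff.1 (hc p hp)) (h p / 2) (by linarith)
  obtain ⟨⟨hp10, hp1t⟩, ⟨hp20, hp2L⟩⟩ := hp
  set t₁ := max 0 (p.1 - δ/2) with ht₁def
  set t₂ := min t₀ (p.1 + δ/2) with ht₂def
  set x₁ := max 0 (p.2 - δ/2) with hx₁def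
  set x₂ := min L (p.2 + δ/2) with hx₂def
  have h0t₁ : 0 ≤ t₁ := le_max_left _ _
  have ht₂t₀ : t₂ ≤ t₀ := min_le_left _ _
  have h0x₁ : 0 ≤ x₁ := le_max_left _ _
  have hx₂L : x₂ ≤ L := min_le_left _ _
  have ht12 : t₁ < t₂ := by
    apply max_lt
    · exact lt_min ht₀ (by linarith)
    · exact lt_min (by linarith) (by linarith)
  have hx12 : x₁ < x₂ := by
    apply max_lt
    · exact lt_min hL (by linarith)
    · exact lt_min (by linarith) (by linarith)
  have hbound : ∀ q ∈ Ioc t₁ t₂ ×ˢ Ioc x₁ x₂, h p / 2 ≤ h q := by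
    rintro q ⟨hq1, hq2⟩
    have hq1a : |q.1 - p.1| ≤ δ/2 := by
      rw [abs_sub_le_iff]
      constructor
      · have := hq1.2; have : q.1 ≤ p.1 + δ/2 := le_trans hq1.2 (min_le_right _ _); linarith
      · have : p.1 - δ/2 ≤ q.1 := le_trans (le_max_right _ _) hq1.1.le; linarith
    have hq2a : |q.2 - p.2| ≤ δ/2 := by
      rw [abs_sub_le_iff]
      constructor
      · have : q.2 ≤ p.2 + δ/2 := le_trans hq2.2 (min_le_right _ _); linarith
      · have : p.2 - δ/2 ≤ q.2 := le_trans (le_max_right _ _) hq2.1.le; linarith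
    have hqR : q ∈ Icc (0:ℝ) t₀ ×ˢ Icc (0:ℝ) L :=
      ⟨⟨le_trans h0t₁ hq1.1.le, le_trans hq1.2 ht₂t₀⟩,
       ⟨le_trans h0x₁ hq2.1.le, le_trans hq2.2 hx₂L⟩⟩
    have hdist : dist q p < δ := by
      rw [Prod.dist_eq]
      refine max_lt ?_ ?_ <;> rw [Real.dist_eq] <;> linarith [hq1a, hq2a]
    have := hball hqR hdist
    rw [Real.dist_eq, abs_sub_lt_iff] at this
    linarith [this.2]
  have hmeas : MeasurableSet (Ioc t₁ t₂ ×ˢ Ioc x₁ x₂) :=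
    (measurableSet_Ioc.prod measurableSet_Ioc)
  have hvol : (volume (Ioc t₁ t₂ ×ˢ Ioc x₁ x₂)).toReal = (t₂ - t₁) * (x₂ - x₁) := by
    rw [Measure.volume_eq_prod, Measure.prod_prod, Real.volume_Ioc, Real.volume_Ioc,
      ENNReal.toReal_mul, ENNReal.toReal_ofReal (by linarith), ENNReal.toReal_ofReal (by linarith)]
  have hvolne : volume (Ioc t₁ t₂ ×ˢ Ioc x₁ x₂) ≠ ⊤ := by
    rw [Measure.volume_eq_prod, Measure.prod_prod, Real.volume_Ioc, Real.volume_Ioc]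
    exact ENNReal.mul_ne_top ENNReal.ofReal_ne_top ENNReal.ofReal_ne_top
  have hint : IntegrableOn h (Ioc t₁ t₂ ×ˢ Ioc x₁ x₂) :=
    (hc.integrableOn_compact (isCompact_Icc.prod isCompact_Icc)).mono_set
      (fun q hq => ⟨⟨le_trans h0t₁ hq.1.1.le, le_trans hq.1.2 ht₂t₀⟩,
        ⟨le_trans h0x₁ hq.2.1.le, le_trans hq.2.2 hx₂L⟩⟩)
  have hge := MeasureTheory.setIntegral_ge_of_const_le hmeas hvolne hbound hint
  rw [hz t₁ t₂ x₁ x₂ h0t₁ ht12.le ht₂t₀ h0x₁ hx12.le hx₂L, measureReal_def, hvol, smul_eq_mul] at hge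
  nlinarith [mul_pos (sub_pos.2 ht12) (sub_pos.2 hx12)]

private lemma rect_zero {h : ℝ × ℝ → ℝ} {t₀ L : ℝ} (ht₀ : 0 < t₀) (hL : 0 < L)
    (hc : ContinuousOn h (Icc 0 t₀ ×ˢ Icc 0 L))
    (hz : ∀ t₁ t₂ x₁ x₂ : ℝ, 0 ≤ t₁ → t₁ ≤ t₂ → t₂ ≤ t₀ → 0 ≤ x₁ → x₁ ≤ x₂ → x₂ ≤ L →
      (∫ p in Ioc t₁ t₂ ×ˢ Ioc x₁ x₂, h p) = 0)
    {p : ℝ × ℝ} (hp : p ∈ Icc (0:ℝ) t₀ ×ˢ Icc (0:ℝ) L) : h p = 0 := by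
  have h1 := rect_not_pos ht₀ hL hc hz hp
  have h2 := rect_not_pos ht₀ hL hc.neg
    (fun t₁ t₂ x₁ x₂ a b c d e f => by
      rw [MeasureTheory.integral_neg', hz t₁ t₂ x₁ x₂ a b c d e f, neg_zero]) hp
  simp only [Pi.neg_apply, neg_pos] at h2
  push_neg at h1 h2
  linarith

private lemma mixed_symm {t₀ L : ℝ} (ht₀ : 0 < t₀) (hL : 0 < L)
    {u ut ux utx uxt : ℝ → ℝ → ℝ}
    (hut : ∀ t ∈ Icc (0:ℝ) t₀, ∀ x ∈ Icc (0:ℝ) L,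
        HasDerivWithinAt (fun s => u s x) (ut t x) (Icc 0 t₀) t)
    (hux : ∀ t ∈ Icc (0:ℝ) t₀, ∀ x ∈ Icc (0:ℝ) L,
        HasDerivWithinAt (fun y => u t y) (ux t x) (Icc 0 L) x)
    (hutcont : ContinuousOn (fun p : ℝ × ℝ => ut p.1 p.2) (Icc 0 t₀ ×ˢ Icc 0 L))
    (huxcont : ContinuousOn (fun p : ℝ × ℝ => ux p.1 p.2) (Icc 0 t₀ ×ˢ Icc 0 L))
    (hutx : ∀ t ∈ Icc (0:ℝ) t₀, ∀ x ∈ Icc (0:ℝ) L,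
        HasDerivWithinAt (fun y => ut t y) (utx t x) (Icc 0 L) x)
    (huxt : ∀ t ∈ Icc (0:ℝ) t₀, ∀ x ∈ Icc (0:ℝ) L,
        HasDerivWithinAt (fun s => ux s x) (uxt t x) (Icc 0 t₀) t)
    (hutxcont : ContinuousOn (fun p : ℝ × ℝ => utx p.1 p.2) (Icc 0 t₀ ×ˢ Icc 0 L))
    (huxtcont : ContinuousOn (fun p : ℝ × ℝ => uxt p.1 p.2) (Icc 0 t₀ ×ˢ Icc 0 L)) :
    ∀ t ∈ Icc (0:ℝ) t₀, ∀ x ∈ Icc (0:ℝ) L, utx t x = uxt t x := by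
  intro t ht x hx
  have key : ∀ t₁ t₂ x₁ x₂ : ℝ, 0 ≤ t₁ → t₁ ≤ t₂ → t₂ ≤ t₀ → 0 ≤ x₁ → x₁ ≤ x₂ → x₂ ≤ L →
      (∫ p in Ioc t₁ t₂ ×ˢ Ioc x₁ x₂, (utx p.1 p.2 - uxt p.1 p.2)) = 0 := by
    intro t₁ t₂ x₁ x₂ h0t₁ ht12 ht₂ h0x₁ hx12 hx₂
    have hsubT : Icc t₁ t₂ ⊆ Icc (0:ℝ) t₀ := Icc_subset_Icc h0t₁ ht₂
    have hsubX : Icc x₁ x₂ ⊆ Icc (0:ℝ) L := Icc_subset_Icc h0x₁ hx₂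
    have hsubP : Ioc t₁ t₂ ×ˢ Ioc x₁ x₂ ⊆ Icc (0:ℝ) t₀ ×ˢ Icc (0:ℝ) L :=
      prod_mono (Ioc_subset_Icc_self.trans hsubT) (Ioc_subset_Icc_self.trans hsubX)
    have hx₁m : x₁ ∈ Icc (0:ℝ) L := ⟨h0x₁, le_trans hx12 hx₂⟩
    have hx₂m : x₂ ∈ Icc (0:ℝ) L := ⟨le_trans h0x₁ hx12, hx₂⟩
    have ht₁m : t₁ ∈ Icc (0:ℝ) t₀ := ⟨h0t₁, le_trans ht12 ht₂⟩
    have ht₂m : t₂ ∈ Icc (0:ℝ) t₀ := ⟨le_trans h0t₁ ht12, ht₂⟩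
    have hI1 : IntegrableOn (fun p : ℝ × ℝ => utx p.1 p.2) (Ioc t₁ t₂ ×ˢ Ioc x₁ x₂) :=
      (hutxcont.integrableOn_compact (isCompact_Icc.prod isCompact_Icc)).mono_set hsubP
    have hI2 : IntegrableOn (fun p : ℝ × ℝ => uxt p.1 p.2) (Ioc t₁ t₂ ×ˢ Ioc x₁ x₂) :=
      (huxtcont.integrableOn_compact (isCompact_Icc.prod isCompact_Icc)).mono_set hsubP
    have hA : (∫ p in Ioc t₁ t₂ ×ˢ Ioc x₁ x₂, utx p.1 p.2)
        = (u t₂ x₂ - u t₁ x₂) - (u t₂ x₁ - u t₁ x₁) := by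
      rw [← double_eq_set ht12 hx12 hI1]
      rw [intervalIntegral.integral_congr (g := fun τ => ut τ x₂ - ut τ x₁)
        (fun τ hτ => by
          have hτ' : τ ∈ Icc t₁ t₂ := by rwa [uIcc_of_le ht12] at hτ
          exact ftc_Icc hx12
            (fun ξ hξ => (hutx τ (hsubT hτ') ξ (hsubX hξ)).mono hsubX)
            ((slice2 hutxcont (hsubT hτ')).mono hsubX))]
      rw [intervalIntegral.integral_sub
        (contOn_ii ht12 ((slice1 hutcont hx₂m).mono hsubT))
        (contOn_ii ht12 ((slice1 hutcont hx₁m).mono hsubT))]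
      rw [ftc_Icc ht12 (fun τ hτ => (hut τ (hsubT hτ) x₂ hx₂m).mono hsubT)
        ((slice1 hutcont hx₂m).mono hsubT)]
      rw [ftc_Icc ht12 (fun τ hτ => (hut τ (hsubT hτ) x₁ hx₁m).mono hsubT)
        ((slice1 hutcont hx₁m).mono hsubT)]
    have hB : (∫ p in Ioc t₁ t₂ ×ˢ Ioc x₁ x₂, uxt p.1 p.2)
        = (u t₂ x₂ - u t₂ x₁) - (u t₁ x₂ - u t₁ x₁) := by
      rw [← double_eq_set ht12 hx12 hI2]
      rw [fubini_rect ht12 hx12 (huxtcont.mono (prod_mono hsubT hsubX))]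
      rw [intervalIntegral.integral_congr (g := fun ξ => ux t₂ ξ - ux t₁ ξ)
        (fun ξ hξ => by
          have hξ' : ξ ∈ Icc x₁ x₂ := by rwa [uIcc_of_le hx12] at hξ
          exact ftc_Icc ht12
            (fun τ hτ => (huxt τ (hsubT hτ) ξ (hsubX hξ')).mono hsubT)
            ((slice1 huxtcont (hsubX hξ')).mono hsubT))]
      rw [intervalIntegral.integral_sub
        (contOn_ii hx12 ((slice2 huxcont ht₂m).mono hsubX))
        (contOn_ii hx12 ((slice2 huxcont ht₁m).mono hsubX))]
      rw [ftc_Icc hx12 (fun ξ hξ => (hux t₂ ht₂m ξ (hsubX hξ)).mono hsubX)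
        ((slice2 huxcont ht₂m).mono hsubX)]
      rw [ftc_Icc hx12 (fun ξ hξ => (hux t₁ ht₁m ξ (hsubX hξ)).mono hsubX)
        ((slice2 huxcont ht₁m).mono hsubX)]
    rw [MeasureTheory.integral_sub hI1 hI2, hA, hB]
    ring
  have hzero := rect_zero ht₀ hL (hutxcont.sub huxtcont) key (p := (t, x)) ⟨ht, hx⟩
  simpa [sub_eq_zero] using hzero

set_option maxHeartbeats 1000000


/-- Energy identity for `∂ₜu + v⁰ ∂ₓu + Q(t) = 0` with
`v⁰ ∈ C¹([0,t₀] × [0,L])` (partials `v0t`, `v0x`), `Q` continuous, and `u` twice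
continuously differentiable (first partials `ut`, `ux`, second partials `utt`, `utx`,
`uxt`, `uxx`, all continuous).  Writing `S = ∂ₓu = ux`, for every `(t,x)`:
`½∫₀ˣ(u²+S²)(t,ξ)dξ + ½∫₀ᵗ v⁰(τ,x)(u²+S²)(τ,x)dτ
 + ½∫₀ᵗ∫₀ˣ ∂ₓv⁰ (S²−u²) dξdτ + ∫₀ᵗ∫₀ˣ Q u dξdτ
 = ½∫₀ˣ(u²+S²)(0,ξ)dξ + ½∫₀ᵗ v⁰(τ,0)(u²+S²)(τ,0)dτ`. -/
theorem statement11
    (t₀ L : ℝ) (ht₀ : 0 < t₀) (hL : 0 < L)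
    (Q : ℝ → ℝ) (v0 v0t v0x u ut ux utt utx uxt uxx : ℝ → ℝ → ℝ)
    (hQcont : ContinuousOn Q (Icc 0 t₀))
    -- `v⁰ ∈ C¹([0,t₀] × [0,L])`
    (hv0cont : ContinuousOn (fun p : ℝ × ℝ => v0 p.1 p.2) (Icc 0 t₀ ×ˢ Icc 0 L))
    (hv0t : ∀ t ∈ Icc (0:ℝ) t₀, ∀ x ∈ Icc (0:ℝ) L,
        HasDerivWithinAt (fun s => v0 s x) (v0t t x) (Icc 0 t₀) t)
    (hv0x : ∀ t ∈ Icc (0:ℝ) t₀, ∀ x ∈ Icc (0:ℝ) L,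
        HasDerivWithinAt (fun y => v0 t y) (v0x t x) (Icc 0 L) x)
    (hv0tcont : ContinuousOn (fun p : ℝ × ℝ => v0t p.1 p.2) (Icc 0 t₀ ×ˢ Icc 0 L))
    (hv0xcont : ContinuousOn (fun p : ℝ × ℝ => v0x p.1 p.2) (Icc 0 t₀ ×ˢ Icc 0 L))
    -- `u` twice continuously differentiable on `[0,t₀] × [0,L]`
    (hucont : ContinuousOn (fun p : ℝ × ℝ => u p.1 p.2) (Icc 0 t₀ ×ˢ Icc 0 L))
    (hut : ∀ t ∈ Icc (0:ℝ) t₀, ∀ x ∈ Icc (0:ℝ) L,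
        HasDerivWithinAt (fun s => u s x) (ut t x) (Icc 0 t₀) t)
    (hux : ∀ t ∈ Icc (0:ℝ) t₀, ∀ x ∈ Icc (0:ℝ) L,
        HasDerivWithinAt (fun y => u t y) (ux t x) (Icc 0 L) x)
    (hutcont : ContinuousOn (fun p : ℝ × ℝ => ut p.1 p.2) (Icc 0 t₀ ×ˢ Icc 0 L))
    (huxcont : ContinuousOn (fun p : ℝ × ℝ => ux p.1 p.2) (Icc 0 t₀ ×ˢ Icc 0 L))
    (hutt : ∀ t ∈ Icc (0:ℝ) t₀, ∀ x ∈ Icc (0:ℝ) L,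
        HasDerivWithinAt (fun s => ut s x) (utt t x) (Icc 0 t₀) t)
    (hutx : ∀ t ∈ Icc (0:ℝ) t₀, ∀ x ∈ Icc (0:ℝ) L,
        HasDerivWithinAt (fun y => ut t y) (utx t x) (Icc 0 L) x)
    (huxt : ∀ t ∈ Icc (0:ℝ) t₀, ∀ x ∈ Icc (0:ℝ) L,
        HasDerivWithinAt (fun s => ux s x) (uxt t x) (Icc 0 t₀) t)
    (huxx : ∀ t ∈ Icc (0:ℝ) t₀, ∀ x ∈ Icc (0:ℝ) L,
        HasDerivWithinAt (fun y => ux t y) (uxx t x) (Icc 0 L) x)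
    (huttcont : ContinuousOn (fun p : ℝ × ℝ => utt p.1 p.2) (Icc 0 t₀ ×ˢ Icc 0 L))
    (hutxcont : ContinuousOn (fun p : ℝ × ℝ => utx p.1 p.2) (Icc 0 t₀ ×ˢ Icc 0 L))
    (huxtcont : ContinuousOn (fun p : ℝ × ℝ => uxt p.1 p.2) (Icc 0 t₀ ×ˢ Icc 0 L))
    (huxxcont : ContinuousOn (fun p : ℝ × ℝ => uxx p.1 p.2) (Icc 0 t₀ ×ˢ Icc 0 L))
    -- the equation `∂ₜu + v⁰ ∂ₓu + Q(t) = 0` on `[0,t₀] × [0,L]`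
    (heq : ∀ t ∈ Icc (0:ℝ) t₀, ∀ x ∈ Icc (0:ℝ) L,
        ut t x + v0 t x * ux t x + Q t = 0) :
    ∀ t ∈ Icc (0:ℝ) t₀, ∀ x ∈ Icc (0:ℝ) L,
      (1/2) * (∫ ξ in (0:ℝ)..x, (u t ξ ^ 2 + ux t ξ ^ 2))
        + (1/2) * (∫ τ in (0:ℝ)..t, v0 τ x * (u τ x ^ 2 + ux τ x ^ 2))
        + (1/2) * (∫ τ in (0:ℝ)..t, ∫ ξ in (0:ℝ)..x,
            v0x τ ξ * (ux τ ξ ^ 2 - u τ ξ ^ 2))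
        + (∫ τ in (0:ℝ)..t, ∫ ξ in (0:ℝ)..x, Q τ * u τ ξ)
      = (1/2) * (∫ ξ in (0:ℝ)..x, (u 0 ξ ^ 2 + ux 0 ξ ^ 2))
        + (1/2) * (∫ τ in (0:ℝ)..t, v0 τ 0 * (u τ 0 ^ 2 + ux τ 0 ^ 2)) := by
  have schwarz := mixed_symm ht₀ hL hut hux hutcont huxcont hutx huxt hutxcont huxtcont
  have pde2 : ∀ τ ∈ Icc (0:ℝ) t₀, ∀ ξ ∈ Icc (0:ℝ) L,
      uxt τ ξ + v0x τ ξ * ux τ ξ + v0 τ ξ * uxx τ ξ = 0 := by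
    intro τ hτ ξ hξ
    have hd1 := hutx τ hτ ξ hξ
    have hd2 : HasDerivWithinAt (fun y => -(v0 τ y * ux τ y + Q τ))
        (-(v0x τ ξ * ux τ ξ + v0 τ ξ * uxx τ ξ)) (Icc 0 L) ξ := by
      exact (((hv0x τ hτ ξ hξ).mul (huxx τ hτ ξ hξ)).add_const (Q τ)).neg
    have hd2' : HasDerivWithinAt (fun y => ut τ y)
        (-(v0x τ ξ * ux τ ξ + v0 τ ξ * uxx τ ξ)) (Icc 0 L) ξ :=
      hd2.congr (fun y hy => by have := heq τ hτ y hy; linarith)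
        (by have := heq τ hτ ξ hξ; linarith)
    have huniq := (uniqueDiffOn_Icc hL ξ hξ).eq_deriv _ hd1 hd2'
    have hs := schwarz τ hτ ξ hξ
    rw [← hs]
    linarith [huniq]
  -- joint continuity of Q ∘ fst
  have hQc : ContinuousOn (fun p : ℝ × ℝ => Q p.1) (Icc 0 t₀ ×ˢ Icc 0 L) :=
    hQcont.comp continuous_fst.continuousOn (fun p hp => hp.1)
  -- joint continuity of the four integrands
  have hAcont : ContinuousOn
      (fun p : ℝ × ℝ => u p.1 p.2 * ut p.1 p.2 + ux p.1 p.2 * uxt p.1 p.2)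
      (Icc 0 t₀ ×ˢ Icc 0 L) := (hucont.mul hutcont).add (huxcont.mul huxtcont)
  have hBcont : ContinuousOn
      (fun p : ℝ × ℝ => (1/2) * (v0x p.1 p.2 * (u p.1 p.2 ^ 2 + ux p.1 p.2 ^ 2))
        + v0 p.1 p.2 * (u p.1 p.2 * ux p.1 p.2 + ux p.1 p.2 * uxx p.1 p.2))
      (Icc 0 t₀ ×ˢ Icc 0 L) :=
    (continuousOn_const.mul (hv0xcont.mul ((hucont.pow 2).add (huxcont.pow 2)))).add
      (hv0cont.mul ((hucont.mul huxcont).add (huxcont.mul huxxcont)))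
  have hCcont : ContinuousOn
      (fun p : ℝ × ℝ => (1/2) * (v0x p.1 p.2 * (ux p.1 p.2 ^ 2 - u p.1 p.2 ^ 2)))
      (Icc 0 t₀ ×ˢ Icc 0 L) :=
    continuousOn_const.mul (hv0xcont.mul ((huxcont.pow 2).sub (hucont.pow 2)))
  have hDcont : ContinuousOn (fun p : ℝ × ℝ => Q p.1 * u p.1 p.2)
      (Icc 0 t₀ ×ˢ Icc 0 L) := hQc.mul hucont
  intro t ht x hx
  have h0t : (0:ℝ) ≤ t := ht.1
  have h0x : (0:ℝ) ≤ x := hx.1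
  have hsubT : Icc (0:ℝ) t ⊆ Icc 0 t₀ := Icc_subset_Icc le_rfl ht.2
  have hsubX : Icc (0:ℝ) x ⊆ Icc 0 L := Icc_subset_Icc le_rfl hx.2
  have hRsub : Icc (0:ℝ) t ×ˢ Icc (0:ℝ) x ⊆ Icc (0:ℝ) t₀ ×ˢ Icc (0:ℝ) L :=
    prod_mono hsubT hsubX
  have hIocsub : Ioc (0:ℝ) t ×ˢ Ioc (0:ℝ) x ⊆ Icc (0:ℝ) t₀ ×ˢ Icc (0:ℝ) L :=
    (prod_mono Ioc_subset_Icc_self Ioc_subset_Icc_self).trans hRsub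
  have hcompact : IsCompact (Icc (0:ℝ) t₀ ×ˢ Icc (0:ℝ) L) := isCompact_Icc.prod isCompact_Icc
  -- integrability of the four integrands on the open rectangle
  have iA : IntegrableOn
      (fun p : ℝ × ℝ => u p.1 p.2 * ut p.1 p.2 + ux p.1 p.2 * uxt p.1 p.2)
      (Ioc (0:ℝ) t ×ˢ Ioc (0:ℝ) x) :=
    (hAcont.integrableOn_compact hcompact).mono_set hIocsub
  have iB : IntegrableOn
      (fun p : ℝ × ℝ => (1/2) * (v0x p.1 p.2 * (u p.1 p.2 ^ 2 + ux p.1 p.2 ^ 2))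
        + v0 p.1 p.2 * (u p.1 p.2 * ux p.1 p.2 + ux p.1 p.2 * uxx p.1 p.2))
      (Ioc (0:ℝ) t ×ˢ Ioc (0:ℝ) x) :=
    (hBcont.integrableOn_compact hcompact).mono_set hIocsub
  have iC : IntegrableOn
      (fun p : ℝ × ℝ => (1/2) * (v0x p.1 p.2 * (ux p.1 p.2 ^ 2 - u p.1 p.2 ^ 2)))
      (Ioc (0:ℝ) t ×ˢ Ioc (0:ℝ) x) :=
    (hCcont.integrableOn_compact hcompact).mono_set hIocsub
  have iD : IntegrableOn (fun p : ℝ × ℝ => Q p.1 * u p.1 p.2)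
      (Ioc (0:ℝ) t ×ˢ Ioc (0:ℝ) x) :=
    (hDcont.integrableOn_compact hcompact).mono_set hIocsub
  -- Key 1 : FTC in time, integrated in space
  have key1 : (∫ τ in (0:ℝ)..t, ∫ ξ in (0:ℝ)..x,
        (u τ ξ * ut τ ξ + ux τ ξ * uxt τ ξ))
      = (1/2) * (∫ ξ in (0:ℝ)..x, (u t ξ ^ 2 + ux t ξ ^ 2))
        - (1/2) * (∫ ξ in (0:ℝ)..x, (u 0 ξ ^ 2 + ux 0 ξ ^ 2)) := by
    rw [fubini_rect h0t h0x (hAcont.mono hRsub)]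
    rw [intervalIntegral.integral_congr
      (g := fun ξ => (1/2) * (u t ξ ^ 2 + ux t ξ ^ 2)
        - (1/2) * (u 0 ξ ^ 2 + ux 0 ξ ^ 2))
      (fun ξ hξ => by
        have hξ' : ξ ∈ Icc (0:ℝ) x := by rwa [uIcc_of_le h0x] at hξ
        have hξL : ξ ∈ Icc (0:ℝ) L := hsubX hξ'
        refine ftc_Icc (f := fun τ => (1/2) * (u τ ξ ^ 2 + ux τ ξ ^ 2)) h0t
          (fun τ hτ => ?_) ((slice1 hAcont hξL).mono hsubT)
        have h1 := (hut τ (hsubT hτ) ξ hξL).mono hsubT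
        have h2 := (huxt τ (hsubT hτ) ξ hξL).mono hsubT
        have h := ((h1.fun_pow 2).fun_add (h2.fun_pow 2)).const_mul (1/2 : ℝ)
        refine h.congr_deriv ?_
        push_cast
        ring)]
    rw [intervalIntegral.integral_sub (f := fun ξ => (1/2) * (u t ξ ^ 2 + ux t ξ ^ 2))
      (g := fun ξ => (1/2) * (u 0 ξ ^ 2 + ux 0 ξ ^ 2))
      (contOn_ii h0x (continuousOn_const.mul
        ((((slice2 hucont ht).pow 2).add ((slice2 huxcont ht).pow 2)).mono hsubX)))
      (contOn_ii h0x (continuousOn_const.mul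
        ((((slice2 hucont (left_mem_Icc.2 ht₀.le)).pow 2).add
          ((slice2 huxcont (left_mem_Icc.2 ht₀.le)).pow 2)).mono hsubX)))]
    rw [intervalIntegral.integral_const_mul, intervalIntegral.integral_const_mul]
  -- Key 2 : FTC in space, integrated in time
  have key2 : (∫ τ in (0:ℝ)..t, ∫ ξ in (0:ℝ)..x,
        ((1/2) * (v0x τ ξ * (u τ ξ ^ 2 + ux τ ξ ^ 2))
          + v0 τ ξ * (u τ ξ * ux τ ξ + ux τ ξ * uxx τ ξ)))
      = (1/2) * (∫ τ in (0:ℝ)..t, v0 τ x * (u τ x ^ 2 + ux τ x ^ 2))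
        - (1/2) * (∫ τ in (0:ℝ)..t, v0 τ 0 * (u τ 0 ^ 2 + ux τ 0 ^ 2)) := by
    rw [intervalIntegral.integral_congr
      (g := fun τ => (1/2) * (v0 τ x * (u τ x ^ 2 + ux τ x ^ 2))
        - (1/2) * (v0 τ 0 * (u τ 0 ^ 2 + ux τ 0 ^ 2)))
      (fun τ hτ => by
        have hτ' : τ ∈ Icc (0:ℝ) t := by rwa [uIcc_of_le h0t] at hτ
        have hτT : τ ∈ Icc (0:ℝ) t₀ := hsubT hτ'
        refine ftc_Icc (f := fun ξ => (1/2) * (v0 τ ξ * (u τ ξ ^ 2 + ux τ ξ ^ 2))) h0x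
          (fun ξ hξ => ?_) ((slice2 hBcont hτT).mono hsubX)
        have hξL : ξ ∈ Icc (0:ℝ) L := hsubX hξ
        have hv := (hv0x τ hτT ξ hξL).mono hsubX
        have h1 := (hux τ hτT ξ hξL).mono hsubX
        have h2 := (huxx τ hτT ξ hξL).mono hsubX
        have h := (hv.fun_mul ((h1.fun_pow 2).fun_add (h2.fun_pow 2))).const_mul (1/2 : ℝ)
        refine h.congr_deriv ?_
        push_cast
        ring)]
    rw [intervalIntegral.integral_sub (f := fun τ => (1/2) * (v0 τ x * (u τ x ^ 2 + ux τ x ^ 2)))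
      (g := fun τ => (1/2) * (v0 τ 0 * (u τ 0 ^ 2 + ux τ 0 ^ 2)))
      (contOn_ii h0t ((continuousOn_const.mul ((slice1 hv0cont (hsubX (right_mem_Icc.2 h0x))).mul
        (((slice1 hucont (hsubX (right_mem_Icc.2 h0x))).pow 2).add
          ((slice1 huxcont (hsubX (right_mem_Icc.2 h0x))).pow 2)))).mono hsubT))
      (contOn_ii h0t ((continuousOn_const.mul ((slice1 hv0cont (left_mem_Icc.2 hL.le)).mul
        (((slice1 hucont (left_mem_Icc.2 hL.le)).pow 2).add
          ((slice1 huxcont (left_mem_Icc.2 hL.le)).pow 2)))).mono hsubT))]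
    rw [intervalIntegral.integral_const_mul, intervalIntegral.integral_const_mul]
  -- sum of the four double integrals vanishes
  have hz4 : (∫ p in Ioc (0:ℝ) t ×ˢ Ioc (0:ℝ) x,
        (u p.1 p.2 * ut p.1 p.2 + ux p.1 p.2 * uxt p.1 p.2))
      + (∫ p in Ioc (0:ℝ) t ×ˢ Ioc (0:ℝ) x,
        ((1/2) * (v0x p.1 p.2 * (u p.1 p.2 ^ 2 + ux p.1 p.2 ^ 2))
          + v0 p.1 p.2 * (u p.1 p.2 * ux p.1 p.2 + ux p.1 p.2 * uxx p.1 p.2)))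
      + (∫ p in Ioc (0:ℝ) t ×ˢ Ioc (0:ℝ) x,
        ((1/2) * (v0x p.1 p.2 * (ux p.1 p.2 ^ 2 - u p.1 p.2 ^ 2))))
      + (∫ p in Ioc (0:ℝ) t ×ˢ Ioc (0:ℝ) x, Q p.1 * u p.1 p.2) = 0 := by
    have hsum : (∫ p in Ioc (0:ℝ) t ×ˢ Ioc (0:ℝ) x,
          ((u p.1 p.2 * ut p.1 p.2 + ux p.1 p.2 * uxt p.1 p.2)
            + ((1/2) * (v0x p.1 p.2 * (u p.1 p.2 ^ 2 + ux p.1 p.2 ^ 2))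
              + v0 p.1 p.2 * (u p.1 p.2 * ux p.1 p.2 + ux p.1 p.2 * uxx p.1 p.2))
            + ((1/2) * (v0x p.1 p.2 * (ux p.1 p.2 ^ 2 - u p.1 p.2 ^ 2)))
            + Q p.1 * u p.1 p.2))
        = (∫ p in Ioc (0:ℝ) t ×ˢ Ioc (0:ℝ) x,
            (u p.1 p.2 * ut p.1 p.2 + ux p.1 p.2 * uxt p.1 p.2))
          + (∫ p in Ioc (0:ℝ) t ×ˢ Ioc (0:ℝ) x,
            ((1/2) * (v0x p.1 p.2 * (u p.1 p.2 ^ 2 + ux p.1 p.2 ^ 2))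
              + v0 p.1 p.2 * (u p.1 p.2 * ux p.1 p.2 + ux p.1 p.2 * uxx p.1 p.2)))
          + (∫ p in Ioc (0:ℝ) t ×ˢ Ioc (0:ℝ) x,
            ((1/2) * (v0x p.1 p.2 * (ux p.1 p.2 ^ 2 - u p.1 p.2 ^ 2))))
          + (∫ p in Ioc (0:ℝ) t ×ˢ Ioc (0:ℝ) x, Q p.1 * u p.1 p.2) := by
      have iAB : IntegrableOn (fun p : ℝ × ℝ =>
          (u p.1 p.2 * ut p.1 p.2 + ux p.1 p.2 * uxt p.1 p.2)
            + ((1/2) * (v0x p.1 p.2 * (u p.1 p.2 ^ 2 + ux p.1 p.2 ^ 2))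
              + v0 p.1 p.2 * (u p.1 p.2 * ux p.1 p.2 + ux p.1 p.2 * uxx p.1 p.2)))
          (Ioc (0:ℝ) t ×ˢ Ioc (0:ℝ) x) := iA.add iB
      have iABC : IntegrableOn (fun p : ℝ × ℝ =>
          (u p.1 p.2 * ut p.1 p.2 + ux p.1 p.2 * uxt p.1 p.2)
            + ((1/2) * (v0x p.1 p.2 * (u p.1 p.2 ^ 2 + ux p.1 p.2 ^ 2))
              + v0 p.1 p.2 * (u p.1 p.2 * ux p.1 p.2 + ux p.1 p.2 * uxx p.1 p.2))
            + ((1/2) * (v0x p.1 p.2 * (ux p.1 p.2 ^ 2 - u p.1 p.2 ^ 2))))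
          (Ioc (0:ℝ) t ×ˢ Ioc (0:ℝ) x) := iAB.add iC
      rw [MeasureTheory.integral_add iABC iD,
        MeasureTheory.integral_add iAB iC,
        MeasureTheory.integral_add iA iB]
    rw [← hsum]
    rw [MeasureTheory.setIntegral_congr_fun (measurableSet_Ioc.prod measurableSet_Ioc)
      (g := fun _ => (0:ℝ)) (fun p hp => by
        have hpR := hIocsub hp
        have h1 := heq p.1 hpR.1 p.2 hpR.2
        have h2 := pde2 p.1 hpR.1 p.2 hpR.2
        have hval : u p.1 p.2 * ut p.1 p.2 + ux p.1 p.2 * uxt p.1 p.2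
            + ((1/2) * (v0x p.1 p.2 * (u p.1 p.2 ^ 2 + ux p.1 p.2 ^ 2))
              + v0 p.1 p.2 * (u p.1 p.2 * ux p.1 p.2 + ux p.1 p.2 * uxx p.1 p.2))
            + (1/2) * (v0x p.1 p.2 * (ux p.1 p.2 ^ 2 - u p.1 p.2 ^ 2))
            + Q p.1 * u p.1 p.2 = 0 := by
          linear_combination (u p.1 p.2) * h1 + (ux p.1 p.2) * h2
        exact hval)]
    simp
  -- rewrite the set integrals as iterated interval integrals
  have eA : (∫ τ in (0:ℝ)..t, ∫ ξ in (0:ℝ)..x,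
        (u τ ξ * ut τ ξ + ux τ ξ * uxt τ ξ))
      = ∫ p in Ioc (0:ℝ) t ×ˢ Ioc (0:ℝ) x,
        (u p.1 p.2 * ut p.1 p.2 + ux p.1 p.2 * uxt p.1 p.2) :=
    double_eq_set h0t h0x iA
  have eB : (∫ τ in (0:ℝ)..t, ∫ ξ in (0:ℝ)..x,
        ((1/2) * (v0x τ ξ * (u τ ξ ^ 2 + ux τ ξ ^ 2))
          + v0 τ ξ * (u τ ξ * ux τ ξ + ux τ ξ * uxx τ ξ)))
      = ∫ p in Ioc (0:ℝ) t ×ˢ Ioc (0:ℝ) x,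
        ((1/2) * (v0x p.1 p.2 * (u p.1 p.2 ^ 2 + ux p.1 p.2 ^ 2))
          + v0 p.1 p.2 * (u p.1 p.2 * ux p.1 p.2 + ux p.1 p.2 * uxx p.1 p.2)) :=
    double_eq_set h0t h0x iB
  have eC : (∫ τ in (0:ℝ)..t, ∫ ξ in (0:ℝ)..x,
        ((1/2) * (v0x τ ξ * (ux τ ξ ^ 2 - u τ ξ ^ 2))))
      = ∫ p in Ioc (0:ℝ) t ×ˢ Ioc (0:ℝ) x,
        ((1/2) * (v0x p.1 p.2 * (ux p.1 p.2 ^ 2 - u p.1 p.2 ^ 2))) :=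
    double_eq_set h0t h0x iC
  have eD : (∫ τ in (0:ℝ)..t, ∫ ξ in (0:ℝ)..x, Q τ * u τ ξ)
      = ∫ p in Ioc (0:ℝ) t ×ˢ Ioc (0:ℝ) x, Q p.1 * u p.1 p.2 :=
    double_eq_set h0t h0x iD
  rw [← eA, ← eB, ← eC, ← eD] at hz4
  have hCsplit : (∫ τ in (0:ℝ)..t, ∫ ξ in (0:ℝ)..x,
        ((1/2) * (v0x τ ξ * (ux τ ξ ^ 2 - u τ ξ ^ 2))))
      = (1/2) * (∫ τ in (0:ℝ)..t, ∫ ξ in (0:ℝ)..x,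
        (v0x τ ξ * (ux τ ξ ^ 2 - u τ ξ ^ 2))) := by
    simp only [intervalIntegral.integral_const_mul]
  rw [hCsplit] at hz4
  linarith [key1, key2, hz4]
end

section
/- Let t₀, L > 0, let v : [0,t₀] × [0,L] → ℝ be continuous with v(t,x) > 0 everywhere, let F : [0,t₀] × [0,L] → ℝ be continuous, and let y ∈ C¹([0,t₀] × [0,L]) satisfy ∂ₜy + v ∂ₓy + F y = 0 on (0,t₀) × (0,L). Let M ≥ 0 be such that |y(0,x)| ≤ M for all x ∈ [0,L] and |y(t,0)| ≤ M for all t ∈ [0,t₀]. Then |y(t,x)| ≤ M · exp(∫₀^{t₀} max_{ξ∈[0,L]} |F(τ,ξ)| dτ) for all (t,x) ∈ [0,t₀] × [0,L]. -/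
open Set intervalIntegral Filter Topology

lemma aux_endpoint_deriv_nonneg {f : ℝ → ℝ} {d a b : ℝ} (hab : a < b)
    (hf : HasDerivWithinAt f d (Icc a b) b) (hmax : ∀ x ∈ Icc a b, f x ≤ f b) : 0 ≤ d := by
  have h1 : Tendsto (slope f b) (𝓝[Icc a b \ {b}] b) (𝓝 d) :=
    hasDerivWithinAt_iff_tendsto_slope.1 hf
  have hne : (𝓝[Icc a b \ {b}] b).NeBot := by
    have h2 : (𝓝[Ico a b] b).NeBot := by
      rw [← mem_closure_iff_nhdsWithin_neBot, closure_Ico hab.ne]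
      exact ⟨hab.le, le_rfl⟩
    exact h2.mono (nhdsWithin_mono _ (fun x hx => ⟨⟨hx.1, hx.2.le⟩, hx.2.ne⟩))
  refine ge_of_tendsto h1 ?_
  filter_upwards [self_mem_nhdsWithin] with x hx
  obtain ⟨hxI, hxb⟩ := hx
  have hxlt : x < b := lt_of_le_of_ne hxI.2 hxb
  rw [slope_def_field]
  exact div_nonneg_of_nonpos (by linarith [hmax x hxI]) (by linarith)

set_option maxHeartbeats 1600000 in
/-- Barrier/comparison estimate for the transport equation with a
zero-order term: if `v > 0` is continuous, `F` is continuous, `y ∈ C¹([0,t₀] × [0,L])`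
(partial derivatives `yt`, `yx`, continuous on the rectangle) satisfies
`∂ₜy + v ∂ₓy + F y = 0` on `(0,t₀) × (0,L)`, and `|y| ≤ M` on `{t = 0}` and `{x = 0}`,
then `|y(t,x)| ≤ M exp(∫₀^{t₀} max_{ξ ∈ [0,L]} |F(τ,ξ)| dτ)` on `[0,t₀] × [0,L]`. -/
theorem statement12
    (t₀ L : ℝ) (ht₀ : 0 < t₀) (hL : 0 < L)
    (v F y yt yx : ℝ → ℝ → ℝ) (M : ℝ) (hM : 0 ≤ M)
    (hvcont : ContinuousOn (fun p : ℝ × ℝ => v p.1 p.2) (Icc 0 t₀ ×ˢ Icc 0 L))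
    (hvpos : ∀ t ∈ Icc (0:ℝ) t₀, ∀ x ∈ Icc (0:ℝ) L, 0 < v t x)
    (hFcont : ContinuousOn (fun p : ℝ × ℝ => F p.1 p.2) (Icc 0 t₀ ×ˢ Icc 0 L))
    (hycont : ContinuousOn (fun p : ℝ × ℝ => y p.1 p.2) (Icc 0 t₀ ×ˢ Icc 0 L))
    (hytcont : ContinuousOn (fun p : ℝ × ℝ => yt p.1 p.2) (Icc 0 t₀ ×ˢ Icc 0 L))
    (hyxcont : ContinuousOn (fun p : ℝ × ℝ => yx p.1 p.2) (Icc 0 t₀ ×ˢ Icc 0 L))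
    (hyt : ∀ t ∈ Icc (0:ℝ) t₀, ∀ x ∈ Icc (0:ℝ) L,
        HasDerivWithinAt (fun s => y s x) (yt t x) (Icc 0 t₀) t)
    (hyx : ∀ t ∈ Icc (0:ℝ) t₀, ∀ x ∈ Icc (0:ℝ) L,
        HasDerivWithinAt (fun ξ => y t ξ) (yx t x) (Icc 0 L) x)
    (heq : ∀ t ∈ Ioo (0:ℝ) t₀, ∀ x ∈ Ioo (0:ℝ) L,
        yt t x + v t x * yx t x + F t x * y t x = 0)
    (hinit : ∀ x ∈ Icc (0:ℝ) L, |y 0 x| ≤ M)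
    (hbdry : ∀ t ∈ Icc (0:ℝ) t₀, |y t 0| ≤ M) :
    ∀ t ∈ Icc (0:ℝ) t₀, ∀ x ∈ Icc (0:ℝ) L,
      |y t x| ≤ M * Real.exp (∫ τ in (0:ℝ)..t₀, sSup ((fun ξ => |F τ ξ|) '' Icc (0:ℝ) L)) := by
  set g : ℝ → ℝ := fun τ => sSup ((fun ξ => |F τ ξ|) '' Icc (0:ℝ) L) with hg_def
  -- slice continuity
  have hslice : ∀ t ∈ Icc (0:ℝ) t₀, ContinuousOn (fun ξ => |F t ξ|) (Icc 0 L) := by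
    intro t ht
    exact (hFcont.comp ((continuous_const.prodMk continuous_id).continuousOn)
      (fun ξ hξ => mk_mem_prod ht hξ)).abs
  have hne : ∀ t : ℝ, ((fun ξ => |F t ξ|) '' Icc (0:ℝ) L).Nonempty :=
    fun t => (nonempty_Icc.2 hL.le).image _
  have hbdd : ∀ t ∈ Icc (0:ℝ) t₀, BddAbove ((fun ξ => |F t ξ|) '' Icc (0:ℝ) L) :=
    fun t ht => (isCompact_Icc.image_of_continuousOn (hslice t ht)).bddAbove
  have hgle : ∀ t ∈ Icc (0:ℝ) t₀, ∀ x ∈ Icc (0:ℝ) L, |F t x| ≤ g t :=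
    fun t ht x hx => le_csSup (hbdd t ht) (mem_image_of_mem _ hx)
  have hg0 : ∀ t ∈ Icc (0:ℝ) t₀, 0 ≤ g t :=
    fun t ht => le_trans (abs_nonneg _) (hgle t ht 0 ⟨le_rfl, hL.le⟩)
  -- continuity of g
  have hK : IsCompact (Icc (0:ℝ) t₀ ×ˢ Icc (0:ℝ) L) := isCompact_Icc.prod isCompact_Icc
  have hUC := hK.uniformContinuousOn_of_continuous hFcont.abs
  have hgcont : ContinuousOn g (Icc 0 t₀) := by
    rw [Metric.continuousOn_iff]
    intro a ha ε hε
    obtain ⟨δ, hδ, hδ'⟩ := Metric.uniformContinuousOn_iff.1 hUC (ε / 2) (half_pos hε)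
    refine ⟨δ, hδ, fun b hb hab => ?_⟩
    have key : ∀ s ∈ Icc (0:ℝ) t₀, ∀ r ∈ Icc (0:ℝ) t₀, dist s r < δ → g s ≤ g r + ε / 2 := by
      intro s hs r hr hsr
      refine csSup_le (hne s) ?_
      rintro z ⟨x, hx, rfl⟩
      have hd : dist ((s, x) : ℝ × ℝ) (r, x) < δ := by
        rw [Prod.dist_eq]
        simpa [dist_self] using max_lt hsr hδ
      have := hδ' (s, x) (mk_mem_prod hs hx) (r, x) (mk_mem_prod hr hx) hd
      rw [Real.dist_eq, abs_sub_lt_iff] at this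
      have h2 := hgle r hr x hx
      simp only at this ⊢
      linarith [this.1]
    have h1 := key b hb a ha hab
    have h2 := key a ha b hb (by rwa [dist_comm])
    rw [Real.dist_eq, abs_sub_lt_iff]
    constructor <;> linarith
  -- continuous extension h of g
  set c : ℝ → ℝ := fun s => max 0 (min s t₀) with hc_def
  have hcmem : ∀ s, c s ∈ Icc (0:ℝ) t₀ :=
    fun s => ⟨le_max_left _ _, max_le ht₀.le (min_le_right _ _)⟩
  set h : ℝ → ℝ := fun s => g (c s) with hh_def
  have hhcont : Continuous h := by
    refine hgcont.comp_continuous ?_ hcmem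
    exact continuous_const.max (continuous_id.min continuous_const)
  have hhg : ∀ s ∈ Icc (0:ℝ) t₀, h s = g s := by
    intro s hs
    have : c s = s := by
      simp only [hc_def]
      rw [min_eq_left hs.2, max_eq_right hs.1]
    rw [hh_def]; simp only; rw [this]
  have hh0 : ∀ s, 0 ≤ h s := fun s => hg0 _ (hcmem s)
  set Ih : ℝ := ∫ τ in (0:ℝ)..t₀, h τ with hIh_def
  -- the key barrier estimate
  have key : ∀ ε > (0:ℝ), ∀ t ∈ Icc (0:ℝ) t₀, t < t₀ → ∀ x ∈ Icc (0:ℝ) L, x < L →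
      |y t x| ≤ (M + ε) * Real.exp (Ih + ε * t₀) := by
    intro ε hε t ht htlt x hx hxlt
    set T₁ : ℝ := (t + t₀) / 2 with hT₁_def
    set L₁ : ℝ := (x + L) / 2 with hL₁_def
    have hT₁0 : 0 ≤ T₁ := by simp only [hT₁_def]; linarith [ht.1]
    have hT₁lt : T₁ < t₀ := by simp only [hT₁_def]; linarith
    have htT₁ : t ≤ T₁ := by simp only [hT₁_def]; linarith
    have hL₁0 : 0 ≤ L₁ := by simp only [hL₁_def]; linarith [hx.1]
    have hL₁lt : L₁ < L := by simp only [hL₁_def]; linarith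
    have hxL₁ : x ≤ L₁ := by simp only [hL₁_def]; linarith
    set B : ℝ → ℝ := fun s => (M + ε) * Real.exp (∫ τ in (0:ℝ)..s, (h τ + ε)) with hB_def
    have hBpos : ∀ s, 0 < B s := fun s => mul_pos (by linarith) (Real.exp_pos _)
    have hhεcont : Continuous (fun τ => h τ + ε) := hhcont.add continuous_const
    have hBderiv : ∀ s, HasDerivAt B ((h s + ε) * B s) s := by
      intro s
      have hint : HasDerivAt (fun u => ∫ τ in (0:ℝ)..u, (h τ + ε)) (h s + ε) s := by
        refine intervalIntegral.integral_hasDerivAt_right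
          (hhεcont.intervalIntegrable _ _) ?_ hhεcont.continuousAt
        exact hhεcont.stronglyMeasurable.stronglyMeasurableAtFilter
      have := (hint.exp).const_mul (M + ε)
      convert this using 1
      show (h s + ε) * ((M + ε) * Real.exp (∫ τ in (0:ℝ)..s, (h τ + ε))) = _
      ring
      all_goals rfl
    have hBcont : Continuous B := continuous_iff_continuousAt.2 fun s => (hBderiv s).continuousAt
    have hB0 : B 0 = M + ε := by
      simp only [hB_def, intervalIntegral.integral_same, Real.exp_zero, mul_one]
    have hBge : ∀ s, 0 ≤ s → M + ε ≤ B s := by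
      intro s hs
      have hi : 0 ≤ ∫ τ in (0:ℝ)..s, (h τ + ε) :=
        intervalIntegral.integral_nonneg hs (fun τ _ => by linarith [hh0 τ])
      have := Real.one_le_exp hi
      calc M + ε = (M + ε) * 1 := by ring
        _ ≤ B s := by
          simp only [hB_def]
          exact mul_le_mul_of_nonneg_left this (by linarith)
    -- the rectangle claim
    have claim : ∀ s ∈ Icc (0:ℝ) T₁, ∀ ξ ∈ Icc (0:ℝ) L₁, |y s ξ| < B s := by
      by_contra hcon
      push_neg at hcon
      obtain ⟨s₁, hs₁, ξ₁, hξ₁, hge₁⟩ := hcon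
      set P : Set (ℝ × ℝ) :=
        (Icc (0:ℝ) T₁ ×ˢ Icc (0:ℝ) L₁) ∩ (fun p : ℝ × ℝ => |y p.1 p.2| - B p.1) ⁻¹' Ici 0
        with hP_def
      have hrectsub : Icc (0:ℝ) T₁ ×ˢ Icc (0:ℝ) L₁ ⊆ Icc (0:ℝ) t₀ ×ˢ Icc (0:ℝ) L :=
        prod_mono (Icc_subset_Icc le_rfl hT₁lt.le) (Icc_subset_Icc le_rfl hL₁lt.le)
      have hPclosed : IsClosed P := by
        refine ContinuousOn.preimage_isClosed_of_isClosed ?_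
          (isClosed_Icc.prod isClosed_Icc) isClosed_Ici
        exact ((hycont.mono hrectsub).abs).sub ((hBcont.comp continuous_fst).continuousOn)
      have hPcomp : IsCompact P :=
        (isCompact_Icc.prod isCompact_Icc).of_isClosed_subset hPclosed inter_subset_left
      set S : Set ℝ := Prod.fst '' P with hS_def
      have hScomp : IsCompact S := hPcomp.image continuous_fst
      have hSne : S.Nonempty :=
        ⟨s₁, ⟨(s₁, ξ₁), ⟨mk_mem_prod hs₁ hξ₁, by simpa using sub_nonneg.2 hge₁⟩, rfl⟩⟩
      set ts : ℝ := sInf S with hts_def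
      have htsS : ts ∈ S := hScomp.sInf_mem hSne
      obtain ⟨p, ⟨hpmem, hpge⟩, hpfst⟩ := htsS
      have htsI : ts ∈ Icc (0:ℝ) T₁ := hpfst ▸ hpmem.1
      have htst₀ : ts ∈ Icc (0:ℝ) t₀ := ⟨htsI.1, htsI.2.trans hT₁lt.le⟩
      have hpge' : B ts ≤ |y ts p.2| := by
        have := hpge
        simp only [mem_preimage, mem_Ici, sub_nonneg] at this
        rwa [hpfst] at this
      -- before ts, strictly below B
      have before : ∀ s ∈ Icc (0:ℝ) T₁, s < ts → ∀ ξ ∈ Icc (0:ℝ) L₁, |y s ξ| < B s := by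
        intro s hs hslt ξ hξ
        by_contra hge
        push_neg at hge
        have hsS : s ∈ S :=
          ⟨(s, ξ), ⟨mk_mem_prod hs hξ, by simpa using sub_nonneg.2 hge⟩, rfl⟩
        exact absurd (csInf_le hScomp.bddBelow hsS) (not_le.2 hslt)
      have hts0 : 0 < ts := by
        rcases lt_or_eq_of_le htsI.1 with h | h
        · exact h
        · exfalso
          have hpL : p.2 ∈ Icc (0:ℝ) L := ⟨hpmem.2.1, hpmem.2.2.trans hL₁lt.le⟩
          have h1 := hinit p.2 hpL
          rw [← h, hB0] at hpge'
          linarith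
      -- at ts, everything is ≤ B ts
      have attop : ∀ ξ ∈ Icc (0:ℝ) L₁, |y ts ξ| ≤ B ts := by
        intro ξ hξ
        have hξL : ξ ∈ Icc (0:ℝ) L := ⟨hξ.1, hξ.2.trans hL₁lt.le⟩
        have hcw : ContinuousWithinAt (fun s => |y s ξ| - B s) (Ico 0 ts) ts := by
          refine ContinuousWithinAt.sub ?_ (hBcont.continuousAt.continuousWithinAt)
          refine ContinuousWithinAt.abs ?_
          exact ((hyt ts htst₀ ξ hξL).continuousWithinAt).mono
            (fun u hu => ⟨hu.1, hu.2.le.trans htst₀.2⟩)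
        have hnb : (𝓝[Ico (0:ℝ) ts] ts).NeBot := by
          rw [← mem_closure_iff_nhdsWithin_neBot, closure_Ico hts0.ne]
          exact ⟨hts0.le, le_rfl⟩
        have hle : |y ts ξ| - B ts ≤ 0 := by
          refine le_of_tendsto hcw ?_
          filter_upwards [self_mem_nhdsWithin] with s hs
          have := before s ⟨hs.1, hs.2.le.trans htsI.2⟩ hs.2 ξ hξ
          linarith
        linarith
      have hξ0mem : p.2 ∈ Icc (0:ℝ) L₁ := hpmem.2
      have hEq : |y ts p.2| = B ts := le_antisymm (attop p.2 hξ0mem) hpge'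
      set ξ0 : ℝ := p.2 with hξ0_def
      have hξ0L : ξ0 ∈ Icc (0:ℝ) L := ⟨hξ0mem.1, hξ0mem.2.trans hL₁lt.le⟩
      have hy0 : y ts ξ0 ≠ 0 := by
        intro hzero
        rw [hzero, abs_zero] at hEq
        exact absurd hEq.symm (ne_of_gt (hBpos ts))
      have hξ0pos : 0 < ξ0 := by
        rcases lt_or_eq_of_le hξ0mem.1 with hlt | heq0
        · exact hlt
        · exfalso
          have h1 := hbdry ts htst₀
          have h2 := hBge ts hts0.le
          rw [← heq0] at hEq
          rw [hEq] at h1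
          linarith
      -- sign
      obtain ⟨σ, hσ1, hσy⟩ : ∃ σ : ℝ, (σ = 1 ∨ σ = -1) ∧ σ * y ts ξ0 = |y ts ξ0| := by
        rcases le_or_gt 0 (y ts ξ0) with hpos | hneg
        · exact ⟨1, Or.inl rfl, by rw [one_mul, abs_of_nonneg hpos]⟩
        · exact ⟨-1, Or.inr rfl, by rw [neg_one_mul, abs_of_neg hneg]⟩
      have hσle : ∀ a : ℝ, σ * a ≤ |a| := by
        intro a
        rcases hσ1 with rfl | rfl
        · rw [one_mul]; exact le_abs_self a
        · rw [neg_one_mul]; exact neg_le_abs a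
      -- time derivative bound at (ts, ξ0)
      have hsubt : Icc (0:ℝ) ts ⊆ Icc (0:ℝ) t₀ := Icc_subset_Icc le_rfl htst₀.2
      have hft : HasDerivWithinAt (fun s => σ * y s ξ0 - B s)
          (σ * yt ts ξ0 - (h ts + ε) * B ts) (Icc 0 ts) ts := by
        exact (((hyt ts htst₀ ξ0 hξ0L).const_mul σ).mono hsubt).sub
          ((hBderiv ts).hasDerivWithinAt)
      have hdt : 0 ≤ σ * yt ts ξ0 - (h ts + ε) * B ts := by
        refine aux_endpoint_deriv_nonneg hts0 hft ?_
        intro s hs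
        have hend : σ * y ts ξ0 - B ts = 0 := by rw [hσy, hEq]; ring
        rw [hend]
        rcases lt_or_eq_of_le hs.2 with hlt | heqs
        · have := before s ⟨hs.1, hs.2.trans htsI.2⟩ hlt ξ0 hξ0mem
          have h2 := hσle (y s ξ0)
          linarith
        · rw [heqs, hend]
      -- space derivative bound at (ts, ξ0)
      have hsubx : Icc (0:ℝ) ξ0 ⊆ Icc (0:ℝ) L := Icc_subset_Icc le_rfl hξ0L.2
      have hfx : HasDerivWithinAt (fun ξ => σ * y ts ξ) (σ * yx ts ξ0) (Icc 0 ξ0) ξ0 :=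
        ((hyx ts htst₀ ξ0 hξ0L).const_mul σ).mono hsubx
      have hdx : 0 ≤ σ * yx ts ξ0 := by
        refine aux_endpoint_deriv_nonneg hξ0pos hfx ?_
        intro ξ hξ
        have hξL₁ : ξ ∈ Icc (0:ℝ) L₁ := ⟨hξ.1, hξ.2.trans hξ0mem.2⟩
        have h1 := hσle (y ts ξ)
        have h2 := attop ξ hξL₁
        have h3 : σ * y ts ξ0 = B ts := by rw [hσy, hEq]
        linarith
      -- PDE
      have hpde := heq ts ⟨hts0, lt_of_le_of_lt htsI.2 hT₁lt⟩ ξ0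
        ⟨hξ0pos, lt_of_le_of_lt hξ0mem.2 hL₁lt⟩
      have hvp := hvpos ts htst₀ ξ0 hξ0L
      have hFb : |F ts ξ0| ≤ g ts := hgle ts htst₀ ξ0 hξ0L
      have hhts : h ts = g ts := hhg ts htst₀
      have hσeq : σ * yt ts ξ0 = -(v ts ξ0 * (σ * yx ts ξ0)) - F ts ξ0 * B ts := by
        have h3 : σ * yt ts ξ0 + v ts ξ0 * (σ * yx ts ξ0) + F ts ξ0 * (σ * y ts ξ0)
            = σ * (yt ts ξ0 + v ts ξ0 * yx ts ξ0 + F ts ξ0 * y ts ξ0) := by ring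
        rw [hpde, mul_zero, hσy, hEq] at h3
        linarith
      have hneg : -F ts ξ0 ≤ |F ts ξ0| := neg_le_abs _
      have hBp := hBpos ts
      have hchain : σ * yt ts ξ0 ≤ h ts * B ts := by
        rw [hσeq, hhts]
        have h1 : 0 ≤ v ts ξ0 * (σ * yx ts ξ0) := mul_nonneg hvp.le hdx
        have h2 : -F ts ξ0 * B ts ≤ g ts * B ts :=
          mul_le_mul_of_nonneg_right (hneg.trans hFb) hBp.le
        linarith
      nlinarith [hdt, hchain, mul_pos hε hBp]
    -- apply claim at (t, x)
    have hclaim := claim t ⟨ht.1, htT₁⟩ x ⟨hx.1, hxL₁⟩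
    have hBt : B t ≤ (M + ε) * Real.exp (Ih + ε * t₀) := by
      have hint1 : IntervalIntegrable h MeasureTheory.volume 0 t :=
        hhcont.intervalIntegrable _ _
      have hint2 : IntervalIntegrable h MeasureTheory.volume t t₀ :=
        hhcont.intervalIntegrable _ _
      have hsplit : (∫ τ in (0:ℝ)..t, h τ) + ∫ τ in t..t₀, h τ = Ih :=
        intervalIntegral.integral_add_adjacent_intervals hint1 hint2
      have htail : 0 ≤ ∫ τ in t..t₀, h τ :=
        intervalIntegral.integral_nonneg htlt.le (fun τ _ => hh0 τ)
      have hIntEq : (∫ τ in (0:ℝ)..t, (h τ + ε)) = (∫ τ in (0:ℝ)..t, h τ) + ε * t := by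
        rw [intervalIntegral.integral_add (hhcont.intervalIntegrable _ _)
          (intervalIntegrable_const)]
        simp [mul_comm]
      have hle : (∫ τ in (0:ℝ)..t, (h τ + ε)) ≤ Ih + ε * t₀ := by
        rw [hIntEq]
        have : ε * t ≤ ε * t₀ := mul_le_mul_of_nonneg_left htlt.le hε.le
        linarith
      simp only [hB_def]
      exact mul_le_mul_of_nonneg_left (Real.exp_le_exp.2 hle) (by linarith)
    linarith
  -- pass to the limit ε → 0⁺ on the open part
  have step1 : ∀ t ∈ Icc (0:ℝ) t₀, t < t₀ → ∀ x ∈ Icc (0:ℝ) L, x < L →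
      |y t x| ≤ M * Real.exp Ih := by
    intro t ht htlt x hx hxlt
    have hT : Tendsto (fun ε : ℝ => (M + ε) * Real.exp (Ih + ε * t₀)) (𝓝[>] 0)
        (𝓝 (M * Real.exp Ih)) := by
      have hc : Continuous fun ε : ℝ => (M + ε) * Real.exp (Ih + ε * t₀) := by
        continuity
      have h2 : Tendsto (fun ε : ℝ => (M + ε) * Real.exp (Ih + ε * t₀)) (𝓝[>] (0:ℝ))
          (𝓝 ((M + 0) * Real.exp (Ih + 0 * t₀))) :=
        tendsto_nhdsWithin_of_tendsto_nhds (hc.tendsto 0)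
      simpa using h2
    refine ge_of_tendsto hT ?_
    filter_upwards [self_mem_nhdsWithin] with ε hε
    exact key ε hε t ht htlt x hx hxlt
  -- extend by continuity to the closed rectangle
  have hIgh : (∫ τ in (0:ℝ)..t₀, g τ) = Ih := by
    refine intervalIntegral.integral_congr ?_
    intro s hs
    rw [uIcc_of_le ht₀.le] at hs
    exact (hhg s hs).symm
  set C : ℝ := M * Real.exp Ih with hC_def
  have hclosed : IsClosed ((Icc (0:ℝ) t₀ ×ˢ Icc (0:ℝ) L) ∩
      (fun p : ℝ × ℝ => |y p.1 p.2|) ⁻¹' Iic C) :=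
    ContinuousOn.preimage_isClosed_of_isClosed hycont.abs
      (isClosed_Icc.prod isClosed_Icc) isClosed_Iic
  have hsub : Ico (0:ℝ) t₀ ×ˢ Ico (0:ℝ) L ⊆
      (Icc (0:ℝ) t₀ ×ˢ Icc (0:ℝ) L) ∩ (fun p : ℝ × ℝ => |y p.1 p.2|) ⁻¹' Iic C := by
    rintro ⟨s, ξ⟩ ⟨hs, hξ⟩
    refine ⟨mk_mem_prod ⟨hs.1, hs.2.le⟩ ⟨hξ.1, hξ.2.le⟩, ?_⟩
    exact step1 s ⟨hs.1, hs.2.le⟩ hs.2 ξ ⟨hξ.1, hξ.2.le⟩ hξ.2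
  have hclo : Icc (0:ℝ) t₀ ×ˢ Icc (0:ℝ) L ⊆
      (Icc (0:ℝ) t₀ ×ˢ Icc (0:ℝ) L) ∩ (fun p : ℝ × ℝ => |y p.1 p.2|) ⁻¹' Iic C := by
    have hcx : closure (Ico (0:ℝ) t₀ ×ˢ Ico (0:ℝ) L) = Icc (0:ℝ) t₀ ×ˢ Icc (0:ℝ) L := by
      rw [closure_prod_eq, closure_Ico ht₀.ne, closure_Ico hL.ne]
    calc Icc (0:ℝ) t₀ ×ˢ Icc (0:ℝ) L = closure (Ico (0:ℝ) t₀ ×ˢ Ico (0:ℝ) L) := hcx.symm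
      _ ⊆ _ := closure_minimal hsub hclosed
  intro t ht x hx
  have := (hclo (mk_mem_prod ht hx)).2
  simp only [mem_preimage, mem_Iic] at this
  rw [hg_def] at hIgh ⊢
  rw [hIgh]
  exact this
end

section
/- Let T, L > 0 and constants 0 < v_m, V_M, 0 < S_m ≤ S_M. Let v_in, v_L : [0,T] → ℝ with 0 < v_m ≤ v_in(t) < v_L(t) ≤ V_M, let S₀ ∈ C¹([0,T]) with S_m ≤ S₀(t) ≤ S_M, and let S₁ ∈ C¹([0,L]) with S_m ≤ S₁(x) ≤ S_M. Let A : [0,T] × [0,L] → ℝ be strictly positive with A and ∂ₓA continuously differentiable on [0,T] × [0,L], and let v ∈ C¹([0,T] × [0,L]) be such that: ∂ₜA + ∂ₓ(vA) = 0 on (0,T) × (0,L); A(t,x) ∂ₓv(t,x) is independent of x for each t; A(t,0) = S₀(t), A(0,x) = S₁(x), v(t,0) = v_in(t), v(t,L) = v_L(t). Set K := max( (max_{x∈[0,L]} |S₁′(x)|)/S_m , (1/(v_m S_m)) · ( max_{t∈[0,T]} |S₀′(t)| + V_M S_M / L ) ). Then A(t,x) ≥ S_m · exp(−K L) for all (t,x)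 ∈ [0,T] × [0,L]. -/
open Set Filter Topology MeasureTheory intervalIntegral

private lemma aux_deriv_nonneg_left {f : ℝ → ℝ} {a c d : ℝ} (hac : a < c)
    (hder : HasDerivWithinAt f d (Icc a c) c)
    (hmax : ∀ y ∈ Icc a c, f y ≤ f c) : 0 ≤ d := by
  have h1 : Tendsto (slope f c) (𝓝[Icc a c \ {c}] c) (𝓝 d) :=
    hasDerivWithinAt_iff_tendsto_slope.1 hder
  rw [Set.Icc_sdiff_right] at h1
  haveI : (𝓝[Ico a c] c).NeBot := right_nhdsWithin_Ico_neBot hac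
  refine ge_of_tendsto h1 ?_
  filter_upwards [self_mem_nhdsWithin] with y hy
  rw [slope_def_field]
  exact div_nonneg_of_nonpos (by linarith [hmax y (Ico_subset_Icc_self hy)])
    (by linarith [hy.2])

private lemma aux_deriv_nonpos_left {f : ℝ → ℝ} {a c d : ℝ} (hac : a < c)
    (hder : HasDerivWithinAt f d (Icc a c) c)
    (hmin : ∀ y ∈ Icc a c, f c ≤ f y) : d ≤ 0 := by
  have := aux_deriv_nonneg_left hac hder.neg (fun y hy => neg_le_neg (hmin y hy))
  linarith

private lemma aux_ext {T L : ℝ} (hT : 0 < T) (hL : 0 < L) {f : ℝ × ℝ → ℝ}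
    (hf : ContinuousOn f (Icc 0 T ×ˢ Icc 0 L))
    (h0 : ∀ p ∈ Ioo (0:ℝ) T ×ˢ Ioo (0:ℝ) L, f p = 0) :
    ∀ p ∈ Icc (0:ℝ) T ×ˢ Icc (0:ℝ) L, f p = 0 := by
  intro p hp
  have hcl : closure (Ioo (0:ℝ) T ×ˢ Ioo (0:ℝ) L) = Icc 0 T ×ˢ Icc 0 L := by
    rw [closure_prod_eq, closure_Ioo hT.ne, closure_Ioo hL.ne]
  have hpcl : p ∈ closure (Ioo (0:ℝ) T ×ˢ Ioo (0:ℝ) L) := hcl ▸ hp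
  haveI hne : (𝓝[Ioo (0:ℝ) T ×ˢ Ioo (0:ℝ) L] p).NeBot :=
    mem_closure_iff_nhdsWithin_neBot.1 hpcl
  have h1 : Tendsto f (𝓝[Ioo (0:ℝ) T ×ˢ Ioo (0:ℝ) L] p) (𝓝 (f p)) :=
    (hf p hp).mono (prod_mono Ioo_subset_Icc_self Ioo_subset_Icc_self)
  have h2 : Tendsto f (𝓝[Ioo (0:ℝ) T ×ˢ Ioo (0:ℝ) L] p) (𝓝 0) := by
    refine Tendsto.congr' ?_ tendsto_const_nhds
    filter_upwards [self_mem_nhdsWithin] with q hq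
    exact (h0 q hq).symm
  exact tendsto_nhds_unique h1 h2

private lemma aux_mono {L : ℝ} {f g : ℝ → ℝ}
    (hc : ContinuousOn f (Icc 0 L))
    (hd : ∀ y ∈ Ioo (0:ℝ) L, HasDerivAt f (g y) y)
    (hg : ∀ y ∈ Ioo (0:ℝ) L, 0 ≤ g y) : MonotoneOn f (Icc 0 L) := by
  apply monotoneOn_of_deriv_nonneg (convex_Icc 0 L) hc
  · rw [interior_Icc]; exact fun y hy => (hd y hy).differentiableAt.differentiableWithinAt
  · rw [interior_Icc]; intro y hy; rw [(hd y hy).deriv]; exact hg y hy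

private lemma aux_anti {L : ℝ} {f g : ℝ → ℝ}
    (hc : ContinuousOn f (Icc 0 L))
    (hd : ∀ y ∈ Ioo (0:ℝ) L, HasDerivAt f (g y) y)
    (hg : ∀ y ∈ Ioo (0:ℝ) L, g y ≤ 0) : AntitoneOn f (Icc 0 L) := by
  apply antitoneOn_of_deriv_nonpos (convex_Icc 0 L) hc
  · rw [interior_Icc]; exact fun y hy => (hd y hy).differentiableAt.differentiableWithinAt
  · rw [interior_Icc]; intro y hy; rw [(hd y hy).deriv]; exact hg y hy

private lemma clairaut_le {T L : ℝ}
    (A At Ax Axt Atx : ℝ → ℝ → ℝ)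
    (hAt : ∀ t ∈ Icc (0:ℝ) T, ∀ x ∈ Icc (0:ℝ) L,
        HasDerivWithinAt (fun s => A s x) (At t x) (Icc 0 T) t)
    (hAx : ∀ t ∈ Icc (0:ℝ) T, ∀ x ∈ Icc (0:ℝ) L,
        HasDerivWithinAt (fun y => A t y) (Ax t x) (Icc 0 L) x)
    (hAxt : ∀ t ∈ Icc (0:ℝ) T, ∀ x ∈ Icc (0:ℝ) L,
        HasDerivWithinAt (fun s => Ax s x) (Axt t x) (Icc 0 T) t)
    (hAtx : ∀ t ∈ Icc (0:ℝ) T, ∀ x ∈ Icc (0:ℝ) L,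
        HasDerivWithinAt (fun y => At t y) (Atx t x) (Icc 0 L) x)
    (hAxtcont : ContinuousOn (fun p : ℝ × ℝ => Axt p.1 p.2) (Icc 0 T ×ˢ Icc 0 L))
    (hAtxcont : ContinuousOn (fun p : ℝ × ℝ => Atx p.1 p.2) (Icc 0 T ×ˢ Icc 0 L))
    (hAtcont : ContinuousOn (fun p : ℝ × ℝ => At p.1 p.2) (Icc 0 T ×ˢ Icc 0 L))
    (hAxcont : ContinuousOn (fun p : ℝ × ℝ => Ax p.1 p.2) (Icc 0 T ×ˢ Icc 0 L))
    {t₀ x₀ : ℝ} (ht₀ : t₀ ∈ Ioo (0:ℝ) T) (hx₀ : x₀ ∈ Ioo (0:ℝ) L) :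
    Axt t₀ x₀ ≤ Atx t₀ x₀ := by
  by_contra hlt
  push_neg at hlt
  set d := Axt t₀ x₀ - Atx t₀ x₀ with hd
  have hdpos : 0 < d := by simp only [hd]; linarith
  set a := Axt t₀ x₀ - d/4 with ha
  set b := Atx t₀ x₀ + d/4 with hb
  have hba : b + d/2 = a := by simp only [ha, hb, hd]; ring
  have hmemN : Icc (0:ℝ) T ×ˢ Icc (0:ℝ) L ∈ 𝓝 ((t₀, x₀) : ℝ × ℝ) :=
    prod_mem_nhds (Icc_mem_nhds ht₀.1 ht₀.2) (Icc_mem_nhds hx₀.1 hx₀.2)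
  have c1 : ContinuousAt (fun p : ℝ × ℝ => Axt p.1 p.2) (t₀, x₀) :=
    hAxtcont.continuousAt hmemN
  have c2 : ContinuousAt (fun p : ℝ × ℝ => Atx p.1 p.2) (t₀, x₀) :=
    hAtxcont.continuousAt hmemN
  have hU : {q : ℝ × ℝ | a < Axt q.1 q.2 ∧ Atx q.1 q.2 < b} ∈ 𝓝 ((t₀, x₀) : ℝ × ℝ) := by
    refine Filter.inter_mem ?_ ?_
    · exact c1 (Ioi_mem_nhds (by simp only [ha]; linarith))
    · exact c2 (Iio_mem_nhds (by simp only [hb]; linarith))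
  obtain ⟨ε, hε, hball⟩ := Metric.mem_nhds_iff.1 hU
  set η := min (ε/2) (min ((T - t₀)/2) ((L - x₀)/2)) with hη
  have hηpos : 0 < η := by
    apply lt_min (by linarith)
    exact lt_min (by linarith [ht₀.2]) (by linarith [hx₀.2])
  have hηε : η < ε := lt_of_le_of_lt (min_le_left _ _) (by linarith)
  have hηT : t₀ + η < T := by
    have : η ≤ (T - t₀)/2 := le_trans (min_le_right _ _) (min_le_left _ _)
    linarith [ht₀.2]
  have hηL : x₀ + η < L := by
    have : η ≤ (L - x₀)/2 := le_trans (min_le_right _ _) (min_le_right _ _)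
    linarith [hx₀.2]
  -- membership facts
  have hIoot : ∀ s ∈ Icc t₀ (t₀ + η), s ∈ Ioo (0:ℝ) T :=
    fun s hs => ⟨lt_of_lt_of_le ht₀.1 hs.1, lt_of_le_of_lt hs.2 hηT⟩
  have hIoox : ∀ y ∈ Icc x₀ (x₀ + η), y ∈ Ioo (0:ℝ) L :=
    fun y hy => ⟨lt_of_lt_of_le hx₀.1 hy.1, lt_of_le_of_lt hy.2 hηL⟩
  have hIcct : ∀ s ∈ Icc t₀ (t₀ + η), s ∈ Icc (0:ℝ) T :=
    fun s hs => Ioo_subset_Icc_self (hIoot s hs)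
  have hIccx : ∀ y ∈ Icc x₀ (x₀ + η), y ∈ Icc (0:ℝ) L :=
    fun y hy => Ioo_subset_Icc_self (hIoox y hy)
  have hin : ∀ s ∈ Icc t₀ (t₀ + η), ∀ y ∈ Icc x₀ (x₀ + η),
      a < Axt s y ∧ Atx s y < b := by
    intro s hs y hy
    have hmem : ((s, y) : ℝ × ℝ) ∈ Metric.ball ((t₀, x₀) : ℝ × ℝ) ε := by
      rw [Metric.mem_ball, Prod.dist_eq]
      apply max_lt
      · rw [Real.dist_eq, abs_of_nonneg (by linarith [hs.1])]
        linarith [hs.2]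
      · rw [Real.dist_eq, abs_of_nonneg (by linarith [hy.1])]
        linarith [hy.2]
    exact hball hmem
  have hle : t₀ ≤ t₀ + η := by linarith
  have hlex : x₀ ≤ x₀ + η := by linarith
  -- Claim 1 : pointwise lower bound on x-slice differences
  have claim1 : ∀ y ∈ Icc x₀ (x₀ + η), η * a ≤ Ax (t₀ + η) y - Ax t₀ y := by
    intro y hy
    have hyL : y ∈ Icc (0:ℝ) L := hIccx y hy
    have hd1 : ∀ s ∈ uIcc t₀ (t₀ + η), HasDerivAt (fun s => Ax s y) (Axt s y) s := by
      intro s hs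
      rw [uIcc_of_le hle] at hs
      have hs' := hIoot s hs
      exact (hAxt s (Ioo_subset_Icc_self hs') y hyL).hasDerivAt
        (Icc_mem_nhds hs'.1 hs'.2)
    have hint : IntervalIntegrable (fun s => Axt s y) volume t₀ (t₀ + η) := by
      apply ContinuousOn.intervalIntegrable
      apply hAxtcont.comp (continuous_id.prodMk continuous_const).continuousOn
      intro s hs
      rw [uIcc_of_le hle] at hs
      exact ⟨hIcct s hs, hyL⟩
    have heq := integral_eq_sub_of_hasDerivAt hd1 hint
    have hlow : η * a ≤ ∫ s in t₀..t₀ + η, Axt s y := by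
      have h0 : (∫ _s in t₀..t₀ + η, a) = η * a := by
        rw [intervalIntegral.integral_const, smul_eq_mul]; ring
      rw [← h0]
      exact integral_mono_on hle intervalIntegrable_const hint
        (fun s hs => (hin s hs y hy).1.le)
    linarith [heq ▸ hlow]
  -- Claim 2 : pointwise upper bound on t-slice differences
  have claim2 : ∀ s ∈ Icc t₀ (t₀ + η), At s (x₀ + η) - At s x₀ ≤ η * b := by
    intro s hs
    have hsT : s ∈ Icc (0:ℝ) T := hIcct s hs
    have hd1 : ∀ y ∈ uIcc x₀ (x₀ + η), HasDerivAt (fun y => At s y) (Atx s y) y := by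
      intro y hy
      rw [uIcc_of_le hlex] at hy
      have hy' := hIoox y hy
      exact (hAtx s hsT y (Ioo_subset_Icc_self hy')).hasDerivAt
        (Icc_mem_nhds hy'.1 hy'.2)
    have hint : IntervalIntegrable (fun y => Atx s y) volume x₀ (x₀ + η) := by
      apply ContinuousOn.intervalIntegrable
      apply hAtxcont.comp (continuous_const.prodMk continuous_id).continuousOn
      intro y hy
      rw [uIcc_of_le hlex] at hy
      exact ⟨hsT, hIccx y hy⟩
    have heq := integral_eq_sub_of_hasDerivAt hd1 hint
    have hup : (∫ y in x₀..x₀ + η, Atx s y) ≤ η * b := by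
      have h0 : (∫ _y in x₀..x₀ + η, b) = η * b := by
        rw [intervalIntegral.integral_const, smul_eq_mul]; ring
      rw [← h0]
      exact integral_mono_on hlex hint intervalIntegrable_const
        (fun y hy => (hin s hs y hy).2.le)
    linarith [heq ▸ hup]
  -- The double difference F
  set F := A (t₀ + η) (x₀ + η) - A (t₀ + η) x₀ - A t₀ (x₀ + η) + A t₀ x₀ with hF
  have hmemT : t₀ + η ∈ Icc (0:ℝ) T := hIcct _ ⟨hle, le_refl _⟩
  have hmemT0 : t₀ ∈ Icc (0:ℝ) T := hIcct _ ⟨le_refl _, hle⟩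
  have hmemX : x₀ + η ∈ Icc (0:ℝ) L := hIccx _ ⟨hlex, le_refl _⟩
  have hmemX0 : x₀ ∈ Icc (0:ℝ) L := hIccx _ ⟨le_refl _, hlex⟩
  -- F ≥ η * (η * a)
  have hFlow : η * (η * a) ≤ F := by
    have hd2 : ∀ y ∈ uIcc x₀ (x₀ + η),
        HasDerivAt (fun y => A (t₀ + η) y - A t₀ y) (Ax (t₀ + η) y - Ax t₀ y) y := by
      intro y hy
      rw [uIcc_of_le hlex] at hy
      have hy' := hIoox y hy
      have hyL : y ∈ Icc (0:ℝ) L := Ioo_subset_Icc_self hy'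
      exact ((hAx _ hmemT y hyL).hasDerivAt (Icc_mem_nhds hy'.1 hy'.2)).sub
        ((hAx _ hmemT0 y hyL).hasDerivAt (Icc_mem_nhds hy'.1 hy'.2))
    have hint2 : IntervalIntegrable (fun y => Ax (t₀ + η) y - Ax t₀ y) volume x₀ (x₀ + η) := by
      apply ContinuousOn.intervalIntegrable
      apply ContinuousOn.sub
      · apply hAxcont.comp (continuous_const.prodMk continuous_id).continuousOn
        intro y hy; rw [uIcc_of_le hlex] at hy; exact ⟨hmemT, hIccx y hy⟩
      · apply hAxcont.comp (continuous_const.prodMk continuous_id).continuousOn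
        intro y hy; rw [uIcc_of_le hlex] at hy; exact ⟨hmemT0, hIccx y hy⟩
    have heq2 := integral_eq_sub_of_hasDerivAt hd2 hint2
    have hlow2 : η * (η * a) ≤ ∫ y in x₀..x₀ + η, (Ax (t₀ + η) y - Ax t₀ y) := by
      have h0 : (∫ _y in x₀..x₀ + η, η * a) = η * (η * a) := by
        rw [intervalIntegral.integral_const, smul_eq_mul]; ring
      rw [← h0]
      exact integral_mono_on hlex intervalIntegrable_const hint2 claim1
    have : (fun y => A (t₀ + η) y - A t₀ y) (x₀ + η) - (fun y => A (t₀ + η) y - A t₀ y) x₀ = F := by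
      simp only [hF]; ring
    rw [heq2, this] at hlow2
    exact hlow2
  -- F ≤ η * (η * b)
  have hFup : F ≤ η * (η * b) := by
    have hd2 : ∀ s ∈ uIcc t₀ (t₀ + η),
        HasDerivAt (fun s => A s (x₀ + η) - A s x₀) (At s (x₀ + η) - At s x₀) s := by
      intro s hs
      rw [uIcc_of_le hle] at hs
      have hs' := hIoot s hs
      have hsT : s ∈ Icc (0:ℝ) T := Ioo_subset_Icc_self hs'
      exact ((hAt s hsT _ hmemX).hasDerivAt (Icc_mem_nhds hs'.1 hs'.2)).sub
        ((hAt s hsT _ hmemX0).hasDerivAt (Icc_mem_nhds hs'.1 hs'.2))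
    have hint2 : IntervalIntegrable (fun s => At s (x₀ + η) - At s x₀) volume t₀ (t₀ + η) := by
      apply ContinuousOn.intervalIntegrable
      apply ContinuousOn.sub
      · apply hAtcont.comp (continuous_id.prodMk continuous_const).continuousOn
        intro s hs; rw [uIcc_of_le hle] at hs; exact ⟨hIcct s hs, hmemX⟩
      · apply hAtcont.comp (continuous_id.prodMk continuous_const).continuousOn
        intro s hs; rw [uIcc_of_le hle] at hs; exact ⟨hIcct s hs, hmemX0⟩
    have heq2 := integral_eq_sub_of_hasDerivAt hd2 hint2
    have hup2 : (∫ s in t₀..t₀ + η, (At s (x₀ + η) - At s x₀)) ≤ η * (η * b) := by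
      have h0 : (∫ _s in t₀..t₀ + η, η * b) = η * (η * b) := by
        rw [intervalIntegral.integral_const, smul_eq_mul]; ring
      rw [← h0]
      exact integral_mono_on hle hint2 intervalIntegrable_const claim2
    have : (fun s => A s (x₀ + η) - A s x₀) (t₀ + η) - (fun s => A s (x₀ + η) - A s x₀) t₀ = F := by
      simp only [hF]; ring
    rw [heq2, this] at hup2
    exact hup2
  have h1 : η * (η * a) ≤ η * (η * b) := le_trans hFlow hFup
  rw [← hba] at h1
  nlinarith [h1, mul_pos (mul_pos hηpos hηpos) hdpos]


set_option maxHeartbeats 1600000 in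
/-- A priori positive lower bound on the cross-sectional area for
classical solutions of the isothermal Matovich–Pearson equations without surface
tension: if `∂ₜA + ∂ₓ(vA) = 0` on `(0,T) × (0,L)`, `A ∂ₓv` is independent of `x`,
`A(t,0) = S₀(t)`, `A(0,x) = S₁(x)`, `v(t,0) = v_in(t)`, `v(t,L) = v_L(t)`, with
`0 < v_m ≤ v_in < v_L ≤ V_M` and `S_m ≤ S₀, S₁ ≤ S_M`, `A > 0`, `A` and `∂ₓA = Ax`
continuously differentiable, `v ∈ C¹`, then with
`K := max( (max|S₁′|)/S_m , (1/(v_m S_m)) (max|S₀′| + V_M S_M / L) )` one has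
`A(t,x) ≥ S_m exp(−K L)` on `[0,T] × [0,L]`. -/
theorem statement13
    (T L v_m V_M S_m S_M : ℝ)
    (hT : 0 < T) (hL : 0 < L)
    (hvm : 0 < v_m) (hVM : 0 < V_M)
    (hSm : 0 < S_m) (hSmM : S_m ≤ S_M)
    (v_in v_L S₀ dS₀ S₁ dS₁ : ℝ → ℝ)
    (v vt vx A At Ax Axt Axx : ℝ → ℝ → ℝ)
    (hdata : ∀ t ∈ Icc (0:ℝ) T, v_m ≤ v_in t ∧ v_in t < v_L t ∧ v_L t ≤ V_M)
    -- `S₀ ∈ C¹([0,T])` with `S_m ≤ S₀ ≤ S_M`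
    (hS₀d : ∀ t ∈ Icc (0:ℝ) T, HasDerivWithinAt S₀ (dS₀ t) (Icc 0 T) t)
    (hdS₀cont : ContinuousOn dS₀ (Icc 0 T))
    (hS₀b : ∀ t ∈ Icc (0:ℝ) T, S_m ≤ S₀ t ∧ S₀ t ≤ S_M)
    -- `S₁ ∈ C¹([0,L])` with `S_m ≤ S₁ ≤ S_M`
    (hS₁d : ∀ x ∈ Icc (0:ℝ) L, HasDerivWithinAt S₁ (dS₁ x) (Icc 0 L) x)
    (hdS₁cont : ContinuousOn dS₁ (Icc 0 L))
    (hS₁b : ∀ x ∈ Icc (0:ℝ) L, S_m ≤ S₁ x ∧ S₁ x ≤ S_M)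
    -- `A` strictly positive, `A` and `∂ₓA` continuously differentiable
    (hApos : ∀ t ∈ Icc (0:ℝ) T, ∀ x ∈ Icc (0:ℝ) L, 0 < A t x)
    (hAcont : ContinuousOn (fun p : ℝ × ℝ => A p.1 p.2) (Icc 0 T ×ˢ Icc 0 L))
    (hAt : ∀ t ∈ Icc (0:ℝ) T, ∀ x ∈ Icc (0:ℝ) L,
        HasDerivWithinAt (fun s => A s x) (At t x) (Icc 0 T) t)
    (hAx : ∀ t ∈ Icc (0:ℝ) T, ∀ x ∈ Icc (0:ℝ) L,
        HasDerivWithinAt (fun y => A t y) (Ax t x) (Icc 0 L) x)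
    (hAtcont : ContinuousOn (fun p : ℝ × ℝ => At p.1 p.2) (Icc 0 T ×ˢ Icc 0 L))
    (hAxcont : ContinuousOn (fun p : ℝ × ℝ => Ax p.1 p.2) (Icc 0 T ×ˢ Icc 0 L))
    (hAxt : ∀ t ∈ Icc (0:ℝ) T, ∀ x ∈ Icc (0:ℝ) L,
        HasDerivWithinAt (fun s => Ax s x) (Axt t x) (Icc 0 T) t)
    (hAxx : ∀ t ∈ Icc (0:ℝ) T, ∀ x ∈ Icc (0:ℝ) L,
        HasDerivWithinAt (fun y => Ax t y) (Axx t x) (Icc 0 L) x)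
    (hAxtcont : ContinuousOn (fun p : ℝ × ℝ => Axt p.1 p.2) (Icc 0 T ×ˢ Icc 0 L))
    (hAxxcont : ContinuousOn (fun p : ℝ × ℝ => Axx p.1 p.2) (Icc 0 T ×ˢ Icc 0 L))
    -- `v ∈ C¹([0,T] × [0,L])`
    (hvcont : ContinuousOn (fun p : ℝ × ℝ => v p.1 p.2) (Icc 0 T ×ˢ Icc 0 L))
    (hvt : ∀ t ∈ Icc (0:ℝ) T, ∀ x ∈ Icc (0:ℝ) L,
        HasDerivWithinAt (fun s => v s x) (vt t x) (Icc 0 T) t)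
    (hvx : ∀ t ∈ Icc (0:ℝ) T, ∀ x ∈ Icc (0:ℝ) L,
        HasDerivWithinAt (fun y => v t y) (vx t x) (Icc 0 L) x)
    (hvtcont : ContinuousOn (fun p : ℝ × ℝ => vt p.1 p.2) (Icc 0 T ×ˢ Icc 0 L))
    (hvxcont : ContinuousOn (fun p : ℝ × ℝ => vx p.1 p.2) (Icc 0 T ×ˢ Icc 0 L))
    -- mass conservation `∂ₜA + ∂ₓ(vA) = 0` on `(0,T) × (0,L)`
    (hmass : ∀ t ∈ Ioo (0:ℝ) T, ∀ x ∈ Ioo (0:ℝ) L,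
        At t x + (vx t x * A t x + v t x * Ax t x) = 0)
    -- `A ∂ₓv` is independent of `x` for each `t`
    (hmom : ∀ t ∈ Icc (0:ℝ) T, ∀ x ∈ Icc (0:ℝ) L, ∀ y ∈ Icc (0:ℝ) L,
        A t x * vx t x = A t y * vx t y)
    -- boundary and initial conditions
    (hA0 : ∀ t ∈ Icc (0:ℝ) T, A t 0 = S₀ t)
    (hA1 : ∀ x ∈ Icc (0:ℝ) L, A 0 x = S₁ x)
    (hvin : ∀ t ∈ Icc (0:ℝ) T, v t 0 = v_in t)
    (hvL : ∀ t ∈ Icc (0:ℝ) T, v t L = v_L t) :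
    ∀ t ∈ Icc (0:ℝ) T, ∀ x ∈ Icc (0:ℝ) L,
      S_m * Real.exp
        (-(max ((sSup ((fun z => |dS₁ z|) '' Icc (0:ℝ) L)) / S_m)
            ((1 / (v_m * S_m)) *
              (sSup ((fun s => |dS₀ s|) '' Icc (0:ℝ) T) + V_M * S_M / L))) * L)
      ≤ A t x := by

  set M₁ := sSup ((fun z => |dS₁ z|) '' Icc (0:ℝ) L) with hM₁def
  set M₀ := sSup ((fun s => |dS₀ s|) '' Icc (0:ℝ) T) with hM₀def
  set K := max (M₁ / S_m) ((1 / (v_m * S_m)) * (M₀ + V_M * S_M / L)) with hKdef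
  have h0T : (0:ℝ) ∈ Icc (0:ℝ) T := left_mem_Icc.2 hT.le
  have h0L : (0:ℝ) ∈ Icc (0:ℝ) L := left_mem_Icc.2 hL.le
  have hTT : T ∈ Icc (0:ℝ) T := right_mem_Icc.2 hT.le
  have hLL : L ∈ Icc (0:ℝ) L := right_mem_Icc.2 hL.le
  have hSMpos : 0 < S_M := lt_of_lt_of_le hSm hSmM
  -- slices
  have hslice : ∀ (f : ℝ × ℝ → ℝ), ContinuousOn f (Icc 0 T ×ˢ Icc 0 L) →
      ∀ t ∈ Icc (0:ℝ) T, ContinuousOn (fun y => f (t, y)) (Icc (0:ℝ) L) :=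
    fun f hf t ht => hf.comp (continuous_const.prodMk continuous_id).continuousOn
      (fun y hy => ⟨ht, hy⟩)
  set χ : ℝ → ℝ := fun t => A t 0 * vx t 0 with hχdef
  have hχcont : ContinuousOn χ (Icc (0:ℝ) T) := by
    apply ContinuousOn.mul
    · exact hAcont.comp (continuous_id.prodMk continuous_const).continuousOn
        (fun s hs => ⟨hs, h0L⟩)
    · exact hvxcont.comp (continuous_id.prodMk continuous_const).continuousOn
        (fun s hs => ⟨hs, h0L⟩)
  have hvxval : ∀ t ∈ Icc (0:ℝ) T, ∀ y ∈ Icc (0:ℝ) L, A t y * vx t y = χ t :=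
    fun t ht y hy => hmom t ht y hy 0 h0L
  -- Step A : χ > 0
  have hχpos : ∀ t ∈ Icc (0:ℝ) T, 0 < χ t := by
    intro t ht
    by_contra hc
    push_neg at hc
    have hvx_np : ∀ y ∈ Ioo (0:ℝ) L, vx t y ≤ 0 := by
      intro y hy
      have h1 := hvxval t ht y (Ioo_subset_Icc_self hy)
      have hA := hApos t ht y (Ioo_subset_Icc_self hy)
      by_contra h2
      push_neg at h2
      nlinarith [mul_pos hA h2]
    have hanti : AntitoneOn (fun y => v t y) (Icc (0:ℝ) L) :=
      aux_anti (hslice _ hvcont t ht)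
        (fun y hy => (hvx t ht y (Ioo_subset_Icc_self hy)).hasDerivAt
          (Icc_mem_nhds hy.1 hy.2)) hvx_np
    have h3 := hanti h0L hLL hL.le
    have h4 := hvin t ht
    have h5 := hvL t ht
    obtain ⟨_, hd2, _⟩ := hdata t ht
    simp only at h3
    linarith
  -- Step B : vx > 0
  have hvxpos : ∀ t ∈ Icc (0:ℝ) T, ∀ y ∈ Icc (0:ℝ) L, 0 < vx t y := by
    intro t ht y hy
    have h1 := hvxval t ht y hy
    have hA := hApos t ht y hy
    have hχ := hχpos t ht
    by_contra h2
    push_neg at h2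
    nlinarith [mul_nonneg hA.le (neg_nonneg.2 h2)]
  -- Step C : v ≥ v_m
  have hvlb : ∀ t ∈ Icc (0:ℝ) T, ∀ y ∈ Icc (0:ℝ) L, v_m ≤ v t y := by
    intro t ht y hy
    have hmono : MonotoneOn (fun y => v t y) (Icc (0:ℝ) L) :=
      aux_mono (hslice _ hvcont t ht)
        (fun z hz => (hvx t ht z (Ioo_subset_Icc_self hz)).hasDerivAt
          (Icc_mem_nhds hz.1 hz.2))
        (fun z hz => (hvxpos t ht z (Ioo_subset_Icc_self hz)).le)
    have h1 := hmono h0L hy hy.1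
    have h2 := hvin t ht
    obtain ⟨hd1, _, _⟩ := hdata t ht
    simp only at h1
    linarith
  -- Step D : identity E
  have hE : ∀ t ∈ Icc (0:ℝ) T, ∀ x ∈ Icc (0:ℝ) L,
      At t x + χ t + v t x * Ax t x = 0 := by
    have hext := aux_ext hT hL
      (f := fun p : ℝ × ℝ => At p.1 p.2 + χ p.1 + v p.1 p.2 * Ax p.1 p.2)
      (by
        apply ContinuousOn.add
        apply ContinuousOn.add hAtcont
        · exact hχcont.comp continuous_fst.continuousOn (fun p hp => hp.1)
        · exact hvcont.mul hAxcont)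
      (by
        intro p hp
        have hm := hmass p.1 hp.1 p.2 hp.2
        have hx := hmom p.1 (Ioo_subset_Icc_self hp.1) p.2 (Ioo_subset_Icc_self hp.2) 0 h0L
        show At p.1 p.2 + χ p.1 + v p.1 p.2 * Ax p.1 p.2 = 0
        have hχp : χ p.1 = A p.1 0 * vx p.1 0 := rfl
        rw [hχp]
        linear_combination hm - hx)
    intro t ht x hx
    exact hext (t, x) ⟨ht, hx⟩
  -- Step E2 : A ≤ S_M
  have hAub : ∀ t ∈ Icc (0:ℝ) T, ∀ x ∈ Icc (0:ℝ) L, A t x ≤ S_M := by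
    obtain ⟨p, hpmem, hpmax⟩ := (isCompact_Icc.prod isCompact_Icc).exists_isMaxOn
      ⟨((0:ℝ), (0:ℝ)), ⟨h0T, h0L⟩⟩ hAcont
    suffices hs : A p.1 p.2 ≤ S_M by
      intro t ht x hx
      exact le_trans (hpmax (show ((t, x) : ℝ × ℝ) ∈ Icc 0 T ×ˢ Icc 0 L from ⟨ht, hx⟩)) hs
    rcases eq_or_lt_of_le hpmem.1.1 with h0 | htpos
    · rw [← h0]
      rw [hA1 p.2 hpmem.2]
      exact (hS₁b p.2 hpmem.2).2
    rcases eq_or_lt_of_le hpmem.2.1 with hx0 | hxpos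
    · rw [← hx0]
      rw [hA0 p.1 hpmem.1]
      exact (hS₀b p.1 hpmem.1).2
    exfalso
    have hAt_nn : 0 ≤ At p.1 p.2 :=
      aux_deriv_nonneg_left htpos
        ((hAt p.1 hpmem.1 p.2 hpmem.2).mono (Icc_subset_Icc_right hpmem.1.2))
        (fun y hy => hpmax (show ((y, p.2) : ℝ × ℝ) ∈ Icc 0 T ×ˢ Icc 0 L from
          ⟨⟨hy.1, hy.2.trans hpmem.1.2⟩, hpmem.2⟩))
    have hAx_nn : 0 ≤ Ax p.1 p.2 :=
      aux_deriv_nonneg_left hxpos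
        ((hAx p.1 hpmem.1 p.2 hpmem.2).mono (Icc_subset_Icc_right hpmem.2.2))
        (fun y hy => hpmax (show ((p.1, y) : ℝ × ℝ) ∈ Icc 0 T ×ˢ Icc 0 L from
          ⟨hpmem.1, ⟨hy.1, hy.2.trans hpmem.2.2⟩⟩))
    have hEp := hE p.1 hpmem.1 p.2 hpmem.2
    have hχp := hχpos p.1 hpmem.1
    have hvp := hvlb p.1 hpmem.1 p.2 hpmem.2
    nlinarith [mul_nonneg (le_trans hvm.le hvp) hAx_nn]
  -- Step F : χ ≤ V_M * S_M / L
  have hχub : ∀ t ∈ Icc (0:ℝ) T, χ t ≤ V_M * S_M / L := by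
    intro t ht
    have hc : ∀ y ∈ Ioo (0:ℝ) L, χ t / S_M ≤ vx t y := by
      intro y hy
      have h1 := hvxval t ht y (Ioo_subset_Icc_self hy)
      have hA := hApos t ht y (Ioo_subset_Icc_self hy)
      have hAu := hAub t ht y (Ioo_subset_Icc_self hy)
      have hχp := hχpos t ht
      have hveq : vx t y = χ t / A t y := by
        field_simp
        linear_combination h1
      rw [hveq, div_le_div_iff₀ hSMpos hA]
      nlinarith
    have hmono : MonotoneOn (fun y => v t y - χ t / S_M * y) (Icc (0:ℝ) L) := by
      apply aux_mono (g := fun y => vx t y - χ t / S_M)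
      · exact (hslice _ hvcont t ht).sub (continuousOn_const.mul continuousOn_id)
      · intro y hy
        have h1 : HasDerivAt (fun z => v t z - χ t / S_M * z)
            (vx t y - χ t / S_M * 1) y :=
          ((hvx t ht y (Ioo_subset_Icc_self hy)).hasDerivAt
            (Icc_mem_nhds hy.1 hy.2)).sub ((hasDerivAt_id y).const_mul (χ t / S_M))
        simpa using h1
      · intro y hy
        linarith [hc y hy]
    have h01 := hmono h0L hLL hL.le
    simp only [mul_zero, sub_zero, mul_one] at h01
    have h2 := hvin t ht
    have h3 := hvL t ht
    obtain ⟨hd1, hd2, hd3⟩ := hdata t ht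
    have h4 : χ t / S_M * L ≤ V_M := by
      have : v t 0 ≤ v t L - χ t / S_M * L := h01
      nlinarith
    have h5 : χ t * L ≤ V_M * S_M := by
      have h6 := mul_le_mul_of_nonneg_right h4 hSMpos.le
      calc χ t * L = χ t / S_M * L * S_M := by field_simp
      _ ≤ V_M * S_M := h6
    rw [le_div_iff₀ hL]
    linarith
  -- Step G : Clairaut
  have hAtx : ∀ t ∈ Icc (0:ℝ) T, ∀ x ∈ Icc (0:ℝ) L,
      HasDerivWithinAt (fun y => At t y)
        (-(vx t x * Ax t x + v t x * Axx t x)) (Icc 0 L) x := by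
    intro t ht x hx
    have h1 : HasDerivWithinAt (fun y => -(χ t) - v t y * Ax t y)
        (-(vx t x * Ax t x + v t x * Axx t x)) (Icc 0 L) x := by
      simpa using ((hvx t ht x hx).mul (hAxx t ht x hx)).const_sub (-(χ t))
    apply h1.congr
    · intro y hy
      have := hE t ht y hy
      linarith
    · have := hE t ht x hx
      linarith
  have hGcont : ContinuousOn
      (fun p : ℝ × ℝ => -(vx p.1 p.2 * Ax p.1 p.2 + v p.1 p.2 * Axx p.1 p.2))
      (Icc 0 T ×ˢ Icc 0 L) := ((hvxcont.mul hAxcont).add (hvcont.mul hAxxcont)).neg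
  have hclair : ∀ t ∈ Icc (0:ℝ) T, ∀ x ∈ Icc (0:ℝ) L,
      Axt t x = -(vx t x * Ax t x + v t x * Axx t x) := by
    have hext := aux_ext hT hL
      (f := fun p : ℝ × ℝ => Axt p.1 p.2 -
        (-(vx p.1 p.2 * Ax p.1 p.2 + v p.1 p.2 * Axx p.1 p.2)))
      (hAxtcont.sub hGcont)
      (by
        intro p hp
        have h1 : Axt p.1 p.2 ≤ -(vx p.1 p.2 * Ax p.1 p.2 + v p.1 p.2 * Axx p.1 p.2) :=
          clairaut_le A At Ax Axt
            (fun t x => -(vx t x * Ax t x + v t x * Axx t x))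
            hAt hAx hAxt hAtx hAxtcont hGcont hAtcont hAxcont hp.1 hp.2
        have h2 : -(Axt p.1 p.2) ≤ -(-(vx p.1 p.2 * Ax p.1 p.2 + v p.1 p.2 * Axx p.1 p.2)) :=
          clairaut_le (fun t x => -(A t x)) (fun t x => -(At t x)) (fun t x => -(Ax t x))
            (fun t x => -(Axt t x))
            (fun t x => -(-(vx t x * Ax t x + v t x * Axx t x)))
            (fun t ht x hx => (hAt t ht x hx).neg)
            (fun t ht x hx => (hAx t ht x hx).neg)
            (fun t ht x hx => (hAxt t ht x hx).neg)
            (fun t ht x hx => (hAtx t ht x hx).neg)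
            hAxtcont.neg hGcont.neg hAtcont.neg hAxcont.neg hp.1 hp.2
        show Axt p.1 p.2 - -(vx p.1 p.2 * Ax p.1 p.2 + v p.1 p.2 * Axx p.1 p.2) = 0
        linarith)
    intro t ht x hx
    have h5 : Axt t x - -(vx t x * Ax t x + v t x * Axx t x) = 0 :=
      hext (t, x) ⟨ht, hx⟩
    linarith
  -- derivative identifications on the parabolic boundary
  have hAx0 : ∀ x ∈ Icc (0:ℝ) L, Ax 0 x = dS₁ x := by
    intro x hx
    have hu := uniqueDiffOn_Icc hL x hx
    have h1 := (hAx 0 h0T x hx).derivWithin hu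
    have h2 : HasDerivWithinAt (fun y => A 0 y) (dS₁ x) (Icc (0:ℝ) L) x :=
      (hS₁d x hx).congr (fun y hy => hA1 y hy) (hA1 x hx)
    rw [← h1, h2.derivWithin hu]
  have hAt0 : ∀ t ∈ Icc (0:ℝ) T, At t 0 = dS₀ t := by
    intro t ht
    have hu := uniqueDiffOn_Icc hT t ht
    have h1 := (hAt t ht 0 h0L).derivWithin hu
    have h2 : HasDerivWithinAt (fun s => A s 0) (dS₀ t) (Icc (0:ℝ) T) t :=
      (hS₀d t ht).congr (fun s hs => hA0 s hs) (hA0 t ht)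
    rw [← h1, h2.derivWithin hu]
  -- sSup bounds
  have hbdd₁ : BddAbove ((fun z => |dS₁ z|) '' Icc (0:ℝ) L) :=
    (isCompact_Icc.image_of_continuousOn hdS₁cont.abs).bddAbove
  have hM₁ : ∀ x ∈ Icc (0:ℝ) L, |dS₁ x| ≤ M₁ :=
    fun x hx => le_csSup hbdd₁ ⟨x, hx, rfl⟩
  have hM₁0 : 0 ≤ M₁ := le_trans (abs_nonneg _) (hM₁ 0 h0L)
  have hbdd₀ : BddAbove ((fun s => |dS₀ s|) '' Icc (0:ℝ) T) :=
    (isCompact_Icc.image_of_continuousOn hdS₀cont.abs).bddAbove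
  have hM₀ : ∀ t ∈ Icc (0:ℝ) T, |dS₀ t| ≤ M₀ :=
    fun t ht => le_csSup hbdd₀ ⟨t, ht, rfl⟩
  have hM₀0 : 0 ≤ M₀ := le_trans (abs_nonneg _) (hM₀ 0 h0T)
  have hK1 : M₁ / S_m ≤ K := le_max_left _ _
  have hK2 : (1 / (v_m * S_m)) * (M₀ + V_M * S_M / L) ≤ K := le_max_right _ _
  have hK0 : 0 ≤ K := le_trans (div_nonneg hM₁0 hSm.le) hK1
  -- boundary bounds for u = Ax + K A
  have hu0x : ∀ x ∈ Icc (0:ℝ) L, 0 ≤ Ax 0 x + K * A 0 x := by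
    intro x hx
    rw [hAx0 x hx, hA1 x hx]
    have h1 := hM₁ x hx
    have h2 := (hS₁b x hx).1
    have h3 : M₁ ≤ K * S₁ x := by
      calc M₁ = M₁ / S_m * S_m := by field_simp
      _ ≤ K * S₁ x := mul_le_mul hK1 h2 hSm.le hK0
    linarith [neg_abs_le (dS₁ x)]
  have hut0 : ∀ t ∈ Icc (0:ℝ) T, 0 ≤ Ax t 0 + K * A t 0 := by
    intro t ht
    have hE0 := hE t ht 0 h0L
    rw [hAt0 t ht, hvin t ht] at hE0
    rw [hA0 t ht]
    obtain ⟨hd1, hd2, hd3⟩ := hdata t ht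
    have hvpos : 0 < v_in t := lt_of_lt_of_le hvm hd1
    have hχp := hχpos t ht
    have hχu := hχub t ht
    have hdS : dS₀ t ≤ M₀ := (abs_le.1 (hM₀ t ht)).2
    have hpos : 0 < v_m * S_m := mul_pos hvm hSm
    have hN : M₀ + V_M * S_M / L ≤ K * (v_m * S_m) := by
      calc M₀ + V_M * S_M / L
          = (1 / (v_m * S_m)) * (M₀ + V_M * S_M / L) * (v_m * S_m) := by
            field_simp
      _ ≤ K * (v_m * S_m) := mul_le_mul_of_nonneg_right hK2 hpos.le
    have hS0 := (hS₀b t ht).1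
    have hKS : K * (v_m * S_m) ≤ v_in t * (K * S₀ t) := by
      nlinarith [mul_nonneg (mul_nonneg hK0 (sub_nonneg.2 hd1)) (hSm.le.trans hS0),
        mul_nonneg (mul_nonneg hK0 hvm.le) (sub_nonneg.2 hS0)]
    have key : 0 ≤ v_in t * (Ax t 0 + K * S₀ t) := by nlinarith [hE0, hKS, hN, hdS, hχu, hχp]
    by_contra hcon
    push_neg at hcon
    nlinarith [mul_neg_of_pos_of_neg hvpos hcon]
  -- minimum principle for u
  have humin : ∀ t ∈ Icc (0:ℝ) T, ∀ x ∈ Icc (0:ℝ) L, 0 ≤ Ax t x + K * A t x := by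
    obtain ⟨p, hpmem, hpmin⟩ := (isCompact_Icc.prod isCompact_Icc).exists_isMinOn
      ⟨((0:ℝ), (0:ℝ)), ⟨h0T, h0L⟩⟩
      (f := fun q : ℝ × ℝ => Ax q.1 q.2 + K * A q.1 q.2)
      (hAxcont.add (continuousOn_const.mul hAcont))
    suffices hs : 0 ≤ Ax p.1 p.2 + K * A p.1 p.2 by
      intro t ht x hx
      exact le_trans hs (hpmin (show ((t, x) : ℝ × ℝ) ∈ Icc 0 T ×ˢ Icc 0 L from ⟨ht, hx⟩))
    by_contra hneg
    push_neg at hneg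
    have htpos : 0 < p.1 := by
      rcases eq_or_lt_of_le hpmem.1.1 with h0 | h
      · exfalso
        have := hu0x p.2 hpmem.2
        rw [← h0] at hneg
        linarith
      · exact h
    have hxpos : 0 < p.2 := by
      rcases eq_or_lt_of_le hpmem.2.1 with h0 | h
      · exfalso
        have := hut0 p.1 hpmem.1
        rw [← h0] at hneg
        linarith
      · exact h
    have hut : Axt p.1 p.2 + K * At p.1 p.2 ≤ 0 :=
      aux_deriv_nonpos_left htpos
        (((hAxt p.1 hpmem.1 p.2 hpmem.2).add
          ((hAt p.1 hpmem.1 p.2 hpmem.2).const_mul K)).mono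
          (Icc_subset_Icc_right hpmem.1.2))
        (fun y hy => hpmin (show ((y, p.2) : ℝ × ℝ) ∈ Icc 0 T ×ˢ Icc 0 L from
          ⟨⟨hy.1, hy.2.trans hpmem.1.2⟩, hpmem.2⟩))
    have hux : Axx p.1 p.2 + K * Ax p.1 p.2 ≤ 0 :=
      aux_deriv_nonpos_left hxpos
        (((hAxx p.1 hpmem.1 p.2 hpmem.2).add
          ((hAx p.1 hpmem.1 p.2 hpmem.2).const_mul K)).mono
          (Icc_subset_Icc_right hpmem.2.2))
        (fun y hy => hpmin (show ((p.1, y) : ℝ × ℝ) ∈ Icc 0 T ×ˢ Icc 0 L from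
          ⟨hpmem.1, ⟨hy.1, hy.2.trans hpmem.2.2⟩⟩))
    have e1 := hclair p.1 hpmem.1 p.2 hpmem.2
    have e2 := hE p.1 hpmem.1 p.2 hpmem.2
    have e3 := hvxval p.1 hpmem.1 p.2 hpmem.2
    have hvp := hvlb p.1 hpmem.1 p.2 hpmem.2
    have hvxp := hvxpos p.1 hpmem.1 p.2 hpmem.2
    have key : (Axt p.1 p.2 + K * At p.1 p.2) +
        v p.1 p.2 * (Axx p.1 p.2 + K * Ax p.1 p.2) +
        vx p.1 p.2 * (Ax p.1 p.2 + K * A p.1 p.2) = 0 := by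
      linear_combination e1 + K * e2 + K * e3
    have hp1 : v p.1 p.2 * (Axx p.1 p.2 + K * Ax p.1 p.2) ≤ 0 :=
      mul_nonpos_of_nonneg_of_nonpos (le_trans hvm.le hvp) hux
    have hp2 : vx p.1 p.2 * (Ax p.1 p.2 + K * A p.1 p.2) < 0 :=
      mul_neg_of_pos_of_neg hvxp hneg
    linarith
  -- conclusion
  intro t ht x hx
  have hmono : MonotoneOn (fun y => A t y * Real.exp (K * y)) (Icc (0:ℝ) L) := by
    apply aux_mono (g := fun y => (Ax t y + K * A t y) * Real.exp (K * y))
    · apply ContinuousOn.mul (hslice _ hAcont t ht)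
      exact (Real.continuous_exp.comp (continuous_const.mul continuous_id)).continuousOn
    · intro y hy
      have hexp : HasDerivAt (fun z : ℝ => Real.exp (K * z)) (Real.exp (K * y) * K) y := by
        have h := (Real.hasDerivAt_exp (K * y)).comp y ((hasDerivAt_id y).const_mul K)
        simp only [mul_one] at h
        exact h
      have hA' : HasDerivAt (fun z => A t z) (Ax t y) y :=
        (hAx t ht y (Ioo_subset_Icc_self hy)).hasDerivAt (Icc_mem_nhds hy.1 hy.2)
      have h1 : HasDerivAt (fun z => A t z * Real.exp (K * z))
          (Ax t y * Real.exp (K * y) + A t y * (Real.exp (K * y) * K)) y := hA'.mul hexp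
      convert h1 using 1
      ring
    · intro y hy
      exact mul_nonneg (humin t ht y (Ioo_subset_Icc_self hy)) (Real.exp_pos _).le
  have hmx := hmono h0L hx hx.1
  simp only [mul_zero, Real.exp_zero, mul_one] at hmx
  rw [hA0 t ht] at hmx
  have hS0m := (hS₀b t ht).1
  have e1 : S_m ≤ A t x * Real.exp (K * x) := le_trans hS0m hmx
  have e2 : S_m * Real.exp (-(K * x)) ≤ A t x * Real.exp (K * x) * Real.exp (-(K * x)) :=
    mul_le_mul_of_nonneg_right e1 (Real.exp_pos _).le
  rw [mul_assoc, ← Real.exp_add] at e2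
  simp only [add_neg_cancel, Real.exp_zero, mul_one] at e2
  refine le_trans ?_ e2
  apply mul_le_mul_of_nonneg_left _ hSm.le
  apply Real.exp_le_exp.2
  nlinarith [mul_nonneg hK0 (sub_nonneg.2 hx.2)]
end
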